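/- arXiv:2107.05310 — 11 statements merged into one kernel-verified Lean document; each statement's English description precedes it below -/
import Mathlib

section
/- Let ξ^n, ξ : [0,∞) → ℝ (n ≥ 1) be continuous functions with ξ^n_0 = ξ_0 = 0 such that ξ^n → ξ uniformly on compact subsets of [0,∞) as n → ∞, and let x > 0. Then the swallowing times satisfy ζ_x ≤ liminf_{n→∞} ζ^n_x, where ζ_x and ζ^n_x denote the swallowing times of x for the Loewner trajectories driven by ξ and by ξ^n respectively. -/
open MeasureTheory Filter Set

/-- `IsLoewnerTraj ξ x ζ g` says that `g` restricted to `[0, ζ)` is the maximal solution of the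
real Loewner ODE `g_t = x + ∫₀ᵗ 2/(g_s − ξ_s) ds` with `g_t > ξ_t` for `t < ζ`;
maximality means that if `ζ < ∞` then `liminf_{t → ζ⁻} (g_t − ξ_t) = 0`. -/
structure IsLoewnerTraj (ξ : ℝ → ℝ) (x : ℝ) (ζ : EReal) (g : ℝ → ℝ) : Prop where
  pos : 0 < ζ
  cont : ContinuousOn g {t : ℝ | 0 ≤ t ∧ (t : EReal) < ζ}
  gt : ∀ t : ℝ, 0 ≤ t → (t : EReal) < ζ → ξ t < g t
  ode : ∀ t : ℝ, 0 ≤ t → (t : EReal) < ζ →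
    g t = x + ∫ s in (0:ℝ)..t, 2 / (g s - ξ s)
  maximal : ζ ≠ ⊤ →
    Filter.liminf (fun t => g t - ξ t) (nhdsWithin ζ.toReal (Set.Iio ζ.toReal)) = 0

lemma loewner_hasDerivWithinAt {ξ g : ℝ → ℝ} {x T : ℝ}
    (hg : ContinuousOn g (Set.Ico 0 T)) (hξ : ContinuousOn ξ (Set.Ici 0))
    (hgt : ∀ s ∈ Set.Ico 0 T, ξ s < g s)
    (hode : ∀ s ∈ Set.Ico 0 T, g s = x + ∫ u in (0:ℝ)..s, 2 / (g u - ξ u))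
    {s : ℝ} (hs : s ∈ Set.Ico 0 T) :
    HasDerivWithinAt g (2 / (g s - ξ s)) (Set.Ici s) s := by
  set h : ℝ → ℝ := fun u => 2 / (g u - ξ u) with hh
  have hcont : ContinuousOn h (Set.Ico 0 T) := by
    apply continuousOn_const.div (hg.sub (hξ.mono (fun u hu => hu.1)))
    exact fun u hu => sub_ne_zero.2 (hgt u hu).ne'
  have hIccsub : Set.Icc 0 s ⊆ Set.Ico 0 T := fun u hu => ⟨hu.1, lt_of_le_of_lt hu.2 hs.2⟩
  have hint : IntervalIntegrable h MeasureTheory.volume 0 s := by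
    apply ContinuousOn.intervalIntegrable
    rw [Set.uIcc_of_le hs.1]
    exact hcont.mono hIccsub
  have hIoo : Set.Ioo s T ∈ nhdsWithin s (Set.Ioi s) :=
    Ioo_mem_nhdsGT_of_mem ⟨le_refl s, hs.2⟩
  have hIoosub : Set.Ioo s T ⊆ Set.Ico 0 T := fun u hu => ⟨hs.1.trans hu.1.le, hu.2⟩
  have hmeas : StronglyMeasurableAtFilter h (nhdsWithin s (Set.Ioi s)) MeasureTheory.volume :=
    ⟨Set.Ioo s T, hIoo, (hcont.mono hIoosub).aestronglyMeasurable measurableSet_Ioo⟩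
  have hb : ContinuousWithinAt h (Set.Ioi s) s :=
    (hcont s hs).mono_of_mem_nhdsWithin (Filter.mem_of_superset hIoo hIoosub)
  have hftc := intervalIntegral.integral_hasDerivWithinAt_right (s := Set.Ici s)
    (t := Set.Ioi s) hint hmeas hb
  have h2 := hftc.const_add x
  have hmem : Set.Ico s T ∈ nhdsWithin s (Set.Ici s) := by
    rw [mem_nhdsWithin]
    exact ⟨Set.Iio T, isOpen_Iio, hs.2, fun u hu => ⟨hu.2, hu.1⟩⟩
  exact h2.congr_of_eventuallyEq
    (Filter.eventuallyEq_of_mem hmem (fun u hu => hode u ⟨hs.1.trans hu.1, hu.2⟩))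
    (hode s hs)

/-- If continuous driving functions `ξⁿ` (vanishing at `0`) converge to `ξ` uniformly on
compact subsets of `[0,∞)`, then for `x > 0` the swallowing times satisfy
`ζ_x ≤ liminf_n ζⁿ_x`. -/
theorem stmt0
    (ξ : ℕ → ℝ → ℝ) (ξl : ℝ → ℝ)
    (hc : ∀ n, ContinuousOn (ξ n) (Set.Ici 0))
    (hcl : ContinuousOn ξl (Set.Ici 0))
    (h0 : ∀ n, ξ n 0 = 0) (h0l : ξl 0 = 0)
    (hconv : ∀ T : ℝ, 0 ≤ T →
      TendstoUniformlyOn (fun n t => ξ n t) ξl Filter.atTop (Set.Icc 0 T))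
    (x : ℝ) (hx : 0 < x)
    (ζ : ℕ → EReal) (g : ℕ → ℝ → ℝ) (ζl : EReal) (gl : ℝ → ℝ)
    (hL : ∀ n, IsLoewnerTraj (ξ n) x (ζ n) (g n))
    (hLl : IsLoewnerTraj ξl x ζl gl) :
    ζl ≤ Filter.liminf ζ Filter.atTop := by
  have key : ∀ t : ℝ, 0 ≤ t → (t : EReal) < ζl → ∀ᶠ n in Filter.atTop, (t : EReal) < ζ n := by
    intro t ht htζ
    have hsubl : Set.Icc 0 t ⊆ {s : ℝ | 0 ≤ s ∧ (s : EReal) < ζl} := fun s hs =>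
      ⟨hs.1, lt_of_le_of_lt (EReal.coe_le_coe_iff.2 hs.2) htζ⟩
    have hglc : ContinuousOn gl (Set.Icc 0 t) := hLl.cont.mono hsubl
    have hξlc : ContinuousOn ξl (Set.Icc 0 t) := hcl.mono (fun s hs => hs.1)
    have hdc : ContinuousOn (fun s => gl s - ξl s) (Set.Icc 0 t) := hglc.sub hξlc
    obtain ⟨s₀, hs₀, hmin⟩ := isCompact_Icc.exists_isMinOn (Set.nonempty_Icc.2 ht) hdc
    obtain ⟨s₁, hs₁, hmax⟩ := isCompact_Icc.exists_isMaxOn (Set.nonempty_Icc.2 ht) hdc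
    set ε := gl s₀ - ξl s₀ with hεdef
    have hε0 : 0 < ε := sub_pos.2 (hLl.gt s₀ hs₀.1 (hsubl hs₀).2)
    have hεle : ∀ s ∈ Set.Icc 0 t, ε ≤ gl s - ξl s := fun s hs => hmin hs
    set M := gl s₁ - ξl s₁ with hMdef
    have hεM : ∀ s ∈ Set.Icc 0 t, gl s - ξl s ≤ M := fun s hs => hmax hs
    set L := 8 / ε ^ 2 with hLdef
    have hL0 : 0 < L := by positivity
    set δ := ε / 8 * Real.exp (-(L * t)) with hδdef
    have hδ0 : 0 < δ := by positivity
    have hδe : δ * Real.exp (L * t) = ε / 8 := by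
      rw [hδdef, mul_assoc, ← Real.exp_add, neg_add_cancel, Real.exp_zero, mul_one]
    have hδle : δ ≤ ε / 8 := by
      calc δ ≤ δ * Real.exp (L * t) :=
            le_mul_of_one_le_right hδ0.le (Real.one_le_exp (by positivity))
        _ = ε / 8 := hδe
    have hev := (Metric.tendstoUniformlyOn_iff.1 (hconv t ht)) δ hδ0
    filter_upwards [hev] with n hn
    have hclose : ∀ s ∈ Set.Icc 0 t, |ξ n s - ξl s| ≤ δ := fun s hs => by
      rw [abs_sub_comm, ← Real.dist_eq]; exact (hn s hs).le
    by_contra hcon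
    push_neg at hcon
    have hζtop : ζ n ≠ ⊤ := ne_top_of_le_ne_top (EReal.coe_ne_top t) hcon
    have hζbot : ζ n ≠ ⊥ := ne_bot_of_gt (hL n).pos
    set T := (ζ n).toReal with hTdef
    have hζT : ζ n = (T : EReal) := (EReal.coe_toReal hζtop hζbot).symm
    have hT0 : 0 < T := by
      have := (hL n).pos
      rw [hζT] at this
      exact_mod_cast this
    have hTt : T ≤ t := by
      rw [hζT] at hcon; exact EReal.coe_le_coe_iff.1 hcon
    have h0t : 0 < t := hT0.trans_le hTt
    have hIcoT : Set.Ico 0 T ⊆ Set.Icc 0 t := fun u hu => ⟨hu.1, hu.2.le.trans hTt⟩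
    have hdomn : {s : ℝ | 0 ≤ s ∧ (s : EReal) < ζ n} = Set.Ico 0 T := by
      ext s; rw [hζT]; simp [Set.mem_Ico, EReal.coe_lt_coe_iff]
    have hgnc : ContinuousOn (g n) (Set.Ico 0 T) := hdomn ▸ (hL n).cont
    have hmemn : ∀ s ∈ Set.Ico 0 T, (s : EReal) < ζ n := fun s hs => by
      rw [hζT]; exact EReal.coe_lt_coe_iff.2 hs.2
    have hgtn : ∀ s ∈ Set.Ico 0 T, ξ n s < g n s := fun s hs => (hL n).gt s hs.1 (hmemn s hs)
    have hoden : ∀ s ∈ Set.Ico 0 T, g n s = x + ∫ u in (0:ℝ)..s, 2 / (g n u - ξ n u) :=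
      fun s hs => (hL n).ode s hs.1 (hmemn s hs)
    have hmeml : ∀ s ∈ Set.Ico 0 t, (s : EReal) < ζl := fun s hs => (hsubl ⟨hs.1, hs.2.le⟩).2
    have hglc' : ContinuousOn gl (Set.Ico 0 t) := hglc.mono Set.Ico_subset_Icc_self
    have hgtl : ∀ s ∈ Set.Ico 0 t, ξl s < gl s := fun s hs => hLl.gt s hs.1 (hmeml s hs)
    have hodel : ∀ s ∈ Set.Ico 0 t, gl s = x + ∫ u in (0:ℝ)..s, 2 / (gl u - ξl u) :=
      fun s hs => hLl.ode s hs.1 (hmeml s hs)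
    -- the difference function
    set f : ℝ → ℝ := fun s => g n s - gl s with hfdef
    have hgn0 : g n 0 = x := by
      rw [hoden 0 ⟨le_refl 0, hT0⟩, intervalIntegral.integral_same, add_zero]
    have hgl0 : gl 0 = x := by
      rw [hodel 0 ⟨le_refl 0, h0t⟩, intervalIntegral.integral_same, add_zero]
    have hf0 : f 0 = 0 := by simp [hfdef, hgn0, hgl0]
    -- main bootstrap
    have main : ∀ b ∈ Set.Ico 0 T, ∀ s ∈ Set.Icc 0 b, |f s| ≤ ε / 4 := by
      intro b hb
      by_contra hB
      push_neg at hB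
      obtain ⟨sb, hsb, hsb2⟩ := hB
      set B := {s | s ∈ Set.Icc 0 b ∧ ε / 4 ≤ |f s|} with hBdef
      have hIccb : Set.Icc 0 b ⊆ Set.Ico 0 T := fun u hu => ⟨hu.1, lt_of_le_of_lt hu.2 hb.2⟩
      have hfc : ContinuousOn f (Set.Icc 0 b) :=
        (hgnc.mono hIccb).sub (hglc.mono (fun u hu => hIcoT (hIccb hu)))
      have hBclosed : IsClosed B := by
        have : B = Set.Icc 0 b ∩ (fun s => |f s|) ⁻¹' Set.Ici (ε / 4) := rfl
        rw [this]
        exact (continuous_abs.comp_continuousOn hfc).preimage_isClosed_of_isClosed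
          isClosed_Icc isClosed_Ici
      have hBne : B.Nonempty := ⟨sb, hsb, hsb2.le⟩
      have hBbdd : BddBelow B := ⟨0, fun s hs => hs.1.1⟩
      set r := sInf B with hrdef
      have hrB : r ∈ B := hBclosed.csInf_mem hBne hBbdd
      have hr0 : 0 ≤ r := hrB.1.1
      have hrb : r ≤ b := hrB.1.2
      have hrε : ε / 4 ≤ |f r| := hrB.2
      have hrT : r < T := lt_of_le_of_lt hrb hb.2
      have hrt : r < t := lt_of_lt_of_le hrT hTt
      have hlt : ∀ s ∈ Set.Ico 0 r, |f s| < ε / 4 := by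
        intro s hs
        by_contra hcontra
        push_neg at hcontra
        exact absurd (csInf_le hBbdd ⟨⟨hs.1, hs.2.le.trans hrb⟩, hcontra⟩) (not_le.2 hs.2)
      -- region bounds on Ico 0 r
      have hreg : ∀ s ∈ Set.Ico 0 r, ε / 2 ≤ g n s - ξ n s ∧ ε / 2 ≤ gl s - ξl s := by
        intro s hs
        have hst : s ∈ Set.Icc 0 t := ⟨hs.1, (hs.2.trans hrt).le⟩
        have h1 : ε ≤ gl s - ξl s := hεle s hst
        have h2 : |f s| < ε / 4 := hlt s hs
        have h3 : |ξ n s - ξl s| ≤ δ := hclose s hst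
        have h4 := abs_lt.1 h2
        have h5 := abs_le.1 h3
        have hfs : f s = g n s - gl s := rfl
        constructor
        · linarith [hδle]
        · linarith
      -- Gronwall
      have hderiv : ∀ s ∈ Set.Ico 0 r,
          HasDerivWithinAt f (2 / (g n s - ξ n s) - 2 / (gl s - ξl s)) (Set.Ici s) s := by
        intro s hs
        have hsT : s ∈ Set.Ico 0 T := ⟨hs.1, hs.2.trans hrT⟩
        have hst : s ∈ Set.Ico 0 t := ⟨hs.1, hs.2.trans hrt⟩
        exact (loewner_hasDerivWithinAt hgnc (hc n) hgtn hoden hsT).sub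
          (loewner_hasDerivWithinAt hglc' hcl hgtl hodel hst)
      have hbound : ∀ s ∈ Set.Ico 0 r,
          ‖2 / (g n s - ξ n s) - 2 / (gl s - ξl s)‖ ≤ L * ‖f s‖ + L * δ := by
        intro s hs
        obtain ⟨han, hal⟩ := hreg s hs
        have han0 : (0:ℝ) < g n s - ξ n s := lt_of_lt_of_le (by positivity) han
        have hal0 : (0:ℝ) < gl s - ξl s := lt_of_lt_of_le (by positivity) hal
        have hst : s ∈ Set.Icc 0 t := ⟨hs.1, (hs.2.trans hrt).le⟩
        have h3 : |ξ n s - ξl s| ≤ δ := hclose s hst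
        have heq : 2 / (g n s - ξ n s) - 2 / (gl s - ξl s)
            = 2 * ((gl s - ξl s) - (g n s - ξ n s)) / ((g n s - ξ n s) * (gl s - ξl s)) := by
          field_simp
        have hfs : f s = g n s - gl s := rfl
        simp only [Real.norm_eq_abs]
        rw [heq, abs_div, abs_of_pos (mul_pos han0 hal0)]
        have h6 : |(gl s - ξl s) - (g n s - ξ n s)| ≤ |f s| + δ := by
          have heq2 : (gl s - ξl s) - (g n s - ξ n s) = -(f s) + (ξ n s - ξl s) := by
            rw [hfs]; ring
          rw [heq2]
          calc |(-(f s)) + (ξ n s - ξl s)| ≤ |(-(f s))| + |ξ n s - ξl s| := abs_add_le _ _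
            _ ≤ |f s| + δ := by rw [abs_neg]; exact add_le_add le_rfl h3
        have hnum : |2 * ((gl s - ξl s) - (g n s - ξ n s))| ≤ 2 * (|f s| + δ) := by
          rw [abs_mul, abs_two]; linarith [h6]
        have hden : ε ^ 2 / 4 ≤ (g n s - ξ n s) * (gl s - ξl s) := by
          have := mul_le_mul han hal (by positivity) (le_trans (by positivity) han)
          calc ε ^ 2 / 4 = ε / 2 * (ε / 2) := by ring
            _ ≤ _ := this
        calc |2 * ((gl s - ξl s) - (g n s - ξ n s))| / ((g n s - ξ n s) * (gl s - ξl s))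
            ≤ 2 * (|f s| + δ) / (ε ^ 2 / 4) := by
              apply div_le_div₀ (by positivity) hnum (by positivity) hden
          _ = L * |f s| + L * δ := by rw [hLdef]; field_simp; ring
      -- apply Gronwall on [0, r]
      have hfcr : ContinuousOn f (Set.Icc 0 r) := hfc.mono (Set.Icc_subset_Icc_right hrb)
      have hgron := norm_le_gronwallBound_of_norm_deriv_right_le (δ := 0) (K := L) (ε := L * δ)
        hfcr hderiv (by simp [Real.norm_eq_abs, hf0]) hbound r (Set.right_mem_Icc.2 hr0)
      have hgb : gronwallBound 0 L (L * δ) (r - 0) ≤ ε / 8 := by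
        have heq3 : gronwallBound 0 L (L * δ) (r - 0)
            = 0 * Real.exp (L * (r - 0)) + L * δ / L * (Real.exp (L * (r - 0)) - 1) := by
          rw [gronwallBound_of_K_ne_0 hL0.ne']
        have h7 : L * δ / L = δ := by field_simp
        have he : Real.exp (L * (r - 0)) ≤ Real.exp (L * t) :=
          Real.exp_le_exp.2 (by nlinarith [hrt.le, hL0.le])
        have h8 : δ * Real.exp (L * (r - 0)) ≤ δ * Real.exp (L * t) :=
          mul_le_mul_of_nonneg_left he hδ0.le
        rw [heq3, h7]
        linarith [h8, hδe, hδ0]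
      have hfr : |f r| ≤ ε / 8 := by
        rw [← Real.norm_eq_abs]; exact hgron.trans hgb
      linarith [hrε, hε0]
    -- from the bootstrap, the solution stays away from the driver up to time T
    have region2 : ∀ s ∈ Set.Ico 0 T, ε / 2 ≤ g n s - ξ n s := by
      intro s hs
      have h2 := abs_le.1 (main s hs s ⟨hs.1, le_refl s⟩)
      have hst : s ∈ Set.Icc 0 t := hIcoT hs
      have h1 := hεle s hst
      have h3 := abs_le.1 (hclose s hst)
      have hfs : f s = g n s - gl s := rfl
      linarith [hδle]
    have bound2 : ∀ s ∈ Set.Ico 0 T, g n s - ξ n s ≤ M + ε / 4 + δ := by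
      intro s hs
      have h2 := abs_le.1 (main s hs s ⟨hs.1, le_refl s⟩)
      have hst : s ∈ Set.Icc 0 t := hIcoT hs
      have h3 := abs_le.1 (hclose s hst)
      have hfs : f s = g n s - gl s := rfl
      linarith [hεM s hst]
    have hmax := (hL n).maximal hζtop
    rw [← hTdef] at hmax
    have hev2 : ∀ᶠ s in nhdsWithin T (Set.Iio T), s ∈ Set.Ico 0 T := by
      have h1 : ∀ᶠ s in nhdsWithin T (Set.Iio T), (0:ℝ) < s :=
        (eventually_gt_nhds hT0).filter_mono nhdsWithin_le_nhds
      have h2 : ∀ᶠ s in nhdsWithin T (Set.Iio T), s ∈ Set.Iio T :=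
        eventually_mem_nhdsWithin
      filter_upwards [h1, h2] with s hs1 hs2
      exact ⟨hs1.le, hs2⟩
    have hlow : ∀ᶠ s in nhdsWithin T (Set.Iio T), ε / 2 ≤ g n s - ξ n s :=
      hev2.mono (fun s hs => region2 s hs)
    have hupp : ∀ᶠ s in nhdsWithin T (Set.Iio T), g n s - ξ n s ≤ M + ε / 4 + δ :=
      hev2.mono (fun s hs => bound2 s hs)
    have hbddabove : Filter.IsBoundedUnder (· ≤ ·) (nhdsWithin T (Set.Iio T))
        (fun s => g n s - ξ n s) := ⟨M + ε / 4 + δ, by simpa using hupp⟩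
    have hge : ε / 2 ≤ Filter.liminf (fun s => g n s - ξ n s) (nhdsWithin T (Set.Iio T)) :=
      Filter.le_liminf_of_le hbddabove.isCoboundedUnder_ge hlow
    rw [hmax] at hge
    linarith [hε0]
  rw [Filter.le_liminf_iff]
  intro c hc
  rcases lt_or_ge c 0 with h0c | h0c
  · exact Filter.Eventually.of_forall (fun n => h0c.trans (hL n).pos)
  · obtain ⟨d, hcd, hdζ⟩ := exists_between hc
    have hdtop : d ≠ ⊤ := (hdζ.trans_le le_top).ne
    have hdbot : d ≠ ⊥ := ne_bot_of_gt (lt_of_le_of_lt h0c hcd)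
    have hdt : ((d.toReal : ℝ) : EReal) = d := EReal.coe_toReal hdtop hdbot
    have ht0 : 0 ≤ d.toReal := by
      have := EReal.toReal_le_toReal (h0c.trans hcd.le) (by simp) hdtop
      simpa using this
    have hkey := key d.toReal ht0 (by rw [hdt]; exact hdζ)
    rw [← hdt] at hcd
    exact hkey.mono (fun n hn => lt_trans hcd hn)
end

section
/- Let ξ^n, ξ : [0,∞) → ℝ (n ≥ 1) be continuous functions with ξ^n_0 = ξ_0 = 0 such that ξ^n → ξ uniformly on compact subsets of [0,∞) as n → ∞, and let x > 0. Then for every T < ζ_x one has ζ^n_x > T for all sufficiently large n, and sup_{t∈[0,T]} |g^n_t(x) − g_t(x)| → 0 as n → ∞, where g(x) and g^n(x) denote the Loewner trajectories of x driven by ξ and ξ^n, with swallowing times ζ_x and ζ^n_x. -/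
open MeasureTheory Filter Set Topology

lemma ftc_aux {F : ℝ → ℝ} {c t : ℝ} (hF : ContinuousOn F (Icc 0 c)) (ht : t ∈ Ico 0 c) :
    HasDerivWithinAt (fun u => ∫ s in (0:ℝ)..u, F s) (F t) (Ici t) t := by
  have hsub : Icc t c ⊆ Icc 0 c := Icc_subset_Icc ht.1 le_rfl
  have hmem : Icc t c ∈ 𝓝[>] t := Icc_mem_nhdsGT_of_mem ⟨le_rfl, ht.2⟩
  apply intervalIntegral.integral_hasDerivWithinAt_right
  · exact (hF.mono (Icc_subset_Icc le_rfl ht.2.le)).intervalIntegrable_of_Icc ht.1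
  · exact ⟨Icc t c, hmem, (hF.mono hsub).aestronglyMeasurable measurableSet_Icc⟩
  · exact ((hF t ⟨ht.1, ht.2.le⟩).mono hsub).mono_of_mem_nhdsWithin hmem

lemma gron_aux {p q u v : ℝ → ℝ} {x ε δ c : ℝ} (hε : 0 < ε) (hc : 0 ≤ c) (hδ0 : 0 ≤ δ)
    (hp : ContinuousOn p (Icc 0 c)) (hq : ContinuousOn q (Icc 0 c))
    (hu : ContinuousOn u (Icc 0 c)) (hv : ContinuousOn v (Icc 0 c))
    (hup : ∀ t ∈ Icc 0 c, ε/2 ≤ u t - p t)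
    (hvq : ∀ t ∈ Icc 0 c, ε ≤ v t - q t)
    (hpq : ∀ t ∈ Icc 0 c, |p t - q t| ≤ δ)
    (hueq : ∀ t ∈ Icc 0 c, u t = x + ∫ s in (0:ℝ)..t, 2/(u s - p s))
    (hveq : ∀ t ∈ Icc 0 c, v t = x + ∫ s in (0:ℝ)..t, 2/(v s - q s)) :
    ∀ t ∈ Icc 0 c, |u t - v t| ≤ δ * Real.exp (4/ε^2 * c) := by
  set K : ℝ := 4/ε^2 with hKdef
  have hK : 0 < K := by positivity
  have h0c : (0:ℝ) ∈ Icc 0 c := left_mem_Icc.2 hc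
  -- continuity of the integrands
  have hF1 : ContinuousOn (fun s => 2/(u s - p s)) (Icc 0 c) := by
    apply (continuousOn_const).div (hu.sub hp)
    intro t ht
    exact ne_of_gt (lt_of_lt_of_le (half_pos hε) (hup t ht))
  have hF2 : ContinuousOn (fun s => 2/(v s - q s)) (Icc 0 c) := by
    apply (continuousOn_const).div (hv.sub hq)
    intro t ht
    exact ne_of_gt (lt_of_lt_of_le hε (hvq t ht))
  have hf : ContinuousOn (fun t => u t - v t) (Icc 0 c) := hu.sub hv
  have hf' : ∀ t ∈ Ico 0 c, HasDerivWithinAt (fun t => u t - v t)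
      (2/(u t - p t) - 2/(v t - q t)) (Ici t) t := by
    intro t ht
    have h1 := ((ftc_aux hF1 ht).const_add x).sub ((ftc_aux hF2 ht).const_add x)
    have h2 := HasDerivWithinAt.congr (f₁ := fun t => u t - v t)
      (h1.mono (Icc_subset_Ici_self : Icc t c ⊆ Ici t)) ?_ ?_
    · exact h2.mono_of_mem_nhdsWithin (Icc_mem_nhdsGE_of_mem ⟨le_rfl, ht.2⟩)
    · intro y hy
      show u y - v y = _
      rw [hueq y (Icc_subset_Icc ht.1 le_rfl hy), hveq y (Icc_subset_Icc ht.1 le_rfl hy)]; rfl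
    · show u t - v t = _
      rw [hueq t ⟨ht.1, ht.2.le⟩, hveq t ⟨ht.1, ht.2.le⟩]; rfl
  have hf0 : ‖u 0 - v 0‖ ≤ 0 := by
    rw [hueq 0 h0c, hveq 0 h0c, intervalIntegral.integral_same, intervalIntegral.integral_same]
    simp
  have hbound : ∀ t ∈ Ico 0 c, ‖2/(u t - p t) - 2/(v t - q t)‖ ≤ K * ‖u t - v t‖ + K * δ := by
    intro t ht
    have ht' : t ∈ Icc 0 c := ⟨ht.1, ht.2.le⟩
    set a := u t - p t
    set b := v t - q t
    have ha : ε/2 ≤ a := hup t ht'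
    have hb : ε ≤ b := hvq t ht'
    have ha0 : 0 < a := lt_of_lt_of_le (by positivity) ha
    have hb0 : 0 < b := lt_of_lt_of_le hε hb
    have heq : 2/a - 2/b = 2*(b - a)/(a*b) := by field_simp
    have habs : |2/a - 2/b| = 2*|b - a|/(a*b) := by
      rw [heq, abs_div, abs_of_pos (by positivity : (0:ℝ) < a*b), abs_mul]
      norm_num
    have hba : |b - a| ≤ ‖u t - v t‖ + δ := by
      have : b - a = (v t - u t) + (p t - q t) := by simp [a, b]; ring
      rw [this, Real.norm_eq_abs]
      calc |(v t - u t) + (p t - q t)| ≤ |v t - u t| + |p t - q t| := abs_add_le _ _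
        _ ≤ |u t - v t| + δ := by rw [abs_sub_comm]; exact add_le_add le_rfl (hpq t ht')
    have hden : ε^2/2 ≤ a*b := by
      calc ε^2/2 = (ε/2)*ε := by ring
        _ ≤ a*b := mul_le_mul ha hb hε.le ha0.le
    rw [Real.norm_eq_abs, habs]
    calc 2*|b - a|/(a*b) ≤ 2*(‖u t - v t‖ + δ)/(ε^2/2) := by
          apply div_le_div₀ (by positivity) (by linarith) (by positivity) hden
      _ = K * ‖u t - v t‖ + K * δ := by rw [hKdef]; field_simp; ring
  have := norm_le_gronwallBound_of_norm_deriv_right_le hf hf' hf0 hbound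
  intro t ht
  have h2 := this t ht
  rw [gronwallBound_of_K_ne_0 hK.ne'] at h2
  rw [Real.norm_eq_abs] at h2
  calc |u t - v t| ≤ 0 * Real.exp (K * (t - 0)) + K * δ / K * (Real.exp (K * (t - 0)) - 1) := h2
    _ = δ * (Real.exp (K * t) - 1) := by field_simp; simp
    _ ≤ δ * Real.exp (K * c) := by
        apply mul_le_mul_of_nonneg_left _ hδ0
        have : Real.exp (K * t) ≤ Real.exp (K * c) :=
          Real.exp_le_exp.2 (mul_le_mul_of_nonneg_left ht.2 hK.le)
        linarith

lemma key_aux {p q u v : ℝ → ℝ} {x ε δ T c : ℝ} (hε : 0 < ε)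
    (hc0 : 0 ≤ c) (hcT : c ≤ T)
    (hδ0 : 0 ≤ δ) (hδ : δ * Real.exp (4/ε^2 * T) ≤ ε/8)
    (hp : ContinuousOn p (Icc 0 c)) (hq : ContinuousOn q (Icc 0 c))
    (hu : ContinuousOn u (Icc 0 c)) (hv : ContinuousOn v (Icc 0 c))
    (hup : ∀ t ∈ Icc 0 c, p t < u t)
    (hvq : ∀ t ∈ Icc 0 c, ε ≤ v t - q t)
    (hpq : ∀ t ∈ Icc 0 c, |p t - q t| ≤ δ)
    (hueq : ∀ t ∈ Icc 0 c, u t = x + ∫ s in (0:ℝ)..t, 2/(u s - p s))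
    (hveq : ∀ t ∈ Icc 0 c, v t = x + ∫ s in (0:ℝ)..t, 2/(v s - q s)) :
    ∀ t ∈ Icc 0 c, ε/2 ≤ u t - p t ∧ |u t - v t| ≤ δ * Real.exp (4/ε^2 * T) := by
  set K : ℝ := 4/ε^2 with hKdef
  have hK : 0 < K := by positivity
  have hT0 : 0 ≤ T := hc0.trans hcT
  have hδε : δ ≤ ε/8 := by
    have h1 : (1:ℝ) ≤ Real.exp (K * T) := Real.one_le_exp (by positivity)
    nlinarith
  have h0c : (0:ℝ) ∈ Icc 0 c := left_mem_Icc.2 hc0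
  have hu0 : u 0 = x := by rw [hueq 0 h0c, intervalIntegral.integral_same, add_zero]
  have hv0 : v 0 = x := by rw [hveq 0 h0c, intervalIntegral.integral_same, add_zero]
  -- the bootstrap set
  set S : Set ℝ := {t | t ∈ Icc 0 c ∧ ∀ s ∈ Icc 0 t, ε/2 ≤ u s - p s} with hSdef
  have h0S : (0:ℝ) ∈ S := by
    refine ⟨h0c, fun s hs => ?_⟩
    have hs0 : s = 0 := le_antisymm hs.2 hs.1
    subst hs0
    have h1 := hvq 0 h0c
    have h2 := hpq 0 h0c
    rw [hv0] at h1
    have := abs_le.1 h2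
    rw [hu0]
    linarith
  have hbdd : BddAbove S := ⟨c, fun t ht => ht.1.2⟩
  set τ := sSup S with hτdef
  have hτ0 : 0 ≤ τ := le_csSup hbdd h0S
  have hτc : τ ≤ c := csSup_le ⟨0, h0S⟩ fun t ht => ht.1.2
  have hτIcc : τ ∈ Icc 0 c := ⟨hτ0, hτc⟩
  -- below the sup, the lower bound holds
  have hlt : ∀ s, 0 ≤ s → s < τ → ε/2 ≤ u s - p s := by
    intro s hs0 hsτ
    obtain ⟨t, htS, hst⟩ := exists_lt_of_lt_csSup ⟨0, h0S⟩ hsτ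
    exact htS.2 s ⟨hs0, hst.le⟩
  have hτS : ∀ s ∈ Icc 0 τ, ε/2 ≤ u s - p s := by
    intro s hs
    rcases lt_or_eq_of_le hs.2 with h | h
    · exact hlt s hs.1 h
    · subst h
      rcases eq_or_lt_of_le hs.1 with h0 | h0
      · exact h0S.2 τ ⟨hs.1, le_of_eq h0.symm⟩
      · have hcw : ContinuousWithinAt (fun y => u y - p y) (Ico 0 τ) τ :=
          ((hu.sub hp) τ ⟨hs.1, hτc⟩).mono
            (subset_trans Ico_subset_Icc_self (Icc_subset_Icc le_rfl hτc))
        have hclos : τ ∈ closure (Ico 0 τ) := by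
          rw [closure_Ico (ne_of_lt h0)]
          exact ⟨hs.1, le_rfl⟩
        have hne : (𝓝[Ico 0 τ] τ).NeBot := mem_closure_iff_nhdsWithin_neBot.1 hclos
        refine ge_of_tendsto hcw ?_
        filter_upwards [self_mem_nhdsWithin] with y hy
        exact hlt y hy.1 hy.2
  -- Gronwall bound up to τ
  have hgr : ∀ t ∈ Icc 0 τ, |u t - v t| ≤ δ * Real.exp (K * T) := by
    have hsub : Icc 0 τ ⊆ Icc 0 c := Icc_subset_Icc le_rfl hτc
    have h1 := gron_aux hε hτ0 hδ0 (hp.mono hsub) (hq.mono hsub) (hu.mono hsub) (hv.mono hsub)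
      hτS (fun t ht => hvq t (hsub ht)) (fun t ht => hpq t (hsub ht))
      (fun t ht => hueq t (hsub ht)) (fun t ht => hveq t (hsub ht))
    intro t ht
    refine (h1 t ht).trans (mul_le_mul_of_nonneg_left ?_ hδ0)
    exact Real.exp_le_exp.2 (mul_le_mul_of_nonneg_left (hτc.trans hcT) hK.le)
  have hgrbd : δ * Real.exp (K * T) ≤ ε/8 := hδ
  -- τ = c
  have hτeq : τ = c := by
    by_contra hne
    have hτltc : τ < c := lt_of_le_of_ne hτc hne
    -- at τ the gap is at least 3ε/4
    have h34 : 3*ε/4 ≤ u τ - p τ := by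
      have h1 := hvq τ hτIcc
      have h2 := abs_le.1 (hpq τ hτIcc)
      have h3 := abs_le.1 (hgr τ ⟨hτ0, le_rfl⟩)
      linarith [hgrbd, hδε]
    -- continuity gives a neighborhood where the gap exceeds ε/2
    have hcw : ContinuousWithinAt (fun s => u s - p s) (Icc 0 c) τ := (hu.sub hp) τ hτIcc
    have hmem : (fun s => u s - p s) ⁻¹' (Ioi (ε/2)) ∈ 𝓝[Icc 0 c] τ :=
      hcw (Ioi_mem_nhds (by linarith))
    rw [Metric.mem_nhdsWithin_iff] at hmem
    obtain ⟨η, hη0, hη⟩ := hmem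
    set t' := min c (τ + η/2) with ht'def
    have hτt' : τ < t' := lt_min hτltc (by linarith)
    have ht'c : t' ≤ c := min_le_left _ _
    have ht'S : t' ∈ S := by
      refine ⟨⟨hτ0.trans hτt'.le, ht'c⟩, fun s hs => ?_⟩
      rcases le_or_gt s τ with h | h
      · exact hτS s ⟨hs.1, h⟩
      · have hball : s ∈ Metric.ball τ η := by
          rw [Metric.mem_ball, Real.dist_eq, abs_of_pos (by linarith)]
          have : s ≤ τ + η/2 := hs.2.trans (min_le_right _ _)
          linarith
        have : s ∈ (fun s => u s - p s) ⁻¹' (Ioi (ε/2)) :=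
          hη ⟨hball, ⟨hs.1, hs.2.trans ht'c⟩⟩
        exact le_of_lt this
    exact absurd (le_csSup hbdd ht'S) (not_le.2 hτt')
  intro t ht
  rw [← hτeq] at ht
  exact ⟨hτS t ht, hgr t ht⟩

/-- If continuous driving functions `ξⁿ` (vanishing at `0`) converge to `ξ` uniformly on
compact subsets of `[0,∞)`, then for `x > 0` and every `T < ζ_x`, one has `ζⁿ_x > T` for all
sufficiently large `n` and `sup_{[0,T]} |gⁿ_t(x) − g_t(x)| → 0`. -/
theorem stmt1
    (ξ : ℕ → ℝ → ℝ) (ξl : ℝ → ℝ)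
    (hc : ∀ n, ContinuousOn (ξ n) (Set.Ici 0))
    (hcl : ContinuousOn ξl (Set.Ici 0))
    (h0 : ∀ n, ξ n 0 = 0) (h0l : ξl 0 = 0)
    (hconv : ∀ T : ℝ, 0 ≤ T →
      TendstoUniformlyOn (fun n t => ξ n t) ξl Filter.atTop (Set.Icc 0 T))
    (x : ℝ) (hx : 0 < x)
    (ζ : ℕ → EReal) (g : ℕ → ℝ → ℝ) (ζl : EReal) (gl : ℝ → ℝ)
    (hL : ∀ n, IsLoewnerTraj (ξ n) x (ζ n) (g n))
    (hLl : IsLoewnerTraj ξl x ζl gl) :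
    ∀ T : ℝ, 0 ≤ T → (T : EReal) < ζl →
      (∀ᶠ n in Filter.atTop, (T : EReal) < ζ n) ∧
      TendstoUniformlyOn (fun n t => g n t) gl Filter.atTop (Set.Icc 0 T) := by
  intro T hT0 hTζ
  have hsubl : Icc 0 T ⊆ {t : ℝ | 0 ≤ t ∧ (t : EReal) < ζl} := fun t ht =>
    ⟨ht.1, lt_of_le_of_lt (by exact_mod_cast ht.2) hTζ⟩
  have hglcont : ContinuousOn gl (Icc 0 T) := hLl.cont.mono hsubl
  have hξlcont : ContinuousOn ξl (Icc 0 T) := hcl.mono fun t ht => ht.1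
  have hhcont : ContinuousOn (fun t => gl t - ξl t) (Icc 0 T) := hglcont.sub hξlcont
  obtain ⟨t₀, ht₀, hmin⟩ := isCompact_Icc.exists_isMinOn (nonempty_Icc.2 hT0) hhcont
  set ε := gl t₀ - ξl t₀ with hεdef
  have h0mem : (0:ℝ) ∈ Icc 0 T := left_mem_Icc.2 hT0
  have h0ζl : ((0:ℝ) : EReal) < ζl := (hsubl h0mem).2
  have hε : 0 < ε := sub_pos.2 (hLl.gt t₀ (ht₀.1) (hsubl ht₀).2)
  have hminT : ∀ t ∈ Icc 0 T, ε ≤ gl t - ξl t := fun t ht => hmin ht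
  have hgl0 : gl 0 = x := by
    rw [hLl.ode 0 le_rfl h0ζl, intervalIntegral.integral_same, add_zero]
  have hεx : ε ≤ x := by
    have := hminT 0 h0mem; rw [hgl0, h0l] at this; linarith
  set K := 4/ε^2 with hKdef
  have hK : 0 < K := by positivity
  have hexp1 : (1:ℝ) ≤ Real.exp (K*T) := Real.one_le_exp (by positivity)
  obtain ⟨t₁, ht₁, hmax1⟩ := isCompact_Icc.exists_isMaxOn (nonempty_Icc.2 hT0) hglcont
  obtain ⟨t₂, ht₂, hmax2⟩ := isCompact_Icc.exists_isMaxOn (nonempty_Icc.2 hT0) hξlcont.neg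
  -- the per-n estimate
  have main : ∀ (n : ℕ) (δ : ℝ), 0 ≤ δ → δ * Real.exp (K*T) ≤ ε/8 →
      (∀ t ∈ Icc 0 T, |ξ n t - ξl t| ≤ δ) →
      (T:EReal) < ζ n ∧ ∀ t ∈ Icc 0 T, |g n t - gl t| ≤ δ * Real.exp (K*T) := by
    intro n δ hδ0 hδ hclose
    have hδε : δ ≤ ε/8 := by nlinarith
    have hgood : ∀ c, 0 ≤ c → c ≤ T → (c:EReal) < ζ n →
        ∀ t ∈ Icc 0 c, ε/2 ≤ g n t - ξ n t ∧ |g n t - gl t| ≤ δ * Real.exp (K*T) := by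
      intro c hc0 hcT hcζ
      have hsubn : Icc 0 c ⊆ {t : ℝ | 0 ≤ t ∧ (t : EReal) < ζ n} := fun t ht =>
        ⟨ht.1, lt_of_le_of_lt (by exact_mod_cast ht.2) hcζ⟩
      have hsubT : Icc 0 c ⊆ Icc 0 T := Icc_subset_Icc le_rfl hcT
      exact key_aux hε hc0 hcT hδ0 hδ
        ((hc n).mono fun t ht => ht.1) (hξlcont.mono hsubT)
        ((hL n).cont.mono hsubn) (hglcont.mono hsubT)
        (fun t ht => (hL n).gt t ht.1 (hsubn ht).2)
        (fun t ht => hminT t (hsubT ht))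
        (fun t ht => hclose t (hsubT ht))
        (fun t ht => (hL n).ode t ht.1 (hsubn ht).2)
        (fun t ht => hLl.ode t ht.1 (hsubl (hsubT ht)).2)
    have hTζn : (T:EReal) < ζ n := by
      by_contra hcon
      push_neg at hcon
      have hnetop : ζ n ≠ ⊤ := ne_top_of_le_ne_top (EReal.coe_ne_top T) hcon
      have hnebot : ζ n ≠ ⊥ := by
        intro h
        have := (hL n).pos
        rw [h] at this
        exact absurd this (by simp)
      set z := (ζ n).toReal with hzdef
      have hzeq : ζ n = ((z:ℝ) : EReal) := (EReal.coe_toReal hnetop hnebot).symm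
      have hz0 : 0 < z := by
        have h1 := (hL n).pos
        rw [hzeq] at h1
        exact_mod_cast h1
      have hzT : z ≤ T := by
        rw [hzeq] at hcon
        exact_mod_cast hcon
      have hev : ∀ᶠ t in 𝓝[<] z,
          ε/2 ≤ g n t - ξ n t ∧ g n t - ξ n t ≤ gl t₁ - ξl t₂ + ε/8 + ε/8 := by
        filter_upwards [self_mem_nhdsWithin,
          mem_nhdsWithin_of_mem_nhds (Ioi_mem_nhds hz0)] with t h1 h2
        have htz : t < z := h1
        have ht0 : (0:ℝ) < t := h2
        have htζ : (t:EReal) < ζ n := by rw [hzeq]; exact_mod_cast htz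
        have htT : t ≤ T := htz.le.trans hzT
        have hmem : t ∈ Icc 0 t := ⟨ht0.le, le_rfl⟩
        obtain ⟨hlow, hclbd⟩ := hgood t ht0.le htT htζ t hmem
        refine ⟨hlow, ?_⟩
        have h3 := abs_le.1 hclbd
        have h4 := abs_le.1 (hclose t ⟨ht0.le, htT⟩)
        have h5 : gl t ≤ gl t₁ := hmax1 ⟨ht0.le, htT⟩
        have h6 : -ξl t ≤ -ξl t₂ := hmax2 ⟨ht0.le, htT⟩
        linarith
      have hlim := (hL n).maximal hnetop
      rw [← hzdef] at hlim
      have hcob : IsCoboundedUnder (· ≥ ·) (𝓝[<] z) (fun t => g n t - ξ n t) := by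
        apply IsBoundedUnder.isCoboundedUnder_ge
        exact ⟨gl t₁ - ξl t₂ + ε/8 + ε/8, eventually_map.2 (hev.mono fun t ht => ht.2)⟩
      have hge : ε/2 ≤ liminf (fun t => g n t - ξ n t) (𝓝[<] z) :=
        le_liminf_of_le hcob (hev.mono fun t ht => ht.1)
      rw [hlim] at hge
      linarith
    exact ⟨hTζn, fun t ht => (hgood T hT0 le_rfl hTζn t ht).2⟩
  -- choose the threshold δs
  set δs := ε/8 * Real.exp (-(K*T)) with hδsdef
  have hδs0 : 0 < δs := by positivity
  have hδsK : δs * Real.exp (K*T) = ε/8 := by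
    rw [hδsdef, Real.exp_neg]
    field_simp
  have hclose_of : ∀ (δ : ℝ) (n : ℕ), (∀ t ∈ Icc 0 T, dist (ξl t) (ξ n t) < δ) →
      ∀ t ∈ Icc 0 T, |ξ n t - ξl t| ≤ δ := by
    intro δ n hn t ht
    have := hn t ht
    rw [Real.dist_eq, abs_sub_comm] at this
    exact this.le
  constructor
  · have hev1 := Metric.tendstoUniformlyOn_iff.1 (hconv T hT0) δs hδs0
    filter_upwards [hev1] with n hn
    exact (main n δs hδs0.le hδsK.le (hclose_of δs n hn)).1
  · rw [Metric.tendstoUniformlyOn_iff]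
    intro η hη
    set δ' := min δs (η/2 * Real.exp (-(K*T))) with hδ'def
    have hδ'0 : 0 < δ' := lt_min hδs0 (by positivity)
    have hb1 : δ' * Real.exp (K*T) ≤ ε/8 := by
      rw [← hδsK]
      exact mul_le_mul_of_nonneg_right (min_le_left _ _) (Real.exp_pos _).le
    have hb2 : δ' * Real.exp (K*T) ≤ η/2 := by
      have : (η/2 * Real.exp (-(K*T))) * Real.exp (K*T) = η/2 := by
        rw [Real.exp_neg]; field_simp
      rw [← this]
      exact mul_le_mul_of_nonneg_right (min_le_right _ _) (Real.exp_pos _).le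
    have hev2 := Metric.tendstoUniformlyOn_iff.1 (hconv T hT0) δ' hδ'0
    filter_upwards [hev2] with n hn
    intro t ht
    have h := (main n δ' hδ'0.le hb1 (hclose_of δ' n hn)).2 t ht
    rw [Real.dist_eq, abs_sub_comm]
    calc |g n t - gl t| ≤ δ' * Real.exp (K*T) := h
      _ ≤ η/2 := hb2
      _ < η := by linarith
end

section
/- Let ξ^n, ξ : [0,∞) → ℝ (n ≥ 1) be continuous functions with ξ^n_0 = ξ_0 = 0 such that ξ^n → ξ uniformly on compact subsets of [0,∞) as n → ∞, and let x > 0. Define D_t = exp(−2 ∫₀ᵗ (g_s(x) − ξ_s)^{−2} ds) for t < ζ_x, and D^n_t = exp(−2 ∫₀ᵗ (g^n_s(x) − ξ^n_s)^{−2} ds) for t < ζ^n_x. Then for every T < ζ_x, for all sufficiently large n the function D^n is defined on [0,T] and sup_{t∈[0,T]} |D^n_t − D_t| → 0 as n → ∞. (Here D_t is the spatial derivative g_t'(x) of the Loewner flow at x.) -/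
open MeasureTheory Filter Set
open scoped Topology

private lemma exists_real_btwn' {a : ℝ} {z : EReal} (h : (a : EReal) < z) :
    ∃ r : ℝ, a < r ∧ (r : EReal) < z := by
  obtain ⟨m, h1, h2⟩ := EReal.lt_iff_exists_real_btwn.mp h
  exact ⟨m, EReal.coe_lt_coe_iff.mp h1, h2⟩

private lemma inv_sq_diff {m a b : ℝ} (hm : 0 < m) (ha : m ≤ a) (hb : m ≤ b) :
    |(a ^ 2)⁻¹ - (b ^ 2)⁻¹| ≤ 2 / m ^ 3 * |a - b| := by
  have ha0 : 0 < a := hm.trans_le ha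
  have hb0 : 0 < b := hm.trans_le hb
  have h1 : (a ^ 2)⁻¹ - (b ^ 2)⁻¹ = ((b - a) * (b + a)) / (a ^ 2 * b ^ 2) := by
    field_simp; ring
  rw [h1, abs_div, abs_of_pos (by positivity : (0:ℝ) < a ^ 2 * b ^ 2), abs_mul,
    abs_of_pos (by positivity : (0:ℝ) < b + a), abs_sub_comm b a]
  have hbb : m * m ≤ b * b := mul_le_mul hb hb hm.le hb0.le
  have haa : m * m ≤ a * a := mul_le_mul ha ha hm.le ha0.le
  have h3 : m ^ 3 ≤ a * b ^ 2 := by nlinarith [mul_le_mul ha hbb (by positivity) ha0.le]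
  have h4 : m ^ 3 ≤ b * a ^ 2 := by nlinarith [mul_le_mul hb haa (by positivity) hb0.le]
  have h2 : (b + a) * m ^ 3 ≤ 2 * (a ^ 2 * b ^ 2) := by nlinarith
  calc |a - b| * (b + a) / (a ^ 2 * b ^ 2)
      ≤ |a - b| * (2 / m ^ 3) := by
        rw [div_le_iff₀ (by positivity)]
        have := mul_le_mul_of_nonneg_left h2 (abs_nonneg (a - b))
        calc |a - b| * (b + a) ≤ |a - b| * (2 * (a ^ 2 * b ^ 2)) / m ^ 3 := by
              rw [le_div_iff₀ (by positivity)]; nlinarith [abs_nonneg (a - b)]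
          _ = |a - b| * (2 / m ^ 3) * (a ^ 2 * b ^ 2) := by ring
    _ = 2 / m ^ 3 * |a - b| := by ring

private lemma exp_lip {a b : ℝ} (ha : a ≤ 0) (hb : b ≤ 0) :
    |Real.exp a - Real.exp b| ≤ |a - b| := by
  have main : ∀ c d : ℝ, c ≤ 0 → d ≤ c → Real.exp c - Real.exp d ≤ c - d := by
    intro c d hc hdc
    have h2 : Real.exp c ≤ 1 := Real.exp_le_one_iff.mpr hc
    have h3 : (d - c) + 1 ≤ Real.exp (d - c) := Real.add_one_le_exp _
    have h4 : Real.exp d = Real.exp c * Real.exp (d - c) := by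
      rw [← Real.exp_add]; ring_nf
    nlinarith [Real.exp_pos c]
  rcases le_total b a with h | h
  · rw [abs_of_nonneg (sub_nonneg.mpr (Real.exp_le_exp.mpr h)),
      abs_of_nonneg (sub_nonneg.mpr h)]
    exact main a b ha h
  · rw [abs_sub_comm, abs_sub_comm a b,
      abs_of_nonneg (sub_nonneg.mpr (Real.exp_le_exp.mpr h)),
      abs_of_nonneg (sub_nonneg.mpr h)]
    exact main b a hb h

private lemma loewner_hasDeriv {ξ : ℝ → ℝ} {x : ℝ} {ζ : EReal} {g : ℝ → ℝ}
    (hLt : IsLoewnerTraj ξ x ζ g) (hξ : ContinuousOn ξ (Ici 0)) {ρ : ℝ}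
    (hρ : (ρ : EReal) < ζ) {b : ℝ} (hb : b ∈ Ico 0 ρ) :
    HasDerivWithinAt g (2 / (g b - ξ b)) (Ici b) b := by
  have hsub : Icc 0 ρ ⊆ {t : ℝ | 0 ≤ t ∧ (t : EReal) < ζ} := fun t ht =>
    ⟨ht.1, lt_of_le_of_lt (EReal.coe_le_coe_iff.mpr ht.2) hρ⟩
  have hgc : ContinuousOn g (Icc 0 ρ) := hLt.cont.mono hsub
  have hne : ∀ t ∈ Icc 0 ρ, g t - ξ t ≠ 0 := fun t ht =>
    sub_ne_zero.mpr (hLt.gt t (hsub ht).1 (hsub ht).2).ne'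
  have hF : ContinuousOn (fun s => 2 / (g s - ξ s)) (Icc 0 ρ) :=
    continuousOn_const.div (hgc.sub (hξ.mono fun t ht => ht.1)) hne
  have hint : IntervalIntegrable (fun s => 2 / (g s - ξ s)) volume 0 b :=
    (hF.mono (Icc_subset_Icc le_rfl hb.2.le)).intervalIntegrable_of_Icc hb.1
  have hIoo : Ioo b ρ ⊆ Icc 0 ρ := fun t ht => ⟨hb.1.trans ht.1.le, ht.2.le⟩
  have hmem : Ioo b ρ ∈ 𝓝[>] b := Ioo_mem_nhdsGT hb.2
  have hmeas : StronglyMeasurableAtFilter (fun s => 2 / (g s - ξ s)) (𝓝[>] b) volume :=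
    ⟨Ioo b ρ, hmem, (hF.mono hIoo).aestronglyMeasurable measurableSet_Ioo⟩
  have hcb : ContinuousWithinAt (fun s => 2 / (g s - ξ s)) (Ioi b) b :=
    ((hF b ⟨hb.1, hb.2.le⟩).mono hIoo).mono_of_mem_nhdsWithin hmem
  have H : HasDerivWithinAt (fun u => ∫ s in (0:ℝ)..u, 2 / (g s - ξ s))
      (2 / (g b - ξ b)) (Ici b) b :=
    intervalIntegral.integral_hasDerivWithinAt_right hint hmeas hcb
  have heq : EqOn g (fun u => x + ∫ s in (0:ℝ)..u, 2 / (g s - ξ s)) (Icc b ρ) := fun y hy =>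
    hLt.ode y (hb.1.trans hy.1) (hsub ⟨hb.1.trans hy.1, hy.2⟩).2
  exact (((H.const_add x).mono Icc_subset_Ici_self).congr heq
    (heq ⟨le_rfl, hb.2.le⟩)).mono_of_mem_nhdsWithin (Icc_mem_nhdsGE_of_mem ⟨le_rfl, hb.2⟩)

private lemma key_lemma {ξn ξl gn gl : ℝ → ℝ} {ζn ζl : EReal} {x T ε η : ℝ}
    (hLn : IsLoewnerTraj ξn x ζn gn) (hLl : IsLoewnerTraj ξl x ζl gl)
    (hcn : ContinuousOn ξn (Ici 0)) (hcl : ContinuousOn ξl (Ici 0))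
    (h0n : ξn 0 = 0) (h0l : ξl 0 = 0)
    (hT0 : 0 ≤ T) (hTl : (T : EReal) < ζl)
    (hε : 0 < ε) (hεle : ∀ t ∈ Icc 0 T, ε ≤ gl t - ξl t)
    (hη : 0 < η) (hηs : η * Real.exp (4 / ε ^ 2 * T) ≤ ε / 8)
    (hclose : ∀ t ∈ Icc 0 T, |ξn t - ξl t| ≤ η) :
    (T : EReal) < ζn ∧
      (∀ t ∈ Icc 0 T, |gn t - gl t| ≤ η * Real.exp (4 / ε ^ 2 * T)) ∧
      (∀ t ∈ Icc 0 T, ε / 2 ≤ gn t - ξn t) := by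
  have hK : (0:ℝ) < 4 / ε ^ 2 := by positivity
  have hexp1 : (1:ℝ) ≤ Real.exp (4 / ε ^ 2 * T) := by
    nlinarith [Real.add_one_le_exp (4 / ε ^ 2 * T), mul_nonneg hK.le hT0]
  have hη8 : η ≤ ε / 8 := le_trans (by nlinarith) hηs
  have h0ζn : ((0:ℝ) : EReal) < ζn := by rw [EReal.coe_zero]; exact hLn.pos
  have h0ζl : ((0:ℝ) : EReal) < ζl := by rw [EReal.coe_zero]; exact hLl.pos
  have hgn0 : gn 0 = x := by have := hLn.ode 0 le_rfl h0ζn; simpa using this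
  have hgl0 : gl 0 = x := by have := hLl.ode 0 le_rfl h0ζl; simpa using this
  have hεx : ε ≤ x := by
    have := hεle 0 ⟨le_rfl, hT0⟩; rw [hgl0, h0l] at this; linarith
  have hdoml : Icc 0 T ⊆ {t : ℝ | 0 ≤ t ∧ (t : EReal) < ζl} := fun t ht =>
    ⟨ht.1, lt_of_le_of_lt (EReal.coe_le_coe_iff.mpr ht.2) hTl⟩
  set S : Set ℝ := {t : ℝ | t ∈ Icc 0 T ∧ (t : EReal) < ζn ∧
      ∀ s ∈ Icc 0 t, ε / 2 ≤ gn s - ξn s} with hSdef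
  have h0S : (0:ℝ) ∈ S := by
    refine ⟨⟨le_rfl, hT0⟩, h0ζn, ?_⟩
    intro s hs
    have hs0 : s = 0 := le_antisymm hs.2 hs.1
    rw [hs0, hgn0, h0n]; linarith
  have hne : S.Nonempty := ⟨0, h0S⟩
  have hbdd : BddAbove S := ⟨T, fun t ht => ht.1.2⟩
  set τ := sSup S with hτdef
  have hτ0 : 0 ≤ τ := le_csSup hbdd h0S
  have hτT : τ ≤ T := csSup_le hne fun t ht => ht.1.2
  have hlt : ∀ s, 0 ≤ s → s < τ → ε / 2 ≤ gn s - ξn s := by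
    intro s h0 hs
    obtain ⟨t, htS, hst⟩ := exists_lt_of_lt_csSup hne hs
    exact htS.2.2 s ⟨h0, hst.le⟩
  have hζτ : (τ : EReal) < ζn := by
    by_contra hcon
    push_neg at hcon
    have hζT : ζn ≠ ⊤ := ne_top_of_le_ne_top (EReal.coe_ne_top τ) hcon
    have hζB : ζn ≠ ⊥ := (lt_of_le_of_lt bot_le hLn.pos).ne'
    have hz : (ζn.toReal : EReal) = ζn := EReal.coe_toReal hζT hζB
    have hz0 : 0 < ζn.toReal := by
      have h : ((0:ℝ) : EReal) < (ζn.toReal : EReal) := by rw [hz]; exact h0ζn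
      exact EReal.coe_lt_coe_iff.mp h
    have hzτ : ζn.toReal ≤ τ := EReal.coe_le_coe_iff.mp (by rw [hz]; exact hcon)
    obtain ⟨Mξ, hMξ⟩ := isCompact_Icc.exists_bound_of_continuousOn
      (hcn.mono (fun t (ht : t ∈ Icc 0 ζn.toReal) => ht.1))
    have hub : ∀ t, 0 ≤ t → t < ζn.toReal → gn t - ξn t ≤ x + 4 / ε * ζn.toReal + Mξ := by
      intro t h0t htz
      have htζ : (t : EReal) < ζn := by rw [← hz]; exact_mod_cast htz
      have hF : ∀ s ∈ Set.uIoc (0:ℝ) t, ‖2 / (gn s - ξn s)‖ ≤ 4 / ε := by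
        intro s hs
        rw [Set.uIoc_of_le h0t] at hs
        have hs' : ε / 2 ≤ gn s - ξn s :=
          hlt s hs.1.le (lt_of_le_of_lt hs.2 (lt_of_lt_of_le htz hzτ))
        have hpos : (0:ℝ) < gn s - ξn s := by linarith
        rw [Real.norm_eq_abs, abs_of_pos (by positivity)]
        rw [div_le_div_iff₀ hpos (by positivity)]
        nlinarith
      have hgnt := hLn.ode t h0t htζ
      have hI := intervalIntegral.norm_integral_le_of_norm_le_const hF
      rw [Real.norm_eq_abs, sub_zero, abs_of_nonneg h0t] at hI
      have hξt : -Mξ ≤ ξn t := by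
        have := hMξ t ⟨h0t, htz.le⟩
        rw [Real.norm_eq_abs] at this
        linarith [abs_le.mp this |>.1]
      have habs := abs_le.mp hI |>.2
      have h4t : 4 / ε * t ≤ 4 / ε * ζn.toReal :=
        mul_le_mul_of_nonneg_left htz.le (by positivity)
      rw [hgnt]; linarith
    have hm := hLn.maximal hζT
    have hevub : ∀ᶠ t in 𝓝[<] ζn.toReal, (fun t => gn t - ξn t) t ≤ x + 4 / ε * ζn.toReal + Mξ := by
      filter_upwards [Ioo_mem_nhdsLT_of_mem (⟨hz0, le_rfl⟩ : ζn.toReal ∈ Ioc 0 ζn.toReal)] with t ht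
      exact hub t ht.1.le ht.2
    have hevlb : ∀ᶠ t in 𝓝[<] ζn.toReal, ε / 2 ≤ (fun t => gn t - ξn t) t := by
      filter_upwards [Ioo_mem_nhdsLT_of_mem (⟨hz0, le_rfl⟩ : ζn.toReal ∈ Ioc 0 ζn.toReal)] with t ht
      exact hlt t ht.1.le (lt_of_lt_of_le ht.2 hzτ)
    have hcob : IsCoboundedUnder (· ≥ ·) (𝓝[<] ζn.toReal) (fun t => gn t - ξn t) :=
      IsBoundedUnder.isCoboundedUnder_ge ⟨x + 4 / ε * ζn.toReal + Mξ, hevub⟩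
    have hlim : ε / 2 ≤ liminf (fun t => gn t - ξn t) (𝓝[<] ζn.toReal) :=
      le_liminf_of_le hcob hevlb
    rw [hm] at hlim
    linarith
  obtain ⟨ρ, hτρ, hρζ⟩ := exists_real_btwn' hζτ
  obtain ⟨ρl, hTρl, hρlζ⟩ := exists_real_btwn' hTl
  have hdomn : Icc 0 ρ ⊆ {t : ℝ | 0 ≤ t ∧ (t : EReal) < ζn} := fun t ht =>
    ⟨ht.1, lt_of_le_of_lt (EReal.coe_le_coe_iff.mpr ht.2) hρζ⟩
  have hfc : ContinuousOn (fun t => gn t - ξn t) (Icc 0 ρ) :=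
    (hLn.cont.mono hdomn).sub (hcn.mono fun t ht => ht.1)
  have hτmem : ε / 2 ≤ gn τ - ξn τ := by
    rcases eq_or_lt_of_le hτ0 with h0 | h0
    · rw [← h0, hgn0, h0n]; linarith
    · have hIccmem : Icc 0 ρ ∈ 𝓝[<] τ := by
        apply mem_nhdsWithin.mpr
        refine ⟨Ioo 0 (ρ + 1), isOpen_Ioo, ⟨h0, by linarith⟩, ?_⟩
        rintro t ⟨⟨ht1, -⟩, ht2⟩
        exact ⟨ht1.le, (lt_of_lt_of_le ht2 hτρ.le).le⟩
      have hcw : ContinuousWithinAt (fun t => gn t - ξn t) (Iio τ) τ :=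
        (hfc τ ⟨hτ0, hτρ.le⟩).mono_of_mem_nhdsWithin hIccmem
      refine ge_of_tendsto hcw ?_
      filter_upwards [Ioo_mem_nhdsLT_of_mem (⟨h0, le_rfl⟩ : τ ∈ Ioc 0 τ)] with t ht
      exact hlt t ht.1.le ht.2
  have hτS3 : ∀ s ∈ Icc 0 τ, ε / 2 ≤ gn s - ξn s := by
    intro s hs
    rcases lt_or_eq_of_le hs.2 with h | h
    · exact hlt s hs.1 h
    · rw [h]; exact hτmem
  have hGron : ∀ t ∈ Icc 0 τ, |gn t - gl t| ≤ η * Real.exp (4 / ε ^ 2 * T) := by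
    have hufc : ContinuousOn (fun t => gn t - gl t) (Icc 0 τ) := by
      apply ContinuousOn.sub
      · exact hLn.cont.mono fun t ht => hdomn ⟨ht.1, ht.2.trans hτρ.le⟩
      · exact hLl.cont.mono fun t ht => hdoml ⟨ht.1, ht.2.trans hτT⟩
    have hu' : ∀ t ∈ Ico 0 τ, HasDerivWithinAt (fun t => gn t - gl t)
        (2 / (gn t - ξn t) - 2 / (gl t - ξl t)) (Ici t) t := by
      intro t ht
      exact (loewner_hasDeriv hLn hcn hρζ ⟨ht.1, ht.2.trans hτρ⟩).sub
        (loewner_hasDeriv hLl hcl hρlζ ⟨ht.1, lt_of_lt_of_le ht.2 (hτT.trans hTρl.le)⟩)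
    have hbound : ∀ t ∈ Ico 0 τ, ‖2 / (gn t - ξn t) - 2 / (gl t - ξl t)‖ ≤
        4 / ε ^ 2 * ‖gn t - gl t‖ + 4 / ε ^ 2 * η := by
      intro t ht
      have hA : ε / 2 ≤ gn t - ξn t := hτS3 t ⟨ht.1, ht.2.le⟩
      have hB : ε ≤ gl t - ξl t := hεle t ⟨ht.1, ht.2.le.trans hτT⟩
      have hA0 : (0:ℝ) < gn t - ξn t := by linarith
      have hB0 : (0:ℝ) < gl t - ξl t := by linarith
      have hBA : |(gl t - ξl t) - (gn t - ξn t)| ≤ |gn t - gl t| + η := by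
        have h1 := hclose t ⟨ht.1, ht.2.le.trans hτT⟩
        have h2 : (gl t - ξl t) - (gn t - ξn t) = (gl t - gn t) + (ξn t - ξl t) := by ring
        rw [h2]
        calc |(gl t - gn t) + (ξn t - ξl t)| ≤ |gl t - gn t| + |ξn t - ξl t| := abs_add_le _ _
          _ ≤ |gn t - gl t| + η := by rw [abs_sub_comm]; linarith
      have heq2 : 2 / (gn t - ξn t) - 2 / (gl t - ξl t)
          = 2 * ((gl t - ξl t) - (gn t - ξn t)) / ((gn t - ξn t) * (gl t - ξl t)) := by
        field_simp
      rw [Real.norm_eq_abs, Real.norm_eq_abs, heq2, abs_div,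
        abs_of_pos (mul_pos hA0 hB0), abs_mul, abs_two]
      rw [div_le_iff₀ (mul_pos hA0 hB0)]
      have h5 : ε / 2 * ε ≤ (gn t - ξn t) * (gl t - ξl t) :=
        mul_le_mul hA hB hε.le hA0.le
      have h6 : (0:ℝ) ≤ 4 / ε ^ 2 * |gn t - gl t| + 4 / ε ^ 2 * η := by positivity
      calc 2 * |(gl t - ξl t) - (gn t - ξn t)| ≤ 2 * (|gn t - gl t| + η) := by linarith
        _ = (4 / ε ^ 2 * |gn t - gl t| + 4 / ε ^ 2 * η) * (ε / 2 * ε) := by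
            field_simp
            ring
        _ ≤ (4 / ε ^ 2 * |gn t - gl t| + 4 / ε ^ 2 * η) * ((gn t - ξn t) * (gl t - ξl t)) :=
            mul_le_mul_of_nonneg_left h5 h6
    have hGB := norm_le_gronwallBound_of_norm_deriv_right_le (δ := 0) hufc hu'
      (by simp [hgn0, hgl0]) hbound
    intro t ht
    have h7 := hGB t ht
    rw [Real.norm_eq_abs, sub_zero] at h7
    have h8 : gronwallBound 0 (4 / ε ^ 2) (4 / ε ^ 2 * η) t
        = η * (Real.exp (4 / ε ^ 2 * t) - 1) := by
      rw [gronwallBound_of_K_ne_0 hK.ne']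
      field_simp
      ring
    have h9 : Real.exp (4 / ε ^ 2 * t) ≤ Real.exp (4 / ε ^ 2 * T) :=
      Real.exp_le_exp.mpr (mul_le_mul_of_nonneg_left (ht.2.trans hτT) hK.le)
    rw [h8] at h7
    nlinarith [Real.exp_pos (4 / ε ^ 2 * t), mul_le_mul_of_nonneg_left h9 hη.le]
  have hτeqT : τ = T := by
    by_contra hne'
    have hτltT : τ < T := lt_of_le_of_ne hτT hne'
    have hfτ : ε / 2 < gn τ - ξn τ := by
      have h1 := hGron τ ⟨hτ0, le_rfl⟩
      have h2 := hεle τ ⟨hτ0, hτT⟩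
      have h3 := abs_le.mp (hclose τ ⟨hτ0, hτT⟩)
      have h4 := abs_le.mp (h1.trans hηs)
      have h5 : gn τ - ξn τ = (gl τ - ξl τ) + (gn τ - gl τ) + (ξl τ - ξn τ) := by ring
      rw [h5]
      linarith [h3.1, h3.2, h4.1, h4.2]
    have hmemIci : Icc 0 ρ ∈ 𝓝[≥] τ :=
      mem_of_superset (Icc_mem_nhdsGE_of_mem ⟨le_rfl, hτρ⟩) (Icc_subset_Icc hτ0 le_rfl)
    have hcw : ContinuousWithinAt (fun t => gn t - ξn t) (Ici τ) τ :=
      (hfc τ ⟨hτ0, hτρ.le⟩).mono_of_mem_nhdsWithin hmemIci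
    have hev : {t : ℝ | ε / 2 < gn t - ξn t} ∈ 𝓝[≥] τ := hcw (Ioi_mem_nhds hfτ)
    obtain ⟨b', hb', hsub'⟩ := mem_nhdsGE_iff_exists_Icc_subset.mp hev
    have hτs₀ : τ < min b' (min T ρ) := lt_min hb' (lt_min hτltT hτρ)
    have hs₀S : min b' (min T ρ) ∈ S := by
      refine ⟨⟨hτ0.trans hτs₀.le, (min_le_right _ _).trans (min_le_left _ _)⟩, ?_, ?_⟩
      · exact lt_of_le_of_lt
          (EReal.coe_le_coe_iff.mpr ((min_le_right _ _).trans (min_le_right _ _))) hρζ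
      · intro s hs
        rcases le_or_gt s τ with h | h
        · exact hτS3 s ⟨hs.1, h⟩
        · exact (hsub' ⟨h.le, hs.2.trans (min_le_left _ _)⟩).le
    linarith [le_csSup hbdd hs₀S]
  refine ⟨by rw [← hτeqT]; exact hζτ, ?_, ?_⟩
  · intro t ht; exact hGron t ⟨ht.1, by rw [hτeqT]; exact ht.2⟩
  · intro t ht; exact hτS3 t ⟨ht.1, by rw [hτeqT]; exact ht.2⟩

/-- If continuous driving functions `ξⁿ` (vanishing at `0`) converge to `ξ` uniformly on
compact subsets of `[0,∞)`, then for `x > 0` and every `T < ζ_x`, the derivatives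
`Dⁿ_t = exp(−2∫₀ᵗ (gⁿ_s(x) − ξⁿ_s)⁻² ds)` are defined on `[0,T]` for all large `n` and
converge uniformly on `[0,T]` to `D_t = exp(−2∫₀ᵗ (g_s(x) − ξ_s)⁻² ds)`. -/
theorem stmt2
    (ξ : ℕ → ℝ → ℝ) (ξl : ℝ → ℝ)
    (hc : ∀ n, ContinuousOn (ξ n) (Set.Ici 0))
    (hcl : ContinuousOn ξl (Set.Ici 0))
    (h0 : ∀ n, ξ n 0 = 0) (h0l : ξl 0 = 0)
    (hconv : ∀ T : ℝ, 0 ≤ T →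
      TendstoUniformlyOn (fun n t => ξ n t) ξl Filter.atTop (Set.Icc 0 T))
    (x : ℝ) (hx : 0 < x)
    (ζ : ℕ → EReal) (g : ℕ → ℝ → ℝ) (ζl : EReal) (gl : ℝ → ℝ)
    (hL : ∀ n, IsLoewnerTraj (ξ n) x (ζ n) (g n))
    (hLl : IsLoewnerTraj ξl x ζl gl) :
    ∀ T : ℝ, 0 ≤ T → (T : EReal) < ζl →
      (∀ᶠ n in Filter.atTop, (T : EReal) < ζ n) ∧
      TendstoUniformlyOn
        (fun n t => Real.exp (-2 * ∫ s in (0:ℝ)..t, ((g n s - ξ n s) ^ 2)⁻¹))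
        (fun t => Real.exp (-2 * ∫ s in (0:ℝ)..t, ((gl s - ξl s) ^ 2)⁻¹))
        Filter.atTop (Set.Icc 0 T) := by

  intro T hT0 hTζ
  have hdoml : Icc 0 T ⊆ {t : ℝ | 0 ≤ t ∧ (t : EReal) < ζl} := fun t ht =>
    ⟨ht.1, lt_of_le_of_lt (EReal.coe_le_coe_iff.mpr ht.2) hTζ⟩
  have hflc : ContinuousOn (fun t => gl t - ξl t) (Icc 0 T) :=
    (hLl.cont.mono hdoml).sub (hcl.mono fun t ht => ht.1)
  obtain ⟨t₀, ht₀, hmin⟩ := isCompact_Icc.exists_isMinOn (nonempty_Icc.mpr hT0) hflc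
  set ε := gl t₀ - ξl t₀ with hεdef
  have hε : 0 < ε := sub_pos.mpr (hLl.gt t₀ (hdoml ht₀).1 (hdoml ht₀).2)
  have hεle : ∀ t ∈ Icc 0 T, ε ≤ gl t - ξl t := fun t ht => hmin ht
  set Cb := Real.exp (4 / ε ^ 2 * T) with hCbdef
  have hCb : 0 < Cb := Real.exp_pos _
  have hconvT := hconv T hT0
  rw [Metric.tendstoUniformlyOn_iff] at hconvT
  have hmain : ∀ η : ℝ, 0 < η → η * Cb ≤ ε / 8 → ∀ n,
      (∀ t ∈ Icc 0 T, |ξ n t - ξl t| ≤ η) →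
      (T : EReal) < ζ n ∧ (∀ t ∈ Icc 0 T, |g n t - gl t| ≤ η * Cb) ∧
      (∀ t ∈ Icc 0 T, ε / 2 ≤ g n t - ξ n t) := fun η h1 h2 n h3 =>
    key_lemma (hL n) hLl (hc n) hcl (h0 n) h0l hT0 hTζ hε hεle h1 h2 h3
  set η₀ := (ε / 8) / Cb with hη₀def
  have hη₀ : 0 < η₀ := by positivity
  have hη₀Cb : η₀ * Cb ≤ ε / 8 := by
    rw [hη₀def, div_mul_cancel₀ _ hCb.ne']
  constructor
  · filter_upwards [hconvT η₀ hη₀] with n hn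
    refine (hmain η₀ hη₀ hη₀Cb n ?_).1
    intro t ht
    have h := hn t ht
    rw [Real.dist_eq, abs_sub_comm] at h
    exact h.le
  · rw [Metric.tendstoUniformlyOn_iff]
    intro δ hδ
    set C := 2 * (T + 1) * (16 / ε ^ 3) * (Cb + 1) with hCdef
    have hC : 0 < C := by positivity
    set η₁ := min η₀ (δ / (2 * C)) with hη₁def
    have hη₁ : 0 < η₁ := lt_min hη₀ (by positivity)
    have hη₁Cb : η₁ * Cb ≤ ε / 8 :=
      le_trans (mul_le_mul_of_nonneg_right (min_le_left _ _) hCb.le) hη₀Cb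
    filter_upwards [hconvT η₁ hη₁] with n hn
    intro t ht
    have hclose : ∀ s ∈ Icc 0 T, |ξ n s - ξl s| ≤ η₁ := by
      intro s hs
      have h := hn s hs
      rw [Real.dist_eq, abs_sub_comm] at h
      exact h.le
    obtain ⟨hTn, hu, hlow⟩ := hmain η₁ hη₁ hη₁Cb n hclose
    have hdomn : Icc 0 T ⊆ {s : ℝ | 0 ≤ s ∧ (s : EReal) < ζ n} := fun s hs =>
      ⟨hs.1, lt_of_le_of_lt (EReal.coe_le_coe_iff.mpr hs.2) hTn⟩
    have hfnc : ContinuousOn (fun s => g n s - ξ n s) (Icc 0 T) :=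
      ((hL n).cont.mono hdomn).sub ((hc n).mono fun s hs => hs.1)
    have hIl : ContinuousOn (fun s => ((gl s - ξl s) ^ 2)⁻¹) (Icc 0 T) :=
      (hflc.pow 2).inv₀ fun s hs => pow_ne_zero 2 (ne_of_gt (lt_of_lt_of_le hε (hεle s hs)))
    have hIn : ContinuousOn (fun s => ((g n s - ξ n s) ^ 2)⁻¹) (Icc 0 T) :=
      (hfnc.pow 2).inv₀ fun s hs => pow_ne_zero 2 (ne_of_gt (lt_of_lt_of_le (by linarith : (0:ℝ) < ε/2) (hlow s hs)))
    have hIlint : IntervalIntegrable (fun s => ((gl s - ξl s) ^ 2)⁻¹) volume 0 t :=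
      (hIl.mono (Icc_subset_Icc le_rfl ht.2)).intervalIntegrable_of_Icc ht.1
    have hInint : IntervalIntegrable (fun s => ((g n s - ξ n s) ^ 2)⁻¹) volume 0 t :=
      (hIn.mono (Icc_subset_Icc le_rfl ht.2)).intervalIntegrable_of_Icc ht.1
    set B := 16 / ε ^ 3 * (η₁ * Cb + η₁) with hBdef
    have hB : 0 ≤ B := by positivity
    have hdiff : ∀ s ∈ Set.uIoc (0:ℝ) t,
        ‖((gl s - ξl s) ^ 2)⁻¹ - ((g n s - ξ n s) ^ 2)⁻¹‖ ≤ B := by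
      intro s hs
      rw [Set.uIoc_of_le ht.1] at hs
      have hsT : s ∈ Icc 0 T := ⟨hs.1.le, hs.2.trans ht.2⟩
      have h1 : ε / 2 ≤ gl s - ξl s := le_trans (by linarith) (hεle s hsT)
      have h2 : ε / 2 ≤ g n s - ξ n s := hlow s hsT
      have h3 : |(gl s - ξl s) - (g n s - ξ n s)| ≤ η₁ * Cb + η₁ := by
        have h4 := hu s hsT
        have h5 := hclose s hsT
        have h6 : (gl s - ξl s) - (g n s - ξ n s) = (gl s - g n s) + (ξ n s - ξl s) := by ring
        rw [h6]
        calc |(gl s - g n s) + (ξ n s - ξl s)| ≤ |gl s - g n s| + |ξ n s - ξl s| := abs_add_le _ _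
          _ ≤ η₁ * Cb + η₁ := by rw [abs_sub_comm]; linarith
      have h7 := inv_sq_diff (by linarith : (0:ℝ) < ε / 2) h1 h2
      rw [Real.norm_eq_abs]
      have h8 : 2 / (ε / 2) ^ 3 = 16 / ε ^ 3 := by
        field_simp
        ring
      calc |((gl s - ξl s) ^ 2)⁻¹ - ((g n s - ξ n s) ^ 2)⁻¹|
          ≤ 2 / (ε / 2) ^ 3 * |(gl s - ξl s) - (g n s - ξ n s)| := h7
        _ ≤ B := by
            rw [h8, hBdef]
            exact mul_le_mul_of_nonneg_left h3 (by positivity)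
    have hint : |(∫ s in (0:ℝ)..t, ((gl s - ξl s) ^ 2)⁻¹)
        - ∫ s in (0:ℝ)..t, ((g n s - ξ n s) ^ 2)⁻¹| ≤ B * T := by
      rw [← intervalIntegral.integral_sub hIlint hInint]
      have h9 := intervalIntegral.norm_integral_le_of_norm_le_const hdiff
      rw [Real.norm_eq_abs, sub_zero, abs_of_nonneg ht.1] at h9
      exact h9.trans (mul_le_mul_of_nonneg_left ht.2 hB)
    have hIlpos : 0 ≤ ∫ s in (0:ℝ)..t, ((gl s - ξl s) ^ 2)⁻¹ :=
      intervalIntegral.integral_nonneg ht.1 fun s hs => by positivity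
    have hInpos : 0 ≤ ∫ s in (0:ℝ)..t, ((g n s - ξ n s) ^ 2)⁻¹ :=
      intervalIntegral.integral_nonneg ht.1 fun s hs => by positivity
    rw [Real.dist_eq]
    have hexp := exp_lip
      (a := -2 * ∫ s in (0:ℝ)..t, ((gl s - ξl s) ^ 2)⁻¹)
      (b := -2 * ∫ s in (0:ℝ)..t, ((g n s - ξ n s) ^ 2)⁻¹)
      (by linarith) (by linarith)
    have h10 : |(-2 * ∫ s in (0:ℝ)..t, ((gl s - ξl s) ^ 2)⁻¹)
        - (-2 * ∫ s in (0:ℝ)..t, ((g n s - ξ n s) ^ 2)⁻¹)|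
        = 2 * |(∫ s in (0:ℝ)..t, ((gl s - ξl s) ^ 2)⁻¹)
          - ∫ s in (0:ℝ)..t, ((g n s - ξ n s) ^ 2)⁻¹| := by
      rw [show (-2 * ∫ s in (0:ℝ)..t, ((gl s - ξl s) ^ 2)⁻¹)
          - (-2 * ∫ s in (0:ℝ)..t, ((g n s - ξ n s) ^ 2)⁻¹)
          = (-2) * ((∫ s in (0:ℝ)..t, ((gl s - ξl s) ^ 2)⁻¹)
            - ∫ s in (0:ℝ)..t, ((g n s - ξ n s) ^ 2)⁻¹) by ring, abs_mul]
      norm_num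
    have h11 : 2 * (B * T) ≤ C * η₁ := by
      rw [hBdef, hCdef]
      have hP : (0:ℝ) ≤ 16 / ε ^ 3 * (Cb + 1) * η₁ := by positivity
      nlinarith [hη₁.le, hCb.le, hT0]
    have h12 : C * η₁ ≤ δ / 2 := by
      have h13 : η₁ ≤ δ / (2 * C) := min_le_right _ _
      have h14 : C * (δ / (2 * C)) = δ / 2 := by
        field_simp
      calc C * η₁ ≤ C * (δ / (2 * C)) := mul_le_mul_of_nonneg_left h13 hC.le
        _ = δ / 2 := h14
    calc |Real.exp (-2 * ∫ s in (0:ℝ)..t, ((gl s - ξl s) ^ 2)⁻¹)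
        - Real.exp (-2 * ∫ s in (0:ℝ)..t, ((g n s - ξ n s) ^ 2)⁻¹)|
        ≤ |(-2 * ∫ s in (0:ℝ)..t, ((gl s - ξl s) ^ 2)⁻¹)
          - (-2 * ∫ s in (0:ℝ)..t, ((g n s - ξ n s) ^ 2)⁻¹)| := hexp
      _ = 2 * |(∫ s in (0:ℝ)..t, ((gl s - ξl s) ^ 2)⁻¹)
          - ∫ s in (0:ℝ)..t, ((g n s - ξ n s) ^ 2)⁻¹| := h10
      _ ≤ 2 * (B * T) := by linarith [hint]
      _ ≤ C * η₁ := h11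
      _ ≤ δ / 2 := h12
      _ < δ := by linarith
end

section
/- Let ξ : [0,∞) → ℝ be continuous and let ξ_0 < x < y. Then the swallowing times satisfy ζ_y ≥ ζ_x, and for every t < ζ_x one has g_t(y) > g_t(x) together with the identity g_t(y) − g_t(x) = (y − x) · exp( −2 ∫₀ᵗ ds / ((g_s(x) − ξ_s)(g_s(y) − ξ_s)) ), where g(x) and g(y) are the Loewner trajectories of x and y driven by ξ. -/
open MeasureTheory Filter Set

lemma primitive_hasDerivWithinAt {F : ℝ → ℝ} {T' u : ℝ}
    (hF : ContinuousOn F (Set.Icc 0 T')) (hu : u ∈ Set.Ico (0:ℝ) T') :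
    HasDerivWithinAt (fun t => ∫ s in (0:ℝ)..t, F s) (F u) (Set.Ici u) u := by
  have hmem : Set.Icc (0:ℝ) T' ∈ nhdsWithin u (Set.Ioi u) := by
    rw [mem_nhdsWithin]
    exact ⟨Set.Iio T', isOpen_Iio, hu.2, fun t ht => ⟨le_trans hu.1 ht.2.le, ht.1.le⟩⟩
  refine intervalIntegral.integral_hasDerivWithinAt_right ?_ ?_ ?_
  · apply ContinuousOn.intervalIntegrable
    apply hF.mono
    rw [Set.uIcc_of_le hu.1]
    exact Set.Icc_subset_Icc_right hu.2.le
  · exact ⟨Set.Icc 0 T', hmem, hF.aestronglyMeasurable measurableSet_Icc⟩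
  · exact (hF u ⟨hu.1, hu.2.le⟩).mono_of_mem_nhdsWithin hmem

lemma loewner_key (ξ : ℝ → ℝ) (hc : ContinuousOn ξ (Set.Ici 0))
    (x y : ℝ) (hxy : x < y) (ζx ζy : EReal) (gx gy : ℝ → ℝ)
    (hLx : IsLoewnerTraj ξ x ζx gx) (hLy : IsLoewnerTraj ξ y ζy gy) :
    ∀ T : ℝ, 0 ≤ T → (T : EReal) < ζx → (T : EReal) < ζy →
      gx T < gy T ∧ gy T - gx T
        = (y - x) * Real.exp (-2 * ∫ s in (0:ℝ)..T, ((gx s - ξ s) * (gy s - ξ s))⁻¹) := by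
  intro T hT0 hTx hTy
  obtain ⟨z, hz1, hz2⟩ := exists_between (lt_min hTx hTy)
  have hzt : z ≠ ⊤ := (hz2.trans_le le_top).ne
  have hzb : z ≠ ⊥ := ((EReal.bot_lt_coe T).trans hz1).ne'
  set T' := z.toReal with hT'def
  have hzz : (T' : EReal) = z := EReal.coe_toReal hzt hzb
  have hTT' : T < T' := by rw [← EReal.coe_lt_coe_iff, hzz]; exact hz1
  have hT'x : (T' : EReal) < ζx := by rw [hzz]; exact hz2.trans_le (min_le_left _ _)
  have hT'y : (T' : EReal) < ζy := by rw [hzz]; exact hz2.trans_le (min_le_right _ _)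
  have h0T' : (0:ℝ) ≤ T' := hT0.trans hTT'.le
  have hdomx : ∀ t ∈ Set.Icc (0:ℝ) T', 0 ≤ t ∧ (t : EReal) < ζx := fun t ht =>
    ⟨ht.1, lt_of_le_of_lt (EReal.coe_le_coe_iff.2 ht.2) hT'x⟩
  have hdomy : ∀ t ∈ Set.Icc (0:ℝ) T', 0 ≤ t ∧ (t : EReal) < ζy := fun t ht =>
    ⟨ht.1, lt_of_le_of_lt (EReal.coe_le_coe_iff.2 ht.2) hT'y⟩
  have hgxc : ContinuousOn gx (Set.Icc 0 T') := hLx.cont.mono fun t ht => hdomx t ht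
  have hgyc : ContinuousOn gy (Set.Icc 0 T') := hLy.cont.mono fun t ht => hdomy t ht
  have hξc : ContinuousOn ξ (Set.Icc 0 T') := hc.mono fun t ht => ht.1
  have hax : ∀ t ∈ Set.Icc (0:ℝ) T', 0 < gx t - ξ t := fun t ht =>
    sub_pos.2 (hLx.gt t (hdomx t ht).1 (hdomx t ht).2)
  have hay : ∀ t ∈ Set.Icc (0:ℝ) T', 0 < gy t - ξ t := fun t ht =>
    sub_pos.2 (hLy.gt t (hdomy t ht).1 (hdomy t ht).2)
  have hFx : ContinuousOn (fun t => 2 / (gx t - ξ t)) (Set.Icc 0 T') :=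
    continuousOn_const.div (hgxc.sub hξc) fun t ht => (hax t ht).ne'
  have hFy : ContinuousOn (fun t => 2 / (gy t - ξ t)) (Set.Icc 0 T') :=
    continuousOn_const.div (hgyc.sub hξc) fun t ht => (hay t ht).ne'
  set q : ℝ → ℝ := fun s => ((gx s - ξ s) * (gy s - ξ s))⁻¹ with hqdef
  have hqc : ContinuousOn q (Set.Icc 0 T') :=
    ((hgxc.sub hξc).mul (hgyc.sub hξc)).inv₀ fun t ht => (mul_pos (hax t ht) (hay t ht)).ne'
  set E : ℝ → ℝ := fun t => ∫ s in (0:ℝ)..t, q s with hEdef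
  have hEc : ContinuousOn E (Set.Icc 0 T') := by
    have h1 : IntegrableOn q (Set.uIcc 0 T') := by
      rw [Set.uIcc_of_le h0T']
      exact hqc.integrableOn_Icc
    have := intervalIntegral.continuousOn_primitive_interval h1
    rwa [Set.uIcc_of_le h0T'] at this
  set φ : ℝ → ℝ := fun t => (gy t - gx t) * Real.exp (2 * E t) with hφdef
  have hφc : ContinuousOn φ (Set.Icc 0 T') :=
    (hgyc.sub hgxc).mul (Real.continuous_exp.comp_continuousOn (continuousOn_const.mul hEc))
  have hφd : ∀ u ∈ Set.Ico (0:ℝ) T', HasDerivWithinAt φ 0 (Set.Ici u) u := by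
    intro u hu
    have huI : u ∈ Set.Icc (0:ℝ) T' := ⟨hu.1, hu.2.le⟩
    have hmem : Set.Icc (0:ℝ) T' ∈ nhdsWithin u (Set.Ici u) := by
      rw [mem_nhdsWithin]
      exact ⟨Set.Iio T', isOpen_Iio, hu.2, fun t ht => ⟨le_trans hu.1 ht.2, ht.1.le⟩⟩
    have hgxd : HasDerivWithinAt gx (2 / (gx u - ξ u)) (Set.Ici u) u := by
      have h1 := (primitive_hasDerivWithinAt hFx hu).const_add x
      refine h1.congr_of_eventuallyEq ?_ (hLx.ode u (hdomx u huI).1 (hdomx u huI).2)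
      filter_upwards [hmem] with t ht
      exact hLx.ode t (hdomx t ht).1 (hdomx t ht).2
    have hgyd : HasDerivWithinAt gy (2 / (gy u - ξ u)) (Set.Ici u) u := by
      have h1 := (primitive_hasDerivWithinAt hFy hu).const_add y
      refine h1.congr_of_eventuallyEq ?_ (hLy.ode u (hdomy u huI).1 (hdomy u huI).2)
      filter_upwards [hmem] with t ht
      exact hLy.ode t (hdomy t ht).1 (hdomy t ht).2
    have hEd : HasDerivWithinAt E (q u) (Set.Ici u) u := primitive_hasDerivWithinAt hqc hu
    have hexp : HasDerivWithinAt (fun t => Real.exp (2 * E t))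
        (Real.exp (2 * E u) * (2 * q u)) (Set.Ici u) u := (hEd.const_mul 2).exp
    have hmul : HasDerivWithinAt φ
        ((2 / (gy u - ξ u) - 2 / (gx u - ξ u)) * Real.exp (2 * E u)
          + (gy u - gx u) * (Real.exp (2 * E u) * (2 * q u))) (Set.Ici u) u :=
      (hgyd.sub hgxd).mul hexp
    have h0 : (2 / (gy u - ξ u) - 2 / (gx u - ξ u)) * Real.exp (2 * E u)
          + (gy u - gx u) * (Real.exp (2 * E u) * (2 * q u)) = 0 := by
      have ha := (hax u huI).ne'
      have hb := (hay u huI).ne'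
      have hgyx : gy u - gx u = (gy u - ξ u) - (gx u - ξ u) := by ring
      rw [hqdef]
      simp only
      rw [hgyx]
      field_simp
      ring
    exact h0 ▸ hmul
  have hconst := constant_of_has_deriv_right_zero
    (hφc.mono (Set.Icc_subset_Icc_right hTT'.le))
    (fun u hu => hφd u (Set.Ico_subset_Ico_right hTT'.le hu))
  have hT : φ T = φ 0 := hconst T ⟨hT0, le_refl T⟩
  have hgx0 : gx 0 = x := by
    have h0ζ : ((0:ℝ) : EReal) < ζx := by simpa using hLx.pos
    have := hLx.ode 0 le_rfl h0ζ
    simpa [intervalIntegral.integral_same] using this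
  have hgy0 : gy 0 = y := by
    have h0ζ : ((0:ℝ) : EReal) < ζy := by simpa using hLy.pos
    have := hLy.ode 0 le_rfl h0ζ
    simpa [intervalIntegral.integral_same] using this
  have hφ0 : φ 0 = y - x := by
    simp [hφdef, hEdef, intervalIntegral.integral_same, hgx0, hgy0]
  have hmain : (gy T - gx T) * Real.exp (2 * E T) = y - x := hT.trans hφ0
  have heq : gy T - gx T = (y - x) * Real.exp (-2 * E T) := by
    rw [show (-2:ℝ) * E T = -(2 * E T) by ring, Real.exp_neg]
    exact (eq_mul_inv_iff_mul_eq₀ (Real.exp_pos _).ne').2 hmain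
  refine ⟨sub_pos.1 ?_, heq⟩
  rw [heq]
  exact mul_pos (sub_pos.2 hxy) (Real.exp_pos _)

/-- Monotonicity of real Loewner trajectories: for `ξ_0 < x < y` one has `ζ_y ≥ ζ_x`,
and for every `t < ζ_x`, `g_t(y) > g_t(x)` with
`g_t(y) − g_t(x) = (y − x) · exp(−2 ∫₀ᵗ ds/((g_s(x) − ξ_s)(g_s(y) − ξ_s)))`. -/
theorem stmt3
    (ξ : ℝ → ℝ) (hc : ContinuousOn ξ (Set.Ici 0))
    (x y : ℝ) (hx : ξ 0 < x) (hxy : x < y)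
    (ζx ζy : EReal) (gx gy : ℝ → ℝ)
    (hLx : IsLoewnerTraj ξ x ζx gx)
    (hLy : IsLoewnerTraj ξ y ζy gy) :
    ζx ≤ ζy ∧
    ∀ t : ℝ, 0 ≤ t → (t : EReal) < ζx →
      gx t < gy t ∧
      gy t - gx t
        = (y - x) * Real.exp (-2 * ∫ s in (0:ℝ)..t, ((gx s - ξ s) * (gy s - ξ s))⁻¹) := by
  have key := loewner_key ξ hc x y hxy ζx ζy gx gy hLx hLy
  have h1 : ζx ≤ ζy := by
    by_contra hlt'
    push_neg at hlt'
    have hlt : ζy < ζx := hlt'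
    have hne : ζy ≠ ⊤ := by
      intro h
      rw [h] at hlt
      exact not_top_lt hlt
    have hnb : ζy ≠ ⊥ := by
      intro h
      have := hLy.pos
      rw [h] at this
      simp at this
    set c := ζy.toReal with hcdef
    have hcy : (c : EReal) = ζy := EReal.coe_toReal hne hnb
    have hc0 : 0 < c := by
      have : ((0:ℝ) : EReal) < (c : EReal) := by rw [hcy]; simpa using hLy.pos
      exact_mod_cast this
    have hdomy : ∀ t ∈ Set.Icc (0:ℝ) c, 0 ≤ t ∧ (t : EReal) < ζy ∨ True := fun t ht => Or.inr trivial
    have hdomx : ∀ t ∈ Set.Icc (0:ℝ) c, 0 ≤ t ∧ (t : EReal) < ζx := by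
      intro t ht
      refine ⟨ht.1, lt_of_le_of_lt ?_ hlt⟩
      rw [← hcy]
      exact EReal.coe_le_coe_iff.2 ht.2
    have hgxc : ContinuousOn (fun t => gx t - ξ t) (Set.Icc 0 c) :=
      (hLx.cont.mono fun t ht => hdomx t ht).sub (hc.mono fun t ht => ht.1)
    obtain ⟨t₀, ht₀, hmin⟩ := isCompact_Icc.exists_isMinOn (Set.nonempty_Icc.2 hc0.le) hgxc
    rw [isMinOn_iff] at hmin
    set m := gx t₀ - ξ t₀ with hmdef
    have hm : 0 < m := sub_pos.2 (hLx.gt t₀ (hdomx t₀ ht₀).1 (hdomx t₀ ht₀).2)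
    have hIoo : Set.Ioo (0:ℝ) c ∈ nhdsWithin c (Set.Iio c) := Ioo_mem_nhdsLT hc0
    have hty : ∀ t : ℝ, t < c → (t : EReal) < ζy := by
      intro t ht
      rw [← hcy]
      exact_mod_cast ht
    have hev : ∀ᶠ t in nhdsWithin c (Set.Iio c), m ≤ gy t - ξ t := by
      filter_upwards [hIoo] with t ht
      have htx : (t : EReal) < ζx := (hty t ht.2).trans hlt
      have hk := (key t ht.1.le htx (hty t ht.2)).1
      have hmle : m ≤ gx t - ξ t := hmin t ⟨ht.1.le, ht.2.le⟩
      linarith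
    have hcob : IsCoboundedUnder (· ≥ ·) (nhdsWithin c (Set.Iio c)) (fun t => gy t - ξ t) := by
      by_cases hcb : ∀ᶠ t in nhdsWithin c (Set.Iio c), 1 ≤ gy t - ξ t
      · obtain ⟨a, ha, hsub⟩ :=
          (mem_nhdsLT_iff_exists_Ioo_subset' hc0).1 (hcb.and hIoo)
        set t₁ := (max a 0 + c) / 2 with ht₁def
        have hmax : max a 0 < c := max_lt ha hc0
        have ht₁1 : max a 0 < t₁ := by rw [ht₁def]; linarith
        have ht₁2 : t₁ < c := by rw [ht₁def]; linarith
        have ht₁0 : 0 < t₁ := lt_of_le_of_lt (le_max_right a 0) ht₁1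
        have ht₁a : a < t₁ := lt_of_le_of_lt (le_max_left a 0) ht₁1
        obtain ⟨s₀, hs₀, hξmin⟩ := isCompact_Icc.exists_isMinOn (Set.nonempty_Icc.2 hc0.le)
          (hc.mono (fun t (ht : t ∈ Set.Icc (0:ℝ) c) => ht.1))
        rw [isMinOn_iff] at hξmin
        apply Filter.isCoboundedUnder_ge_of_eventually_le (nhdsWithin c (Set.Iio c)) (x := gy t₁ + 2 * c - ξ s₀)
        filter_upwards [Ioo_mem_nhdsLT ht₁2] with t ht
        -- ht : t ∈ Ioo t₁ c
        have hdomyt : ∀ s ∈ Set.Icc (0:ℝ) t, 0 ≤ s ∧ (s : EReal) < ζy := by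
          intro s hs
          exact ⟨hs.1, hty s (lt_of_le_of_lt hs.2 ht.2)⟩
        have hgyc : ContinuousOn gy (Set.Icc 0 t) := hLy.cont.mono fun s hs => hdomyt s hs
        have hξct : ContinuousOn ξ (Set.Icc 0 t) := hc.mono fun s hs => hs.1
        have hay : ∀ s ∈ Set.Icc (0:ℝ) t, 0 < gy s - ξ s := fun s hs =>
          sub_pos.2 (hLy.gt s (hdomyt s hs).1 (hdomyt s hs).2)
        have hFyc : ContinuousOn (fun s => 2 / (gy s - ξ s)) (Set.Icc 0 t) :=
          continuousOn_const.div (hgyc.sub hξct) fun s hs => (hay s hs).ne'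
        have ht0 : (0:ℝ) ≤ t := (ht₁0.trans ht.1).le
        have hint1 : IntervalIntegrable (fun s => 2 / (gy s - ξ s)) volume 0 t := by
          apply ContinuousOn.intervalIntegrable
          rwa [Set.uIcc_of_le ht0]
        have hint2 : IntervalIntegrable (fun s => 2 / (gy s - ξ s)) volume 0 t₁ := by
          apply ContinuousOn.intervalIntegrable
          rw [Set.uIcc_of_le ht₁0.le]
          exact hFyc.mono (Set.Icc_subset_Icc_right ht.1.le)
        have hint3 : IntervalIntegrable (fun s => 2 / (gy s - ξ s)) volume t₁ t := by
          apply ContinuousOn.intervalIntegrable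
          rw [Set.uIcc_of_le ht.1.le]
          exact hFyc.mono (Set.Icc_subset_Icc_left ht₁0.le)
        have hsplit : gy t - gy t₁ = ∫ s in t₁..t, 2 / (gy s - ξ s) := by
          rw [hLy.ode t ht0 (hty t ht.2), hLy.ode t₁ ht₁0.le (hty t₁ ht₁2)]
          rw [show y + (∫ s in (0:ℝ)..t, 2 / (gy s - ξ s))
              - (y + ∫ s in (0:ℝ)..t₁, 2 / (gy s - ξ s))
            = (∫ s in (0:ℝ)..t, 2 / (gy s - ξ s))
              - ∫ s in (0:ℝ)..t₁, 2 / (gy s - ξ s) by ring]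
          exact intervalIntegral.integral_interval_sub_left hint1 hint2
        have hmono : (∫ s in t₁..t, 2 / (gy s - ξ s)) ≤ ∫ s in t₁..t, (2:ℝ) := by
          apply intervalIntegral.integral_mono_on ht.1.le hint3 intervalIntegrable_const
          intro s hs
          have hsS : 1 ≤ gy s - ξ s :=
            (hsub ⟨ht₁a.trans_le hs.1, lt_of_le_of_lt hs.2 ht.2⟩).1
          rw [div_le_iff₀ (by linarith)]
          linarith
        have hconst2 : (∫ s in t₁..t, (2:ℝ)) = 2 * (t - t₁) := by
          simp [intervalIntegral.integral_const]
          ring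
        have hξt : ξ s₀ ≤ ξ t := hξmin t ⟨ht0, ht.2.le⟩
        have : gy t ≤ gy t₁ + 2 * (t - t₁) := by
          rw [← hconst2]
          linarith [hsplit, hmono]
        have htc : t - t₁ ≤ c := by linarith [ht.2, ht₁0]
        show gy t - ξ t ≤ gy t₁ + 2 * c - ξ s₀
        nlinarith
      · rw [Filter.not_eventually] at hcb
        apply Filter.IsCoboundedUnder.of_frequently_le (a := 1)
        exact hcb.mono fun t ht => (not_le.1 ht).le
    have hliminf := hLy.maximal hne
    have hfin := Filter.le_liminf_of_le hcob hev
    rw [hliminf] at hfin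
    linarith
  exact ⟨h1, fun t ht0 htx => key t ht0 htx (lt_of_lt_of_le htx h1)⟩
end

section
/- Let ξ : [0,∞) → ℝ be continuous, let x > ξ_0 and let t < ζ_x. Then lim_{y↓x} (g_t(y) − g_t(x))/(y − x) = exp( −2 ∫₀ᵗ (g_s(x) − ξ_s)^{−2} ds ); that is, the Loewner flow map y ↦ g_t(y) is right-differentiable at x with derivative exp(−2 ∫₀ᵗ (g_s(x) − ξ_s)^{−2} ds). (Note that for y > x the trajectory g(y) is defined at least up to time ζ_x, so the difference quotient makes sense for all y > x.) -/
open MeasureTheory Filter Set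

/-- FTC helper: right derivative of a primitive of a function continuous on `[0, r]`. -/
private lemma ftc_right {f : ℝ → ℝ} {r : ℝ} (hf : ContinuousOn f (Icc 0 r))
    {b : ℝ} (hb : b ∈ Ico 0 r) :
    HasDerivWithinAt (fun u => ∫ s in (0:ℝ)..u, f s) (f b) (Ici b) b := by
  have hmem : Icc (0:ℝ) r ∈ nhdsWithin b (Ici b) := by
    have h1 : Iic r ∈ nhdsWithin b (Ici b) :=
      mem_nhdsWithin_of_mem_nhds (Iic_mem_nhds hb.2)
    filter_upwards [h1, self_mem_nhdsWithin] with u h1 h2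
    exact ⟨le_trans hb.1 h2, h1⟩
  have hmem' : Icc (0:ℝ) r ∈ nhdsWithin b (Ioi b) :=
    nhdsWithin_mono b Ioi_subset_Ici_self hmem
  refine intervalIntegral.integral_hasDerivWithinAt_right (t := Ioi b) ?_ ?_ ?_
  · exact (hf.mono (by rw [uIcc_of_le hb.1]; exact Icc_subset_Icc le_rfl hb.2.le)).intervalIntegrable
  · exact ⟨Icc 0 r, hmem', hf.aestronglyMeasurable measurableSet_Icc⟩
  · exact (hf b ⟨hb.1, hb.2.le⟩).mono_of_mem_nhdsWithin hmem'

/-- Key identity: if two Loewner solutions (started at `x` and `y`) stay above the driver on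
`[0, r]`, then their difference is `(y - x) * exp(-∫ a)`. -/
private lemma key_identity (ξ g gy : ℝ → ℝ) (x y r : ℝ) (hr : 0 ≤ r)
    (hξc : ContinuousOn ξ (Icc 0 r))
    (hgc : ContinuousOn g (Icc 0 r)) (hgyc : ContinuousOn gy (Icc 0 r))
    (hgt : ∀ s ∈ Icc (0:ℝ) r, ξ s < g s) (hgyt : ∀ s ∈ Icc (0:ℝ) r, ξ s < gy s)
    (hode : ∀ s ∈ Icc (0:ℝ) r, g s = x + ∫ u in (0:ℝ)..s, 2 / (g u - ξ u))
    (hodey : ∀ s ∈ Icc (0:ℝ) r, gy s = y + ∫ u in (0:ℝ)..s, 2 / (gy u - ξ u)) :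
    ∀ s ∈ Icc (0:ℝ) r, gy s - g s =
      (y - x) * Real.exp (-∫ u in (0:ℝ)..s, 2 / ((gy u - ξ u) * (g u - ξ u))) := by
  set a : ℝ → ℝ := fun u => 2 / ((gy u - ξ u) * (g u - ξ u)) with ha_def
  set A : ℝ → ℝ := fun s => ∫ u in (0:ℝ)..s, a u with hA_def
  have hqne : ∀ u ∈ Icc (0:ℝ) r, g u - ξ u ≠ 0 := fun u hu => sub_ne_zero.2 (hgt u hu).ne'
  have hpne : ∀ u ∈ Icc (0:ℝ) r, gy u - ξ u ≠ 0 := fun u hu => sub_ne_zero.2 (hgyt u hu).ne'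
  have hac : ContinuousOn a (Icc 0 r) :=
    continuousOn_const.div ((hgyc.sub hξc).mul (hgc.sub hξc))
      (fun u hu => mul_ne_zero (hpne u hu) (hqne u hu))
  have hfc : ContinuousOn (fun u => 2 / (g u - ξ u)) (Icc 0 r) :=
    continuousOn_const.div (hgc.sub hξc) hqne
  have hfyc : ContinuousOn (fun u => 2 / (gy u - ξ u)) (Icc 0 r) :=
    continuousOn_const.div (hgyc.sub hξc) hpne
  have hAc : ContinuousOn A (Icc 0 r) := by
    have := intervalIntegral.continuousOn_primitive_interval
      (f := a) (μ := volume) (a := 0) (b := r)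
      (by rw [uIcc_of_le hr]; exact hac.integrableOn_Icc)
    rwa [uIcc_of_le hr] at this
  set F : ℝ → ℝ := fun s => (gy s - g s) * Real.exp (A s) with hF_def
  have hFc : ContinuousOn F (Icc 0 r) :=
    (hgyc.sub hgc).mul (Real.continuous_exp.comp_continuousOn hAc)
  have hF' : ∀ b ∈ Ico (0:ℝ) r, HasDerivWithinAt F 0 (Ici b) b := by
    intro b hb
    have hbmem : b ∈ Icc (0:ℝ) r := ⟨hb.1, hb.2.le⟩
    have hmem : Icc (0:ℝ) r ∈ nhdsWithin b (Ici b) := by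
      have h1 : Iic r ∈ nhdsWithin b (Ici b) :=
        mem_nhdsWithin_of_mem_nhds (Iic_mem_nhds hb.2)
      filter_upwards [h1, self_mem_nhdsWithin] with u h1 h2
      exact ⟨le_trans hb.1 h2, h1⟩
    have hg' : HasDerivWithinAt g (2 / (g b - ξ b)) (Ici b) b := by
      refine HasDerivWithinAt.congr_of_eventuallyEq
        ((ftc_right hfc hb).const_add x) ?_ (hode b hbmem)
      exact eventuallyEq_of_mem hmem (fun u hu => hode u hu)
    have hgy' : HasDerivWithinAt gy (2 / (gy b - ξ b)) (Ici b) b := by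
      refine HasDerivWithinAt.congr_of_eventuallyEq
        ((ftc_right hfyc hb).const_add y) ?_ (hodey b hbmem)
      exact eventuallyEq_of_mem hmem (fun u hu => hodey u hu)
    have hA' : HasDerivWithinAt A (a b) (Ici b) b := ftc_right hac hb
    have hE : HasDerivWithinAt (fun u => Real.exp (A u)) (Real.exp (A b) * a b) (Ici b) b :=
      hA'.exp
    have hcomb := (hgy'.sub hg').mul hE
    convert hcomb using 1
    have hp0 := hpne b hbmem
    have hq0 := hqne b hbmem
    show (0:ℝ) = (2 / (gy b - ξ b) - 2 / (g b - ξ b)) * Real.exp (A b) +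
      (gy b - g b) * (Real.exp (A b) * a b)
    rw [ha_def]
    field_simp
    rw [div_sub_div _ _ (hpne b hbmem) (hqne b hbmem), ← add_div]
    ring
    all_goals rfl
  have hFconst := constant_of_has_deriv_right_zero hFc hF'
  have hg0 : g 0 = x := by
    have := hode 0 ⟨le_rfl, hr⟩; rwa [intervalIntegral.integral_same, add_zero] at this
  have hgy0 : gy 0 = y := by
    have := hodey 0 ⟨le_rfl, hr⟩; rwa [intervalIntegral.integral_same, add_zero] at this
  have hF0 : F 0 = y - x := by
    simp [hF_def, hA_def, intervalIntegral.integral_same, hg0, hgy0]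
  intro s hs
  have hFs : (gy s - g s) * Real.exp (A s) = y - x := by
    have := hFconst s hs; rw [hF0] at this; exact this
  rw [Real.exp_neg, eq_comm, mul_inv_eq_iff_eq_mul₀ (Real.exp_ne_zero _)]
  exact hFs.symm

set_option maxHeartbeats 1000000 in
/-- Right-differentiability of the Loewner flow: for `x > ξ_0` and `t < ζ_x`,
`(g_t(y) − g_t(x))/(y − x) → exp(−2 ∫₀ᵗ (g_s(x) − ξ_s)⁻² ds)` as `y ↓ x`. -/
theorem stmt4
    (ξ : ℝ → ℝ) (hc : ContinuousOn ξ (Set.Ici 0))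
    (x : ℝ) (hx : ξ 0 < x)
    (ζ : EReal) (g : ℝ → ℝ) (hL : IsLoewnerTraj ξ x ζ g)
    (ζ' : ℝ → EReal) (g' : ℝ → ℝ → ℝ)
    (hL' : ∀ y : ℝ, x < y → IsLoewnerTraj ξ y (ζ' y) (g' y)) :
    ∀ t : ℝ, 0 ≤ t → (t : EReal) < ζ →
      Filter.Tendsto (fun y => (g' y t - g t) / (y - x))
        (nhdsWithin x (Set.Ioi x))
        (nhds (Real.exp (-2 * ∫ s in (0:ℝ)..t, ((g s - ξ s) ^ 2)⁻¹))) := by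
  intro t ht htζ
  have hsub : Icc (0:ℝ) t ⊆ {s : ℝ | 0 ≤ s ∧ (s : EReal) < ζ} := fun s hs =>
    ⟨hs.1, lt_of_le_of_lt (EReal.coe_le_coe_iff.2 hs.2) htζ⟩
  have hgc : ContinuousOn g (Icc 0 t) := hL.cont.mono hsub
  have hξc : ContinuousOn ξ (Icc 0 t) := hc.mono (fun s hs => hs.1)
  have hgt : ∀ s ∈ Icc (0:ℝ) t, ξ s < g s := fun s hs => hL.gt s hs.1 (hsub hs).2
  have hode : ∀ s ∈ Icc (0:ℝ) t, g s = x + ∫ u in (0:ℝ)..s, 2 / (g u - ξ u) :=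
    fun s hs => hL.ode s hs.1 (hsub hs).2
  -- minimum of g - ξ on [0, t]
  obtain ⟨m, hm, hmle⟩ : ∃ m > 0, ∀ s ∈ Icc (0:ℝ) t, m ≤ g s - ξ s := by
    obtain ⟨s₀, hs₀, hmin⟩ :=
      isCompact_Icc.exists_isMinOn (nonempty_Icc.2 ht) (hgc.sub hξc)
    exact ⟨g s₀ - ξ s₀, sub_pos.2 (hgt s₀ hs₀), fun s hs => hmin hs⟩
  -- maximum of g - ξ on [0, t]
  obtain ⟨M, hMle⟩ : ∃ M, ∀ s ∈ Icc (0:ℝ) t, g s - ξ s ≤ M := by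
    obtain ⟨s₀, hs₀, hmax⟩ :=
      isCompact_Icc.exists_isMaxOn (nonempty_Icc.2 ht) (hgc.sub hξc)
    exact ⟨g s₀ - ξ s₀, fun s hs => hmax hs⟩
  -- the trajectory of any y > x is defined beyond t
  have hdom : ∀ y, x < y → (t : EReal) < ζ' y := by
    intro y hy
    by_contra hcon
    push_neg at hcon
    have hLy := hL' y hy
    have hnetop : ζ' y ≠ ⊤ := ne_top_of_le_ne_top (EReal.coe_ne_top t) hcon
    have hnebot : ζ' y ≠ ⊥ := hLy.pos.ne_bot
    have hcoe : (((ζ' y).toReal : ℝ) : EReal) = ζ' y := EReal.coe_toReal hnetop hnebot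
    set r := (ζ' y).toReal with hrdef
    have hr0 : 0 < r := by
      have h0 := hLy.pos; rw [← hcoe] at h0; exact_mod_cast h0
    have hrt : r ≤ t := by rw [← hcoe] at hcon; exact_mod_cast hcon
    have hev : ∀ u ∈ Ioo (0:ℝ) r, m ≤ g' y u - ξ u ∧ g' y u - ξ u ≤ M + (y - x) := by
      intro u hu
      have huζy : (u : EReal) < ζ' y := by rw [← hcoe]; exact_mod_cast hu.2
      have hsuby : Icc (0:ℝ) u ⊆ {s : ℝ | 0 ≤ s ∧ (s : EReal) < ζ' y} := fun s hs =>
        ⟨hs.1, lt_of_le_of_lt (EReal.coe_le_coe_iff.2 hs.2) huζy⟩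
      have hut : Icc (0:ℝ) u ⊆ Icc 0 t := Icc_subset_Icc le_rfl (hu.2.le.trans hrt)
      have humem : u ∈ Icc (0:ℝ) u := right_mem_Icc.2 hu.1.le
      have hkey := key_identity ξ g (g' y) x y u hu.1.le (hξc.mono hut) (hgc.mono hut)
        (hLy.cont.mono hsuby) (fun s hs => hgt s (hut hs))
        (fun s hs => hLy.gt s hs.1 (hsuby hs).2)
        (fun s hs => hode s (hut hs)) (fun s hs => hLy.ode s hs.1 (hsuby hs).2)
        u humem
      have hApos : (0:ℝ) ≤ ∫ v in (0:ℝ)..u, 2 / ((g' y v - ξ v) * (g v - ξ v)) := by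
        apply intervalIntegral.integral_nonneg hu.1.le
        intro v hv
        have h1 : 0 < g' y v - ξ v := sub_pos.2 (hLy.gt v hv.1 (hsuby hv).2)
        have h2 : 0 < g v - ξ v := sub_pos.2 (hgt v (hut hv))
        positivity
      have hexple : Real.exp (-∫ v in (0:ℝ)..u, 2 / ((g' y v - ξ v) * (g v - ξ v))) ≤ 1 :=
        Real.exp_le_one_iff.2 (neg_nonpos.2 hApos)
      have hexppos : 0 < Real.exp (-∫ v in (0:ℝ)..u, 2 / ((g' y v - ξ v) * (g v - ξ v))) :=
        Real.exp_pos _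
      have h1 : 0 < g' y u - g u := by
        rw [hkey]; exact mul_pos (sub_pos.2 hy) hexppos
      have h2 : g' y u - g u ≤ y - x := by
        rw [hkey]
        nlinarith
      have h3 := hmle u (hut humem)
      have h4 := hMle u (hut humem)
      constructor <;> linarith
    have hlim := hLy.maximal hnetop
    have hmemIoo : Ioo (0:ℝ) r ∈ nhdsWithin r (Iio r) :=
      Ioo_mem_nhdsLT_of_mem ⟨hr0, le_rfl⟩
    have hco : IsCoboundedUnder (· ≥ ·) (nhdsWithin r (Iio r)) (fun u => g' y u - ξ u) := by
      apply isCoboundedUnder_ge_of_eventually_le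
      filter_upwards [hmemIoo] with u hu
      exact (hev u hu).2
    have hgelim : m ≤ liminf (fun u => g' y u - ξ u) (nhdsWithin r (Iio r)) := by
      apply Filter.le_liminf_of_le hco
      filter_upwards [hmemIoo] with u hu
      exact (hev u hu).1
    rw [hlim] at hgelim
    linarith
  -- the key identity at time t
  have hkeyt : ∀ y, x < y → ∀ s ∈ Icc (0:ℝ) t, g' y s - g s =
      (y - x) * Real.exp (-∫ u in (0:ℝ)..s, 2 / ((g' y u - ξ u) * (g u - ξ u))) := by
    intro y hy
    have hLy := hL' y hy
    have hsuby : Icc (0:ℝ) t ⊆ {s : ℝ | 0 ≤ s ∧ (s : EReal) < ζ' y} := fun s hs =>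
      ⟨hs.1, lt_of_le_of_lt (EReal.coe_le_coe_iff.2 hs.2) (hdom y hy)⟩
    exact key_identity ξ g (g' y) x y t ht hξc hgc (hLy.cont.mono hsuby)
      hgt (fun s hs => hLy.gt s hs.1 (hsuby hs).2) hode
      (fun s hs => hLy.ode s hs.1 (hsuby hs).2)
  set c : ℝ := ∫ u in (0:ℝ)..t, 2 / ((g u - ξ u) * (g u - ξ u)) with hc_def
  -- the target exponent equals -c
  have hc2 : -2 * ∫ s in (0:ℝ)..t, ((g s - ξ s) ^ 2)⁻¹ = -c := by
    rw [hc_def]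
    have : (fun u => 2 / ((g u - ξ u) * (g u - ξ u))) =
        fun u => 2 * ((g u - ξ u) ^ 2)⁻¹ := by
      funext u; rw [sq, div_eq_mul_inv]
    rw [this, intervalIntegral.integral_const_mul]
    ring
  -- convergence of the exponents
  have htendA : Tendsto (fun y => ∫ u in (0:ℝ)..t, 2 / ((g' y u - ξ u) * (g u - ξ u)))
      (nhdsWithin x (Ioi x)) (nhds c) := by
    have hbound : ∀ y ∈ Ioi x,
        ‖(∫ u in (0:ℝ)..t, 2 / ((g' y u - ξ u) * (g u - ξ u))) - c‖ ≤
          2 * (y - x) / (m * (m * m)) * t := by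
      intro y hy
      have hy' : x < y := hy
      have hLy := hL' y hy'
      have hsuby : Icc (0:ℝ) t ⊆ {s : ℝ | 0 ≤ s ∧ (s : EReal) < ζ' y} := fun s hs =>
        ⟨hs.1, lt_of_le_of_lt (EReal.coe_le_coe_iff.2 hs.2) (hdom y hy')⟩
      have hgyc : ContinuousOn (g' y) (Icc 0 t) := hLy.cont.mono hsuby
      have hgyt : ∀ s ∈ Icc (0:ℝ) t, ξ s < g' y s := fun s hs => hLy.gt s hs.1 (hsuby hs).2
      have hIay : IntervalIntegrable (fun u => 2 / ((g' y u - ξ u) * (g u - ξ u))) volume 0 t := by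
        apply ContinuousOn.intervalIntegrable
        rw [uIcc_of_le ht]
        exact continuousOn_const.div ((hgyc.sub hξc).mul (hgc.sub hξc))
          (fun u hu => mul_ne_zero (sub_ne_zero.2 (hgyt u hu).ne') (sub_ne_zero.2 (hgt u hu).ne'))
      have hIa : IntervalIntegrable (fun u => 2 / ((g u - ξ u) * (g u - ξ u))) volume 0 t := by
        apply ContinuousOn.intervalIntegrable
        rw [uIcc_of_le ht]
        exact continuousOn_const.div ((hgc.sub hξc).mul (hgc.sub hξc))
          (fun u hu => mul_ne_zero (sub_ne_zero.2 (hgt u hu).ne') (sub_ne_zero.2 (hgt u hu).ne'))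
      rw [hc_def, ← intervalIntegral.integral_sub hIay hIa]
      have hptwise : ∀ u ∈ Set.uIoc (0:ℝ) t,
          ‖2 / ((g' y u - ξ u) * (g u - ξ u)) - 2 / ((g u - ξ u) * (g u - ξ u))‖ ≤
            2 * (y - x) / (m * (m * m)) := by
        intro u hu
        have humem : u ∈ Icc (0:ℝ) t := by
          rw [uIoc_of_le ht] at hu; exact ⟨hu.1.le, hu.2⟩
        set Q : ℝ := g u - ξ u with hQ
        set P : ℝ := g' y u - ξ u with hP
        have hQm : m ≤ Q := hmle u humem
        have hQ0 : 0 < Q := lt_of_lt_of_le hm hQm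
        have hkeyu := hkeyt y hy' u humem
        have hApos : (0:ℝ) ≤ ∫ v in (0:ℝ)..u, 2 / ((g' y v - ξ v) * (g v - ξ v)) := by
          apply intervalIntegral.integral_nonneg humem.1
          intro v hv
          have hvt : v ∈ Icc (0:ℝ) t := ⟨hv.1, hv.2.trans humem.2⟩
          have h1 : 0 < g' y v - ξ v := sub_pos.2 (hgyt v hvt)
          have h2 : 0 < g v - ξ v := sub_pos.2 (hgt v hvt)
          positivity
        have hexple : Real.exp (-∫ v in (0:ℝ)..u, 2 / ((g' y v - ξ v) * (g v - ξ v))) ≤ 1 :=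
          Real.exp_le_one_iff.2 (neg_nonpos.2 hApos)
        have hexppos : 0 < Real.exp (-∫ v in (0:ℝ)..u, 2 / ((g' y v - ξ v) * (g v - ξ v))) :=
          Real.exp_pos _
        have hH0 : 0 < g' y u - g u := by
          rw [hkeyu]; exact mul_pos (sub_pos.2 hy') hexppos
        have hHle : g' y u - g u ≤ y - x := by rw [hkeyu]; nlinarith
        have hPQ : P = Q + (g' y u - g u) := by rw [hP, hQ]; ring
        have hP0 : 0 < P := by rw [hPQ]; linarith
        have hPm : m ≤ P := by rw [hPQ]; linarith
        have heq : 2 / (P * Q) - 2 / (Q * Q) =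
            -(2 * (g' y u - g u) / (P * (Q * Q))) := by
          rw [hPQ]
          field_simp
          ring
        rw [heq, norm_neg, Real.norm_eq_abs, abs_of_nonneg (by positivity)]
        have hyx0 : (0:ℝ) ≤ y - x := sub_nonneg.2 hy'.le
        apply div_le_div₀ (by linarith) (by linarith) (by positivity)
        have h1 : m * m ≤ Q * Q := mul_le_mul hQm hQm hm.le hQ0.le
        calc m * (m * m) ≤ m * (Q * Q) := by
              apply mul_le_mul_of_nonneg_left h1 hm.le
          _ ≤ P * (Q * Q) := by
              apply mul_le_mul_of_nonneg_right hPm (by positivity)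
      calc ‖∫ u in (0:ℝ)..t, (2 / ((g' y u - ξ u) * (g u - ξ u)) -
              2 / ((g u - ξ u) * (g u - ξ u)))‖ ≤
            2 * (y - x) / (m * (m * m)) * |t - 0| :=
          intervalIntegral.norm_integral_le_of_norm_le_const hptwise
        _ = 2 * (y - x) / (m * (m * m)) * t := by
            rw [sub_zero, abs_of_nonneg ht]
    have h0 : Tendsto (fun y => 2 * (y - x) / (m * (m * m)) * t)
        (nhdsWithin x (Ioi x)) (nhds 0) := by
      have hcont : Continuous (fun y : ℝ => 2 * (y - x) / (m * (m * m)) * t) := by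
        continuity
      have h1 : Tendsto (fun y : ℝ => 2 * (y - x) / (m * (m * m)) * t)
          (nhdsWithin x (Ioi x)) (nhds (2 * (x - x) / (m * (m * m)) * t)) :=
        (hcont.tendsto x).mono_left nhdsWithin_le_nhds
      simpa using h1
    have hdiff : Tendsto
        (fun y => (∫ u in (0:ℝ)..t, 2 / ((g' y u - ξ u) * (g u - ξ u))) - c)
        (nhdsWithin x (Ioi x)) (nhds 0) := by
      apply squeeze_zero_norm' _ h0
      filter_upwards [self_mem_nhdsWithin] with y hy
      exact hbound y hy
    have h2 := hdiff.add_const c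
    rw [zero_add] at h2
    exact h2.congr (fun y => by ring)
  -- conclude
  have hexp : Tendsto
      (fun y => Real.exp (-∫ u in (0:ℝ)..t, 2 / ((g' y u - ξ u) * (g u - ξ u))))
      (nhdsWithin x (Ioi x)) (nhds (Real.exp (-c))) :=
    (Real.continuous_exp.tendsto _).comp htendA.neg
  rw [hc2]
  apply hexp.congr'
  filter_upwards [self_mem_nhdsWithin] with y hy
  have hyx : y - x ≠ 0 := sub_ne_zero.2 (ne_of_gt hy)
  rw [hkeyt y hy t (right_mem_Icc.2 ht), mul_div_cancel_left₀ _ hyx]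
end

section
/- Let T > 0, δ > 0, let ξ, ξ̃ : [0,∞) → ℝ be continuous, and let x be a real number with x > ξ_0 and x > ξ̃_0. Let g(x) and g̃(x) be the Loewner trajectories of x driven by ξ and ξ̃ respectively, and assume that their swallowing times exceed T and that g_t(x) − ξ_t ≥ δ and g̃_t(x) − ξ̃_t ≥ δ for all t ∈ [0,T]. Then sup_{t∈[0,T]} |(g_t(x) − ξ_t) − (g̃_t(x) − ξ̃_t)| ≤ ( sup_{t∈[0,T]} |ξ_t − ξ̃_t| ) · e^{4T/δ²}. -/
open MeasureTheory Filter Set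

/-- Grönwall-type stability of Loewner trajectories: if both trajectories stay at distance
at least `δ` above their driving functions on `[0,T]`, then
`sup_{[0,T]} |(g_t(x) − ξ_t) − (g̃_t(x) − ξ̃_t)| ≤ sup_{[0,T]} |ξ_t − ξ̃_t| · e^{4T/δ²}`. -/
theorem stmt5
    (T δ : ℝ) (hT : 0 < T) (hδ : 0 < δ)
    (ξ ξ' : ℝ → ℝ) (hc : ContinuousOn ξ (Set.Ici 0)) (hc' : ContinuousOn ξ' (Set.Ici 0))
    (x : ℝ) (hx : ξ 0 < x) (hx' : ξ' 0 < x)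
    (ζ ζ' : EReal) (g g' : ℝ → ℝ)
    (hL : IsLoewnerTraj ξ x ζ g) (hL' : IsLoewnerTraj ξ' x ζ' g')
    (hζ : (T : EReal) < ζ) (hζ' : (T : EReal) < ζ')
    (hlow : ∀ t ∈ Set.Icc 0 T, δ ≤ g t - ξ t)
    (hlow' : ∀ t ∈ Set.Icc 0 T, δ ≤ g' t - ξ' t) :
    ∀ t ∈ Set.Icc 0 T,
      |(g t - ξ t) - (g' t - ξ' t)|
        ≤ sSup ((fun s => |ξ s - ξ' s|) '' Set.Icc 0 T) * Real.exp (4 * T / δ ^ 2) := by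
  set M := sSup ((fun s => |ξ s - ξ' s|) '' Set.Icc 0 T) with hMdef
  set K := 2 / δ ^ 2 with hKdef
  have hδ2 : (0:ℝ) < δ ^ 2 := by positivity
  have hKpos : 0 < K := by positivity
  -- M bounds
  have hdiffcont : ContinuousOn (fun s => |ξ s - ξ' s|) (Set.Icc 0 T) :=
    ((hc.mono (Set.Icc_subset_Ici_self)).sub (hc'.mono (Set.Icc_subset_Ici_self))).abs
  have hbdd : BddAbove ((fun s => |ξ s - ξ' s|) '' Set.Icc 0 T) :=
    (isCompact_Icc.image_of_continuousOn hdiffcont).bddAbove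
  have hMle : ∀ t ∈ Set.Icc (0:ℝ) T, |ξ t - ξ' t| ≤ M := fun t ht =>
    le_csSup hbdd (Set.mem_image_of_mem _ ht)
  have hM0 : 0 ≤ M := le_trans (abs_nonneg _) (hMle 0 ⟨le_refl 0, hT.le⟩)
  -- clamp
  set p : ℝ → ℝ := fun s => max 0 (min s T) with hpdef
  have hpmem : ∀ s, p s ∈ Set.Icc 0 T := fun s =>
    ⟨le_max_left _ _, max_le hT.le (min_le_right _ _)⟩
  have hpid : ∀ s ∈ Set.Icc (0:ℝ) T, p s = s := by
    intro s hs
    simp [hpdef, min_eq_left hs.2, max_eq_right hs.1]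
  have hpcont : Continuous p := continuous_const.max (continuous_id.min continuous_const)
  -- membership in domain
  have hsub : Set.Icc (0:ℝ) T ⊆ {t : ℝ | 0 ≤ t ∧ (t : EReal) < ζ} := by
    intro t ht
    exact ⟨ht.1, lt_of_le_of_lt (EReal.coe_le_coe_iff.2 ht.2) hζ⟩
  have hsub' : Set.Icc (0:ℝ) T ⊆ {t : ℝ | 0 ≤ t ∧ (t : EReal) < ζ'} := by
    intro t ht
    exact ⟨ht.1, lt_of_le_of_lt (EReal.coe_le_coe_iff.2 ht.2) hζ'⟩
  have hgcont : ContinuousOn g (Set.Icc 0 T) := hL.cont.mono hsub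
  have hgcont' : ContinuousOn g' (Set.Icc 0 T) := hL'.cont.mono hsub'
  -- the clamped gap functions
  set A : ℝ → ℝ := fun s => g (p s) - ξ (p s) with hAdef
  set B : ℝ → ℝ := fun s => g' (p s) - ξ' (p s) with hBdef
  have hAcont : Continuous A :=
    (hgcont.comp_continuous hpcont hpmem).sub
      ((hc.mono Set.Icc_subset_Ici_self).comp_continuous hpcont hpmem)
  have hBcont : Continuous B :=
    (hgcont'.comp_continuous hpcont hpmem).sub
      ((hc'.mono Set.Icc_subset_Ici_self).comp_continuous hpcont hpmem)
  have hAδ : ∀ s, δ ≤ A s := fun s => hlow _ (hpmem s)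
  have hBδ : ∀ s, δ ≤ B s := fun s => hlow' _ (hpmem s)
  have hApos : ∀ s, 0 < A s := fun s => lt_of_lt_of_le hδ (hAδ s)
  have hBpos : ∀ s, 0 < B s := fun s => lt_of_lt_of_le hδ (hBδ s)
  set H : ℝ → ℝ := fun s => 2 / A s - 2 / B s with hHdef
  have hHcont : Continuous H :=
    ((continuous_const.div hAcont fun s => (hApos s).ne').sub
      (continuous_const.div hBcont fun s => (hBpos s).ne'))
  set F : ℝ → ℝ := fun t => ∫ s in (0:ℝ)..t, H s with hFdef
  have hFderiv : ∀ t : ℝ, HasDerivAt F (H t) t := fun t =>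
    (hHcont.integral_hasStrictDerivAt 0 t).hasDerivAt
  have hFcont : Continuous F := by
    rw [continuous_iff_continuousAt]
    exact fun t => (hFderiv t).continuousAt
  -- F = g - g' on [0,T]
  have hFeq : ∀ t ∈ Set.Icc (0:ℝ) T, F t = g t - g' t := by
    intro t ht
    have h1 := hL.ode t (hsub ht).1 (hsub ht).2
    have h2 := hL'.ode t (hsub' ht).1 (hsub' ht).2
    have huIcc : Set.uIcc (0:ℝ) t = Set.Icc 0 t := Set.uIcc_of_le ht.1
    have hIccsub : Set.Icc (0:ℝ) t ⊆ Set.Icc 0 T := Set.Icc_subset_Icc_right ht.2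
    have hcong1 : ∀ s ∈ Set.uIcc (0:ℝ) t, 2 / (g s - ξ s) = 2 / A s := by
      intro s hs
      rw [huIcc] at hs
      simp [hAdef, hpid s (hIccsub hs)]
    have hcong2 : ∀ s ∈ Set.uIcc (0:ℝ) t, 2 / (g' s - ξ' s) = 2 / B s := by
      intro s hs
      rw [huIcc] at hs
      simp [hBdef, hpid s (hIccsub hs)]
    have hI1 : IntervalIntegrable (fun s => 2 / A s) volume 0 t :=
      (continuous_const.div hAcont fun s => (hApos s).ne').intervalIntegrable _ _
    have hI2 : IntervalIntegrable (fun s => 2 / B s) volume 0 t :=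
      (continuous_const.div hBcont fun s => (hBpos s).ne').intervalIntegrable _ _
    calc F t = ∫ s in (0:ℝ)..t, (2 / A s - 2 / B s) := rfl
      _ = (∫ s in (0:ℝ)..t, 2 / A s) - ∫ s in (0:ℝ)..t, 2 / B s :=
          intervalIntegral.integral_sub hI1 hI2
      _ = (∫ s in (0:ℝ)..t, 2 / (g s - ξ s)) - ∫ s in (0:ℝ)..t, 2 / (g' s - ξ' s) := by
          rw [intervalIntegral.integral_congr hcong1, intervalIntegral.integral_congr hcong2]
      _ = g t - g' t := by rw [h1, h2]; ring
  -- the derivative bound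
  have hbound : ∀ t ∈ Set.Ico (0:ℝ) T, ‖H t‖ ≤ K * ‖F t‖ + K * M := by
    intro t ht
    have htIcc : t ∈ Set.Icc (0:ℝ) T := ⟨ht.1, ht.2.le⟩
    have hpt : p t = t := hpid t htIcc
    have hab : δ ^ 2 ≤ A t * B t := by
      have := mul_le_mul (hAδ t) (hBδ t) hδ.le (hApos t).le
      nlinarith
    have habpos : 0 < A t * B t := lt_of_lt_of_le hδ2 hab
    have hform : H t = 2 * (B t - A t) / (A t * B t) := by
      show 2 / A t - 2 / B t = 2 * (B t - A t) / (A t * B t)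
      rw [div_sub_div _ _ (hApos t).ne' (hBpos t).ne']
      ring
    have h1 : ‖H t‖ = 2 * |B t - A t| / (A t * B t) := by
      rw [hform, Real.norm_eq_abs, abs_div, abs_mul, abs_two, abs_of_pos habpos]
    have h2 : 2 * |B t - A t| / (A t * B t) ≤ 2 * |B t - A t| / δ ^ 2 :=
      div_le_div_of_nonneg_left (by positivity) hδ2 hab
    have h3 : |B t - A t| ≤ ‖F t‖ + M := by
      have : B t - A t = -(F t) + (ξ t - ξ' t) := by
        simp only [hAdef, hBdef]
        rw [hpt, hFeq t htIcc]; ring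
      rw [this]
      calc |(-(F t)) + (ξ t - ξ' t)| ≤ |(-(F t))| + |ξ t - ξ' t| := abs_add_le _ _
        _ ≤ ‖F t‖ + M := by
            rw [abs_neg, Real.norm_eq_abs]
            exact add_le_add_right (hMle t htIcc) _
    calc ‖H t‖ = 2 * |B t - A t| / δ ^ 2 * (δ ^ 2 / (A t * B t)) * 1 := by
          rw [h1]; field_simp
      _ ≤ 2 * |B t - A t| / δ ^ 2 := by
          rw [mul_one]
          calc 2 * |B t - A t| / δ ^ 2 * (δ ^ 2 / (A t * B t))
              ≤ 2 * |B t - A t| / δ ^ 2 * 1 := by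
                apply mul_le_mul_of_nonneg_left _ (by positivity)
                rw [div_le_one habpos]; exact hab
            _ = 2 * |B t - A t| / δ ^ 2 := mul_one _
      _ = K * |B t - A t| := by rw [hKdef]; ring
      _ ≤ K * (‖F t‖ + M) := mul_le_mul_of_nonneg_left h3 hKpos.le
      _ = K * ‖F t‖ + K * M := by ring
  -- Grönwall
  have hgron := norm_le_gronwallBound_of_norm_deriv_right_le (δ := 0) (K := K) (ε := K * M)
    (f := F) (f' := H) (a := 0) (b := T) (hFcont.continuousOn)
    (fun s _ => (hFderiv s).hasDerivWithinAt) (by simp [hFdef]) hbound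
  intro t ht
  have hFt : ‖F t‖ ≤ M * (Real.exp (K * t) - 1) := by
    have h := hgron t ht
    simp only [sub_zero, gronwallBound_of_K_ne_0 hKpos.ne', zero_mul, zero_add] at h
    rwa [mul_comm K M, mul_div_assoc, div_self hKpos.ne', mul_one] at h
  have hexp : Real.exp (K * t) ≤ Real.exp (4 * T / δ ^ 2) := by
    apply Real.exp_le_exp.2
    rw [hKdef]
    rw [div_mul_eq_mul_div, div_le_div_iff₀ hδ2 hδ2]
    nlinarith [ht.1, ht.2]
  have key : (g t - ξ t) - (g' t - ξ' t) = F t - (ξ t - ξ' t) := by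
    rw [hFeq t ht]; ring
  calc |(g t - ξ t) - (g' t - ξ' t)| = |F t - (ξ t - ξ' t)| := by rw [key]
    _ ≤ |F t| + |ξ t - ξ' t| := abs_sub _ _
    _ ≤ M * (Real.exp (K * t) - 1) + M := add_le_add hFt (hMle t ht)
    _ = M * Real.exp (K * t) := by ring
    _ ≤ M * Real.exp (4 * T / δ ^ 2) := mul_le_mul_of_nonneg_left hexp hM0
end

section
/- Let κ > 0 and ρ₋, ρ₊ > −2. Then for every twice continuously differentiable function f : ℝ → ℝ, ∫_{−1}^{1} [ ( −((ρ₊+2)/2)(y+1) − ((ρ₋+2)/2)(y−1) ) f'(y) + (κ/4)(1−y²) f''(y) ] · (1+y)^{2(ρ₋+2)/κ − 1} (1−y)^{2(ρ₊+2)/κ − 1} dy = 0. -/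
open MeasureTheory Set

/-- The Beta-type law with density proportional to `(1+y)^{2(ρ₋+2)/κ − 1}(1−y)^{2(ρ₊+2)/κ − 1}`
on `(−1,1)` is invariant (in weak form) for the diffusion with generator
`ℒf(y) = (−((ρ₊+2)/2)(y+1) − ((ρ₋+2)/2)(y−1)) f'(y) + (κ/4)(1−y²) f''(y)`. -/
theorem stmt9 (κ ρm ρp : ℝ) (hκ : 0 < κ) (hρm : -2 < ρm) (hρp : -2 < ρp)
    (f : ℝ → ℝ) (hf : ContDiff ℝ 2 f) :
    ∫ y in (-1:ℝ)..1,
      ((-((ρp + 2) / 2) * (y + 1) - (ρm + 2) / 2 * (y - 1)) * deriv f y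
          + κ / 4 * (1 - y ^ 2) * deriv (deriv f) y)
        * (1 + y) ^ (2 * (ρm + 2) / κ - 1) * (1 - y) ^ (2 * (ρp + 2) / κ - 1) = 0 := by
  set a : ℝ := 2 * (ρm + 2) / κ with ha_def
  set b : ℝ := 2 * (ρp + 2) / κ with hb_def
  have ha : 0 < a := div_pos (by linarith) hκ
  have hb : 0 < b := div_pos (by linarith) hκ
  -- regularity of f
  have hf' : Differentiable ℝ f := hf.differentiable (by norm_num)
  have hf2 : ContDiff ℝ 1 (deriv f) :=
    ((contDiff_succ_iff_deriv (n := 1)).mp (by exact_mod_cast hf)).2.2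
  have hf'' : Differentiable ℝ (deriv f) := hf2.differentiable one_ne_zero
  have hcf' : Continuous (deriv f) := hf2.continuous
  have hcf'' : Continuous (deriv (deriv f)) :=
    (contDiff_one_iff_deriv.mp hf2).2
  -- the antiderivative
  set g : ℝ → ℝ := fun y => κ / 4 * ((1 + y) ^ a * ((1 - y) ^ b * deriv f y)) with hg_def
  -- the integrand
  set G : ℝ → ℝ := fun y =>
      ((-((ρp + 2) / 2) * (y + 1) - (ρm + 2) / 2 * (y - 1)) * deriv f y
          + κ / 4 * (1 - y ^ 2) * deriv (deriv f) y)
        * (1 + y) ^ (a - 1) * (1 - y) ^ (b - 1) with hG_def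
  -- continuity of g
  have hcontp : Continuous (fun y : ℝ => (1 + y) ^ a) := by
    apply continuous_iff_continuousAt.mpr
    intro y
    exact (Real.continuousAt_rpow_const (1 + y) a (Or.inr ha.le)).comp
      (by fun_prop)
  have hcontm : Continuous (fun y : ℝ => (1 - y) ^ b) := by
    apply continuous_iff_continuousAt.mpr
    intro y
    exact (Real.continuousAt_rpow_const (1 - y) b (Or.inr hb.le)).comp
      (by fun_prop)
  have hgcont : Continuous g := by
    apply continuous_const.mul (hcontp.mul (hcontm.mul hcf'))
  -- derivative of g on the open interval
  have hderiv : ∀ x ∈ Ioo (-1 : ℝ) 1, HasDerivAt g (G x) x := by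
    intro x hx
    have h1 : (0:ℝ) < 1 + x := by linarith [hx.1]
    have h2 : (0:ℝ) < 1 - x := by linarith [hx.2]
    have hp : HasDerivAt (fun y : ℝ => (1 + y) ^ a) (1 * a * (1 + x) ^ (a - 1)) x := by
      exact (HasDerivAt.rpow_const ((hasDerivAt_id x).const_add 1) (Or.inl h1.ne'))
    have hm : HasDerivAt (fun y : ℝ => (1 - y) ^ b) ((-1) * b * (1 - x) ^ (b - 1)) x := by
      exact (HasDerivAt.rpow_const ((hasDerivAt_id x).neg.const_add 1) (Or.inl h2.ne'))
    have hD : HasDerivAt (deriv f) (deriv (deriv f) x) x := (hf'' x).hasDerivAt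
    have := ((hp.mul (hm.mul hD)).const_mul (κ / 4))
    refine this.congr_deriv ?_
    have e1 : (1 + x) ^ a = (1 + x) ^ (a - 1) * (1 + x) := by
      rw [← Real.rpow_add_one h1.ne' (a - 1)]; ring_nf
    have e2 : (1 - x) ^ b = (1 - x) ^ (b - 1) * (1 - x) := by
      rw [← Real.rpow_add_one h2.ne' (b - 1)]; ring_nf
    simp only [hG_def, Pi.mul_apply]
    rw [e1, e2, ha_def, hb_def]
    field_simp
    ring
  -- integrability of G
  have hC : Continuous (fun y : ℝ =>
      (-((ρp + 2) / 2) * (y + 1) - (ρm + 2) / 2 * (y - 1)) * deriv f y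
          + κ / 4 * (1 - y ^ 2) * deriv (deriv f) y) := by fun_prop
  have hint : IntervalIntegrable G volume (-1) 1 := by
    have base : IntervalIntegrable (fun x : ℝ => x ^ (a - 1)) volume 0 1 :=
      intervalIntegral.intervalIntegrable_rpow' (by linarith)
    have base2 : IntervalIntegrable (fun x : ℝ => x ^ (b - 1)) volume 0 1 :=
      intervalIntegral.intervalIntegrable_rpow' (by linarith)
    have i1 : IntervalIntegrable (fun y : ℝ => (1 + y) ^ (a - 1)) volume (-1) 0 := by
      have := base.comp_add_right 1
      simpa [add_comm] using this
    have i2 : IntervalIntegrable (fun y : ℝ => (1 - y) ^ (b - 1)) volume 0 1 := by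
      have := (base2.comp_sub_left 1).symm
      simpa using this
    have part1 : IntervalIntegrable G volume (-1) 0 := by
      have cg : ContinuousOn (fun y : ℝ =>
          ((-((ρp + 2) / 2) * (y + 1) - (ρm + 2) / 2 * (y - 1)) * deriv f y
          + κ / 4 * (1 - y ^ 2) * deriv (deriv f) y) * (1 - y) ^ (b - 1)) (uIcc (-1:ℝ) 0) := by
        apply hC.continuousOn.mul
        intro y hy
        rw [uIcc_of_le (by norm_num)] at hy
        have : (1:ℝ) - y ≠ 0 := by
          have := hy.2; intro h; nlinarith
        exact ((Real.continuousAt_rpow_const (1 - y) (b - 1) (Or.inl this)).comp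
          (by fun_prop)).continuousWithinAt
      have := i1.mul_continuousOn cg
      apply this.congr
      · intro y _
        simp only [hG_def]; ring
    have part2 : IntervalIntegrable G volume 0 1 := by
      have cg : ContinuousOn (fun y : ℝ =>
          ((-((ρp + 2) / 2) * (y + 1) - (ρm + 2) / 2 * (y - 1)) * deriv f y
          + κ / 4 * (1 - y ^ 2) * deriv (deriv f) y) * (1 + y) ^ (a - 1)) (uIcc (0:ℝ) 1) := by
        apply hC.continuousOn.mul
        intro y hy
        rw [uIcc_of_le (by norm_num)] at hy
        have : (1:ℝ) + y ≠ 0 := by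
          have := hy.1; intro h; nlinarith
        exact ((Real.continuousAt_rpow_const (1 + y) (a - 1) (Or.inl this)).comp
          (by fun_prop)).continuousWithinAt
      have := i2.mul_continuousOn cg
      apply this.congr
      · intro y _
        simp only [hG_def]; ring
    exact part1.trans part2
  have key : ∫ y in (-1:ℝ)..1, G y = g 1 - g (-1) := by
    apply intervalIntegral.integral_eq_sub_of_hasDeriv_right_of_le (by norm_num)
      hgcont.continuousOn
      (fun x hx => (hderiv x hx).hasDerivWithinAt) hint
  have g1 : g 1 = 0 := by
    simp [hg_def, Real.zero_rpow hb.ne']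
  have gm1 : g (-1) = 0 := by
    simp [hg_def, Real.zero_rpow ha.ne']
  calc (∫ y in (-1:ℝ)..1, G y) = g 1 - g (-1) := key
    _ = 0 := by rw [g1, gm1]; ring
end

section
/- For every δ ∈ (0,1) the complex-valued function x ↦ x^{δ−2}(1 − e^{−ix}) is Lebesgue integrable on (0,∞), and (1 − δ) · ∫₀^∞ x^{δ−2}(1 − e^{−ix}) dx → 1 as δ ↑ 1. -/
open MeasureTheory Filter Set

private lemma aux_cont (δ : ℝ) : ContinuousOn
    (fun x : ℝ => ((x ^ (δ - 2) : ℝ) : ℂ) * (1 - Complex.exp (-Complex.I * x))) (Ioi 0) := by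
  apply ContinuousOn.mul
  · exact Complex.continuous_ofReal.comp_continuousOn
      (fun x hx => (Real.continuousAt_rpow_const x _ (Or.inl (ne_of_gt hx))).continuousWithinAt)
  · exact (continuous_const.sub (Complex.continuous_exp.comp
      (continuous_const.mul Complex.continuous_ofReal))).continuousOn

private lemma abs_exp_neg_I (x : ℝ) : ‖Complex.exp (-Complex.I * x)‖ = 1 := by
  rw [Complex.norm_exp]
  simp

private lemma norm_f_eq {δ x : ℝ} (hx : 0 < x) :
    ‖((x ^ (δ - 2) : ℝ) : ℂ) * (1 - Complex.exp (-Complex.I * x))‖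
      = x ^ (δ - 2) * ‖1 - Complex.exp (-Complex.I * x)‖ := by
  rw [norm_mul, Complex.norm_real, Real.norm_eq_abs,
    abs_of_nonneg (Real.rpow_nonneg hx.le _)]

private lemma bound_Ioc {δ x : ℝ} (hx : x ∈ Ioc (0:ℝ) 1) :
    ‖((x ^ (δ - 2) : ℝ) : ℂ) * (1 - Complex.exp (-Complex.I * x))‖ ≤ 2 * x ^ (δ - 1) := by
  have hx0 : 0 < x := hx.1
  rw [norm_f_eq hx0]
  have habs : ‖1 - Complex.exp (-Complex.I * x)‖ ≤ 2 * x := by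
    have h1 : ‖-Complex.I * x‖ ≤ 1 := by
      simp [abs_of_pos hx0, hx.2]
    calc ‖1 - Complex.exp (-Complex.I * x)‖
        = ‖Complex.exp (-Complex.I * x) - 1‖ := by rw [norm_sub_rev]
      _ ≤ 2 * ‖-Complex.I * x‖ := Complex.norm_exp_sub_one_le h1
      _ ≤ 2 * x := by simp [abs_of_pos hx0]
  calc x ^ (δ - 2) * ‖1 - Complex.exp (-Complex.I * x)‖
      ≤ x ^ (δ - 2) * (2 * x) :=
        mul_le_mul_of_nonneg_left habs (Real.rpow_nonneg hx0.le _)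
    _ = 2 * x ^ (δ - 1) := by
        rw [show x ^ (δ - 2) * (2 * x) = 2 * (x ^ (δ - 2) * x ^ (1:ℝ)) by rw [Real.rpow_one]; ring,
          ← Real.rpow_add hx0]
        ring_nf

private lemma g_integrableOn_Ioc {δ : ℝ} (h0 : 0 < δ) :
    IntegrableOn (fun x : ℝ => 2 * x ^ (δ - 1)) (Ioc (0:ℝ) 1) := by
  have := (intervalIntegral.intervalIntegrable_rpow' (show (-1:ℝ) < δ - 1 by linarith)
    (a := 0) (b := 1))
  rw [intervalIntegrable_iff_integrableOn_Ioc_of_le zero_le_one] at this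
  exact this.const_mul 2

private lemma f_integrableOn_Ioc {δ : ℝ} (h0 : 0 < δ) :
    IntegrableOn (fun x : ℝ => ((x ^ (δ - 2) : ℝ) : ℂ) * (1 - Complex.exp (-Complex.I * x)))
      (Ioc (0:ℝ) 1) := by
  have hmeas : AEStronglyMeasurable
      (fun x : ℝ => ((x ^ (δ - 2) : ℝ) : ℂ) * (1 - Complex.exp (-Complex.I * x)))
      (volume.restrict (Ioc (0:ℝ) 1)) :=
    ((aux_cont δ).mono Ioc_subset_Ioi_self).aestronglyMeasurable measurableSet_Ioc
  refine Integrable.mono' (g_integrableOn_Ioc h0) hmeas ?_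
  rw [ae_restrict_iff' measurableSet_Ioc]
  filter_upwards with x hx
  exact bound_Ioc hx

private lemma f_integrableOn_Ioi {δ : ℝ} (h1 : δ < 1) :
    IntegrableOn (fun x : ℝ => ((x ^ (δ - 2) : ℝ) : ℂ) * (1 - Complex.exp (-Complex.I * x)))
      (Ioi (1:ℝ)) := by
  have hmeas : AEStronglyMeasurable
      (fun x : ℝ => ((x ^ (δ - 2) : ℝ) : ℂ) * (1 - Complex.exp (-Complex.I * x)))
      (volume.restrict (Ioi (1:ℝ))) :=
    ((aux_cont δ).mono (Ioi_subset_Ioi zero_le_one)).aestronglyMeasurable measurableSet_Ioi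
  have hg : IntegrableOn (fun x : ℝ => 2 * x ^ (δ - 2)) (Ioi (1:ℝ)) :=
    (integrableOn_Ioi_rpow_of_lt (by linarith) one_pos).const_mul 2
  refine Integrable.mono' hg hmeas ?_
  rw [ae_restrict_iff' measurableSet_Ioi]
  filter_upwards with x hx
  have hx0 : (0:ℝ) < x := lt_trans one_pos hx
  rw [norm_f_eq hx0]
  have habs : ‖1 - Complex.exp (-Complex.I * x)‖ ≤ 2 := by
    calc ‖1 - Complex.exp (-Complex.I * x)‖
        ≤ ‖(1:ℂ)‖ + ‖Complex.exp (-Complex.I * x)‖ :=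
          norm_sub_le _ _
      _ = 2 := by rw [abs_exp_neg_I]; norm_num
  calc x ^ (δ - 2) * ‖1 - Complex.exp (-Complex.I * x)‖
      ≤ x ^ (δ - 2) * 2 := mul_le_mul_of_nonneg_left habs (Real.rpow_nonneg hx0.le _)
    _ = 2 * x ^ (δ - 2) := by ring

private lemma rpow_integrableOn_Ioi_C {δ : ℝ} (h : δ < 1) :
    IntegrableOn (fun x : ℝ => ((x ^ (δ - 2) : ℝ) : ℂ)) (Ioi (1:ℝ)) :=
  (integrableOn_Ioi_rpow_of_lt (by linarith) one_pos).ofReal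

private lemma e_integrableOn {δ : ℝ} (h1 : δ < 1) :
    IntegrableOn (fun x : ℝ => ((x ^ (δ - 2) : ℝ) : ℂ) * Complex.exp (-Complex.I * x))
      (Ioi (1:ℝ)) := by
  have h : IntegrableOn (fun x : ℝ => ((x ^ (δ - 2) : ℝ) : ℂ)
      - ((x ^ (δ - 2) : ℝ) : ℂ) * (1 - Complex.exp (-Complex.I * x))) (Ioi (1:ℝ)) :=
    (rpow_integrableOn_Ioi_C h1).sub (f_integrableOn_Ioi h1)
  refine h.congr_fun (fun x _ => ?_) measurableSet_Ioi
  ring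

private lemma deriv_exp_neg_I (x : ℝ) :
    HasDerivAt (fun y : ℝ => Complex.exp (-Complex.I * y))
      (-Complex.I * Complex.exp (-Complex.I * x)) x := by
  have h1 : HasDerivAt (fun z : ℂ => -Complex.I * z) (-Complex.I) (x:ℂ) := by
    simpa using (hasDerivAt_id (x:ℂ)).const_mul (-Complex.I)
  have h2 := (Complex.hasDerivAt_exp (-Complex.I * (x:ℂ))).comp (x:ℂ) h1
  have h3 : HasDerivAt (fun z : ℂ => Complex.exp (-Complex.I * z))
      (Complex.exp (-Complex.I * (x:ℂ)) * -Complex.I) (x:ℂ) := h2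
  have h4 := h3.comp_ofReal
  convert h4 using 1
  ring

private lemma deriv_rpow_C {δ x : ℝ} (hx : 0 < x) :
    HasDerivAt (fun y : ℝ => ((y ^ (δ - 2) : ℝ) : ℂ)) (((δ - 2) * x ^ (δ - 3) : ℝ) : ℂ) x := by
  have h : HasDerivAt (fun y : ℝ => y ^ (δ - 2)) ((δ - 2) * x ^ (δ - 3)) x := by
    have := Real.hasDerivAt_rpow_const (x := x) (p := δ - 2) (Or.inl hx.ne')
    convert this using 2
    ring_nf
  exact h.ofReal_comp

private lemma norm_first_eq {δ : ℝ} {x : ℝ} (hx0 : 0 < x) :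
    ‖(((δ - 2) * x ^ (δ - 3) : ℝ) : ℂ) * (Complex.I * Complex.exp (-Complex.I * x))‖
      = |δ - 2| * x ^ (δ - 3) := by
  rw [norm_mul, norm_mul, Complex.norm_real, Real.norm_eq_abs,
    Complex.norm_I, abs_exp_neg_I, abs_mul,
    abs_of_nonneg (Real.rpow_nonneg hx0.le _)]
  ring

private lemma abs_first_le {δ x : ℝ} (h0 : 0 < δ) (h1 : δ < 1) (hx0 : 0 < x) :
    |δ - 2| * x ^ (δ - 3) ≤ 2 * x ^ (δ - 3) := by
  apply mul_le_mul_of_nonneg_right _ (Real.rpow_nonneg hx0.le _)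
  rw [abs_of_nonpos (by linarith : δ - 2 ≤ 0)]
  linarith

private lemma first_integrableOn {δ : ℝ} (h0 : 0 < δ) (h1 : δ < 1) :
    IntegrableOn (fun x : ℝ =>
      (((δ - 2) * x ^ (δ - 3) : ℝ) : ℂ) * (Complex.I * Complex.exp (-Complex.I * x)))
      (Ioi (1:ℝ)) := by
  have hg : IntegrableOn (fun x : ℝ => 2 * x ^ (δ - 3)) (Ioi (1:ℝ)) :=
    (integrableOn_Ioi_rpow_of_lt (by linarith) one_pos).const_mul 2
  have hmeas : AEStronglyMeasurable
      (fun x : ℝ =>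
        (((δ - 2) * x ^ (δ - 3) : ℝ) : ℂ) * (Complex.I * Complex.exp (-Complex.I * x)))
      (volume.restrict (Ioi (1:ℝ))) := by
    apply ContinuousOn.aestronglyMeasurable _ measurableSet_Ioi
    apply ContinuousOn.mul
    · exact Complex.continuous_ofReal.comp_continuousOn
        (continuousOn_const.mul (fun x hx =>
          (Real.continuousAt_rpow_const x _
            (Or.inl (ne_of_gt (lt_trans one_pos hx)))).continuousWithinAt))
    · exact (continuous_const.mul (Complex.continuous_exp.comp
        (continuous_const.mul Complex.continuous_ofReal))).continuousOn
  refine Integrable.mono' hg hmeas ?_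
  rw [ae_restrict_iff' measurableSet_Ioi]
  filter_upwards with x hx
  have hx0 : (0:ℝ) < x := lt_trans one_pos hx
  calc ‖(((δ - 2) * x ^ (δ - 3) : ℝ) : ℂ) * (Complex.I * Complex.exp (-Complex.I * x))‖
      = |δ - 2| * x ^ (δ - 3) := norm_first_eq hx0
    _ ≤ 2 * x ^ (δ - 3) := abs_first_le h0 h1 hx0

private lemma key_bound {δ : ℝ} (h0 : 0 < δ) (h1 : δ < 1) :
    ‖∫ x in Ioi (1:ℝ), ((x ^ (δ - 2) : ℝ) : ℂ) * Complex.exp (-Complex.I * x)‖ ≤ 2 := by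
  set u : ℝ → ℂ := fun x => ((x ^ (δ - 2) : ℝ) : ℂ) * (Complex.I * Complex.exp (-Complex.I * x))
    with hu
  set v : ℝ → ℂ := fun x =>
    (((δ - 2) * x ^ (δ - 3) : ℝ) : ℂ) * (Complex.I * Complex.exp (-Complex.I * x))
      + ((x ^ (δ - 2) : ℝ) : ℂ) * Complex.exp (-Complex.I * x) with hv
  have hderiv : ∀ x ∈ Ici (1:ℝ), HasDerivAt u (v x) x := by
    intro x hx
    have hx0 : (0:ℝ) < x := lt_of_lt_of_le one_pos hx
    have hd1 := deriv_rpow_C (δ := δ) hx0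
    have hd2 := (deriv_exp_neg_I x).const_mul Complex.I
    have hd3 := hd1.mul hd2
    have hE : Complex.I * (-Complex.I * Complex.exp (-Complex.I * x))
        = Complex.exp (-Complex.I * x) := by
      rw [← mul_assoc, mul_neg, Complex.I_mul_I, neg_neg, one_mul]
    rw [hE] at hd3
    exact hd3
  have htend : Tendsto u atTop (nhds (0:ℂ)) := by
    have ht : Tendsto (fun x : ℝ => x ^ (δ - 2)) atTop (nhds (0:ℝ)) := by
      have := tendsto_rpow_neg_atTop (show (0:ℝ) < 2 - δ by linarith)
      simpa [show -(2 - δ) = δ - 2 by ring] using this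
    have hb : ∀ᶠ x : ℝ in atTop, ‖u x‖ ≤ x ^ (δ - 2) := by
      filter_upwards [eventually_gt_atTop (0:ℝ)] with x hx
      have : ‖u x‖ = x ^ (δ - 2) := by
        rw [hu]
        simp only []
        rw [norm_mul, norm_mul, Complex.norm_real, Real.norm_eq_abs,
          Complex.norm_I, abs_exp_neg_I,
          abs_of_nonneg (Real.rpow_nonneg hx.le _)]
        ring
      exact this.le
    exact squeeze_zero_norm' hb ht
  have hvint : IntegrableOn v (Ioi (1:ℝ)) := (first_integrableOn h0 h1).add (e_integrableOn h1)
  have key := integral_Ioi_of_hasDerivAt_of_tendsto' hderiv hvint htend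
  have hadd : ∫ x in Ioi (1:ℝ), v x
      = (∫ x in Ioi (1:ℝ),
          (((δ - 2) * x ^ (δ - 3) : ℝ) : ℂ) * (Complex.I * Complex.exp (-Complex.I * x)))
        + ∫ x in Ioi (1:ℝ), ((x ^ (δ - 2) : ℝ) : ℂ) * Complex.exp (-Complex.I * x) :=
    integral_add (first_integrableOn h0 h1) (e_integrableOn h1)
  rw [hadd] at key
  have heq : (∫ x in Ioi (1:ℝ), ((x ^ (δ - 2) : ℝ) : ℂ) * Complex.exp (-Complex.I * x))
      = -u 1 - ∫ x in Ioi (1:ℝ),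
          (((δ - 2) * x ^ (δ - 3) : ℝ) : ℂ) * (Complex.I * Complex.exp (-Complex.I * x)) := by
    linear_combination key
  rw [heq]
  have hu1 : ‖u 1‖ = 1 := by
    rw [hu]
    simp only []
    rw [norm_mul, norm_mul, Complex.norm_real, Real.norm_eq_abs, Real.one_rpow,
      Complex.norm_I, abs_exp_neg_I]
    norm_num
  have hfirst : ‖∫ x in Ioi (1:ℝ),
      (((δ - 2) * x ^ (δ - 3) : ℝ) : ℂ) * (Complex.I * Complex.exp (-Complex.I * x))‖ ≤ 1 := by
    calc ‖∫ x in Ioi (1:ℝ),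
        (((δ - 2) * x ^ (δ - 3) : ℝ) : ℂ) * (Complex.I * Complex.exp (-Complex.I * x))‖
        ≤ ∫ x in Ioi (1:ℝ),
            ‖(((δ - 2) * x ^ (δ - 3) : ℝ) : ℂ) * (Complex.I * Complex.exp (-Complex.I * x))‖ :=
          norm_integral_le_integral_norm _
      _ = ∫ x in Ioi (1:ℝ), (2 - δ) * x ^ (δ - 3) := by
          apply setIntegral_congr_fun measurableSet_Ioi
          intro x hx
          have hx0 : (0:ℝ) < x := lt_trans one_pos hx
          show ‖(((δ - 2) * x ^ (δ - 3) : ℝ) : ℂ) * (Complex.I * Complex.exp (-Complex.I * x))‖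
            = (2 - δ) * x ^ (δ - 3)
          rw [norm_first_eq hx0, abs_of_nonpos (by linarith : δ - 2 ≤ 0)]
          ring_nf
      _ = (2 - δ) * ∫ x in Ioi (1:ℝ), x ^ (δ - 3) := integral_const_mul _ _
      _ = (2 - δ) * (1 / (2 - δ)) := by
          rw [integral_Ioi_rpow_of_lt (by linarith) one_pos, Real.one_rpow]
          congr 1
          rw [show δ - 3 + 1 = -(2 - δ) by ring, div_neg, neg_div, neg_neg]
      _ = 1 := by
          rw [mul_one_div, div_self (ne_of_gt (show (0:ℝ) < 2 - δ by linarith))]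
  calc ‖-u 1 - ∫ x in Ioi (1:ℝ),
      (((δ - 2) * x ^ (δ - 3) : ℝ) : ℂ) * (Complex.I * Complex.exp (-Complex.I * x))‖
      ≤ ‖-u 1‖ + ‖∫ x in Ioi (1:ℝ),
          (((δ - 2) * x ^ (δ - 3) : ℝ) : ℂ) * (Complex.I * Complex.exp (-Complex.I * x))‖ :=
        norm_sub_le _ _
    _ ≤ 1 + 1 := by
        rw [norm_neg, hu1]
        exact add_le_add le_rfl hfirst
    _ = 2 := by norm_num

private lemma ioc_bound {δ : ℝ} (hl : 1/2 < δ) (hr : δ < 1) :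
    ‖∫ x in Ioc (0:ℝ) 1, ((x ^ (δ - 2) : ℝ) : ℂ) * (1 - Complex.exp (-Complex.I * x))‖ ≤ 4 := by
  have h0 : 0 < δ := by linarith
  have hval : ∫ x in Ioc (0:ℝ) 1, 2 * x ^ (δ - 1) = 2 * (1 / δ) := by
    rw [← intervalIntegral.integral_of_le zero_le_one,
      intervalIntegral.integral_const_mul, integral_rpow (Or.inl (by linarith)),
      show δ - 1 + 1 = δ by ring, Real.one_rpow, Real.zero_rpow (ne_of_gt h0)]
    ring
  calc ‖∫ x in Ioc (0:ℝ) 1, ((x ^ (δ - 2) : ℝ) : ℂ) * (1 - Complex.exp (-Complex.I * x))‖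
      ≤ ∫ x in Ioc (0:ℝ) 1, ‖((x ^ (δ - 2) : ℝ) : ℂ) * (1 - Complex.exp (-Complex.I * x))‖ :=
        norm_integral_le_integral_norm _
    _ ≤ ∫ x in Ioc (0:ℝ) 1, 2 * x ^ (δ - 1) := by
        apply setIntegral_mono_on (f_integrableOn_Ioc h0).norm (g_integrableOn_Ioc h0)
          measurableSet_Ioc
        intro x hx
        exact bound_Ioc hx
    _ = 2 * (1 / δ) := hval
    _ ≤ 4 := by
        rw [mul_one_div]
        rw [div_le_iff₀ h0]
        linarith

private lemma main_eq {δ : ℝ} (h0 : 0 < δ) (h1 : δ < 1) :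
    (∫ x in Ioi (0:ℝ), ((x ^ (δ - 2) : ℝ) : ℂ) * (1 - Complex.exp (-Complex.I * x)))
      = (∫ x in Ioc (0:ℝ) 1, ((x ^ (δ - 2) : ℝ) : ℂ) * (1 - Complex.exp (-Complex.I * x)))
        + ((1 / (1 - δ) : ℝ) : ℂ)
        - ∫ x in Ioi (1:ℝ), ((x ^ (δ - 2) : ℝ) : ℂ) * Complex.exp (-Complex.I * x) := by
  rw [show Ioi (0:ℝ) = Ioc 0 1 ∪ Ioi 1 from (Ioc_union_Ioi_eq_Ioi zero_le_one).symm]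
  rw [setIntegral_union (Ioc_disjoint_Ioi le_rfl) measurableSet_Ioi
    (f_integrableOn_Ioc h0) (f_integrableOn_Ioi h1)]
  have hsplit : ∫ x in Ioi (1:ℝ), ((x ^ (δ - 2) : ℝ) : ℂ) * (1 - Complex.exp (-Complex.I * x))
      = (∫ x in Ioi (1:ℝ), ((x ^ (δ - 2) : ℝ) : ℂ))
        - ∫ x in Ioi (1:ℝ), ((x ^ (δ - 2) : ℝ) : ℂ) * Complex.exp (-Complex.I * x) := by
    rw [← integral_sub (rpow_integrableOn_Ioi_C h1) (e_integrableOn h1)]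
    apply setIntegral_congr_fun measurableSet_Ioi
    intro x _
    ring
  rw [hsplit]
  have hval : (∫ x in Ioi (1:ℝ), ((x ^ (δ - 2) : ℝ) : ℂ)) = ((1 / (1 - δ) : ℝ) : ℂ) := by
    have hre : ∫ x in Ioi (1:ℝ), x ^ (δ - 2) = 1 / (1 - δ) := by
      rw [integral_Ioi_rpow_of_lt (by linarith) one_pos, Real.one_rpow]
      rw [show δ - 2 + 1 = -(1 - δ) by ring, div_neg, neg_div, neg_neg]
    rw [← hre]
    exact integral_ofReal
  rw [hval]
  ring

/-- For `δ ∈ (0,1)` the function `x ↦ x^{δ−2}(1 − e^{−ix})` is Lebesgue integrable on `(0,∞)`,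
and `(1 − δ) ∫₀^∞ x^{δ−2}(1 − e^{−ix}) dx → 1` as `δ ↑ 1`. -/
theorem stmt10 :
    (∀ δ ∈ Set.Ioo (0:ℝ) 1,
      MeasureTheory.IntegrableOn
        (fun x : ℝ => ((x ^ (δ - 2) : ℝ) : ℂ) * (1 - Complex.exp (-Complex.I * x)))
        (Set.Ioi 0)) ∧
    Filter.Tendsto
      (fun δ : ℝ => ((1 - δ : ℝ) : ℂ) *
        ∫ x in Set.Ioi (0:ℝ), ((x ^ (δ - 2) : ℝ) : ℂ) * (1 - Complex.exp (-Complex.I * x)))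
      (nhdsWithin 1 (Set.Iio 1)) (nhds 1) := by
  constructor
  · intro δ hδ
    rw [show Ioi (0:ℝ) = Ioc 0 1 ∪ Ioi 1 from (Ioc_union_Ioi_eq_Ioi zero_le_one).symm]
    exact (f_integrableOn_Ioc hδ.1).union (f_integrableOn_Ioi hδ.2)
  · rw [tendsto_iff_norm_sub_tendsto_zero]
    have hg : Tendsto (fun δ : ℝ => 6 * (1 - δ)) (nhdsWithin 1 (Iio 1)) (nhds (0:ℝ)) := by
      have hc : Continuous (fun δ : ℝ => 6 * (1 - δ)) := by continuity
      have h := (hc.tendsto (1:ℝ)).mono_left (nhdsWithin_le_nhds (s := Iio (1:ℝ)))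
      norm_num at h
      exact h
    apply squeeze_zero' (Eventually.of_forall (fun δ => norm_nonneg _)) ?_ hg
    filter_upwards [Ioo_mem_nhdsLT (show (1/2:ℝ) < 1 by norm_num)] with δ hδ
    obtain ⟨hδl, hδr⟩ := hδ
    have h0 : 0 < δ := by linarith
    have h1δ : (0:ℝ) < 1 - δ := by linarith
    rw [main_eq h0 hδr]
    set A := ∫ x in Ioc (0:ℝ) 1, ((x ^ (δ - 2) : ℝ) : ℂ) * (1 - Complex.exp (-Complex.I * x))
      with hA
    set C := ∫ x in Ioi (1:ℝ), ((x ^ (δ - 2) : ℝ) : ℂ) * Complex.exp (-Complex.I * x) with hC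
    have hcast : ((1 - δ : ℝ) : ℂ) * ((1 / (1 - δ) : ℝ) : ℂ) = 1 := by
      rw [← Complex.ofReal_mul, mul_one_div, div_self h1δ.ne']
      norm_num
    have hrw : ((1 - δ : ℝ) : ℂ) * (A + ((1 / (1 - δ) : ℝ) : ℂ) - C) - 1
        = ((1 - δ : ℝ) : ℂ) * A - ((1 - δ : ℝ) : ℂ) * C := by
      linear_combination hcast
    rw [hrw]
    calc ‖((1 - δ : ℝ) : ℂ) * A - ((1 - δ : ℝ) : ℂ) * C‖
        ≤ ‖((1 - δ : ℝ) : ℂ) * A‖ + ‖((1 - δ : ℝ) : ℂ) * C‖ := norm_sub_le _ _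
      _ = (1 - δ) * ‖A‖ + (1 - δ) * ‖C‖ := by
          rw [norm_mul, norm_mul, Complex.norm_real, Real.norm_eq_abs, abs_of_pos h1δ]
      _ ≤ (1 - δ) * 4 + (1 - δ) * 2 := by
          have hbA : ‖A‖ ≤ 4 := ioc_bound hδl hδr
          have hbC : ‖C‖ ≤ 2 := key_bound h0 hδr
          have := mul_le_mul_of_nonneg_left hbA h1δ.le
          have := mul_le_mul_of_nonneg_left hbC h1δ.le
          linarith
      _ = 6 * (1 - δ) := by ring
end

section
/- Let κ ∈ (8/3, 4) and set κ' = 16/κ, and let β ∈ (−1, 1). Then there exists a unique ρ' ∈ (κ' − 6, 0) such that sin(πρ'/2) · ( 1 + cos(πκ'/2) − 2/(1−β) ) = cos(πρ'/2) · sin(πκ'/2). -/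
set_option maxHeartbeats 1000000

open Real

/-- Existence and uniqueness of the Miller–Sheffield–Werner trunk exponent: for
`κ ∈ (8/3, 4)`, `κ' = 16/κ` and `β ∈ (−1,1)` there is a unique `ρ' ∈ (κ'−6, 0)` with
`sin(πρ'/2)(1 + cos(πκ'/2) − 2/(1−β)) = cos(πρ'/2) sin(πκ'/2)`. -/
theorem stmt13 (κ β : ℝ) (hκ : κ ∈ Set.Ioo (8/3 : ℝ) 4) (hβ : β ∈ Set.Ioo (-1 : ℝ) 1) :
    ∃! ρ' : ℝ, ρ' ∈ Set.Ioo (16 / κ - 6) 0 ∧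
      Real.sin (π * ρ' / 2) * (1 + Real.cos (π * (16 / κ) / 2) - 2 / (1 - β))
        = Real.cos (π * ρ' / 2) * Real.sin (π * (16 / κ) / 2) := by
  obtain ⟨hκ1, hκ2⟩ := hκ
  obtain ⟨hβ1, hβ2⟩ := hβ
  have hκ0 : (0:ℝ) < κ := by linarith
  have hπ : (0:ℝ) < π := Real.pi_pos
  set κ' : ℝ := 16 / κ with hκ'def
  have hκ'4 : 4 < κ' := by rw [hκ'def, lt_div_iff₀ hκ0]; linarith
  have hκ'6 : κ' < 6 := by rw [hκ'def, div_lt_iff₀ hκ0]; linarith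
  set A : ℝ := 1 + Real.cos (π * κ' / 2) - 2 / (1 - β) with hAdef
  set s : ℝ := Real.sin (π * κ' / 2) with hsdef
  -- s > 0
  have hs0 : 0 < s := by
    have h1 : s = Real.sin (π * κ' / 2 - 2 * π) := by
      rw [hsdef, ← Real.sin_add_two_pi (π * κ' / 2 - 2 * π)]
      congr 1; ring
    rw [h1]
    apply Real.sin_pos_of_pos_of_lt_pi
    · nlinarith
    · nlinarith
  -- trig values at the left endpoint
  have h3s : Real.sin (3 * π) = 0 := by
    rw [show (3:ℝ) * π = π + 2 * π by ring, Real.sin_add_two_pi, Real.sin_pi]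
  have h3c : Real.cos (3 * π) = -1 := by
    rw [show (3:ℝ) * π = π + 2 * π by ring, Real.cos_add_two_pi, Real.cos_pi]
  have hsin_a : Real.sin (π * (κ' - 6) / 2) = -s := by
    rw [show π * (κ' - 6) / 2 = π * κ' / 2 - 3 * π by ring, Real.sin_sub, h3s, h3c, hsdef]
    ring
  have hcos_a : Real.cos (π * (κ' - 6) / 2) = -Real.cos (π * κ' / 2) := by
    rw [show π * (κ' - 6) / 2 = π * κ' / 2 - 3 * π by ring, Real.cos_sub, h3s, h3c]
    ring
  -- the function
  set f : ℝ → ℝ := fun ρ => Real.sin (π * ρ / 2) * A - Real.cos (π * ρ / 2) * s with hfdef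
  have hfc : Continuous f := by
    apply Continuous.sub
    · exact (Real.continuous_sin.comp (by continuity)).mul continuous_const
    · exact (Real.continuous_cos.comp (by continuity)).mul continuous_const
  have h2div : 1 < 2 / (1 - β) := by
    rw [lt_div_iff₀ (by linarith)]; linarith
  have hfa : 0 < f (κ' - 6) := by
    have : f (κ' - 6) = s * (2 / (1 - β) - 1) := by
      simp only [hfdef, hsin_a, hcos_a, hAdef]; ring
    rw [this]
    have := hs0
    nlinarith
  have hf0 : f 0 < 0 := by
    have : f 0 = -s := by
      simp [hfdef]
    rw [this]; linarith
  have hab : κ' - 6 ≤ (0:ℝ) := by linarith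
  have hsub := intermediate_value_Ioo' hab hfc.continuousOn
  obtain ⟨ρ, hρmem, hρval⟩ := hsub (Set.mem_Ioo.mpr ⟨hf0, hfa⟩)
  have hρeq : Real.sin (π * ρ / 2) * A = Real.cos (π * ρ / 2) * s := by
    have : f ρ = 0 := hρval
    simp only [hfdef] at this
    linarith
  refine ⟨ρ, ⟨hρmem, hρeq⟩, ?_⟩
  rintro y ⟨hymem, hyeq⟩
  obtain ⟨hy1, hy2⟩ := Set.mem_Ioo.mp hymem
  obtain ⟨hr1, hr2⟩ := Set.mem_Ioo.mp hρmem
  -- uniqueness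
  have key : Real.sin (π * (y - ρ) / 2) * s = 0 := by
    have expand : Real.sin (π * (y - ρ) / 2)
        = Real.sin (π * y / 2) * Real.cos (π * ρ / 2)
          - Real.cos (π * y / 2) * Real.sin (π * ρ / 2) := by
      rw [show π * (y - ρ) / 2 = π * y / 2 - π * ρ / 2 by ring, Real.sin_sub]
    rw [expand]
    linear_combination Real.sin (π * ρ / 2) * hyeq - Real.sin (π * y / 2) * hρeq
  have hsin0 : Real.sin (π * (y - ρ) / 2) = 0 := by
    rcases mul_eq_zero.mp key with h | h
    · exact h
    · exact absurd h (ne_of_gt hs0)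
  have hlt1 : -π < π * (y - ρ) / 2 := by nlinarith
  have hlt2 : π * (y - ρ) / 2 < π := by nlinarith
  have := (Real.sin_eq_zero_iff_of_lt_of_lt hlt1 hlt2).mp hsin0
  have hmul : π * (y - ρ) = 0 := by linarith
  rcases mul_eq_zero.mp hmul with h | h
  · exact absurd h (ne_of_gt hπ)
  · linarith
end

section
/- Fix μ ∈ ℝ. For each κ ∈ (8/3, 4) with |μ|·(4/κ − 1) < 1, let β(κ) = μ(4/κ − 1) and let ρ'(κ) be the unique ρ' ∈ (16/κ − 6, 0) satisfying sin(πρ'/2) · ( 1 + cos(8π/κ) − 2/(1−β(κ)) ) = cos(πρ'/2) · sin(8π/κ). Then ρ'(κ) → (2/π)·arctan(μ/π) − 1 as κ ↑ 4, where arctan takes values in (−π/2, π/2). -/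
open Real Filter

private lemma key14 (μ κ r : ℝ) (hκ : κ ∈ Set.Ioo (8/3 : ℝ) 4) (hβ : |μ| * (4 / κ - 1) < 1)
    (hr : r ∈ Set.Ioo (16 / κ - 6) 0)
    (heq : Real.sin (π * r / 2) * (1 + Real.cos (8 * π / κ) - 2 / (1 - μ * (4 / κ - 1)))
        = Real.cos (π * r / 2) * Real.sin (8 * π / κ)) :
    r = 2 / π * Real.arctan
        (μ / π * ((8 * π / κ - 2 * π) / Real.sin (8 * π / κ - 2 * π)) / (1 - μ * (4 / κ - 1))
          + Real.sin (8 * π / κ - 2 * π) / (1 + Real.cos (8 * π / κ - 2 * π))) - 1 := by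
  have hπ : (0:ℝ) < π := Real.pi_pos
  have hκ0 : (0:ℝ) < κ := by linarith [hκ.1]
  have hd0 : 0 < 8 * π / κ - 2 * π := by
    have : 2 * π < 8 * π / κ := by rw [lt_div_iff₀ hκ0]; nlinarith [hκ.2]
    linarith
  have hdπ : 8 * π / κ - 2 * π < π := by
    have : 8 * π / κ < 3 * π := by rw [div_lt_iff₀ hκ0]; nlinarith [hκ.1]
    linarith
  have hβ' : μ * (4 / κ - 1) < 1 := by
    have h4 : 0 ≤ 4 / κ - 1 := by
      rw [sub_nonneg, le_div_iff₀ hκ0]; nlinarith [hκ.2]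
    calc μ * (4 / κ - 1) ≤ |μ * (4 / κ - 1)| := le_abs_self _
      _ = |μ| * (4 / κ - 1) := by rw [abs_mul, abs_of_nonneg h4]
      _ < 1 := hβ
  have hr2 : -2 < r := by
    have : 4 < 16 / κ := by rw [lt_div_iff₀ hκ0]; nlinarith [hκ.2]
    have := hr.1; linarith
  have hr0 := hr.2
  set b : ℝ := μ * (4 / κ - 1) with hbb
  set d : ℝ := 8 * π / κ - 2 * π with hdd
  have hbd : μ * d = 2 * π * b := by
    rw [hbb, hdd]; field_simp; ring
  have h1β : (0:ℝ) < 1 - b := by linarith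
  set x : ℝ := π * r / 2 with hxx
  have hx1 : -π < x := by rw [hxx]; nlinarith
  have hx0 : x < 0 := by rw [hxx]; nlinarith
  have hs8 : Real.sin (8 * π / κ) = Real.sin d := by
    rw [hdd, Real.sin_sub_two_pi]
  have hc8 : Real.cos (8 * π / κ) = Real.cos d := by
    rw [hdd, Real.cos_sub_two_pi]
  rw [hs8, hc8] at heq
  clear_value b d x
  have hsind : 0 < Real.sin d := Real.sin_pos_of_pos_of_lt_pi hd0 hdπ
  have hcosd : -1 < Real.cos d := by
    have := Real.cos_lt_cos_of_nonneg_of_le_pi hd0.le le_rfl hdπ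
    rwa [Real.cos_pi] at this
  have hsinx : Real.sin x < 0 := by
    have h := Real.sin_pos_of_pos_of_lt_pi (show 0 < -x by linarith) (by linarith)
    rw [Real.sin_neg] at h; linarith
  have harc : Real.arctan (μ / π * (d / Real.sin d) / (1 - b)
          + Real.sin d / (1 + Real.cos d)) = x + π / 2 := by
    apply Real.arctan_eq_of_tan_eq
    · rw [Real.tan_eq_sin_div_cos, Real.sin_add_pi_div_two, Real.cos_add_pi_div_two]
      have hpyth := Real.sin_sq_add_cos_sq d
      have hsd : Real.sin d ≠ 0 := ne_of_gt hsind
      have hsx : Real.sin x ≠ 0 := ne_of_lt hsinx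
      have h1c : (1:ℝ) + Real.cos d ≠ 0 := by linarith
      have h1b : (1:ℝ) - b ≠ 0 := ne_of_gt h1β
      have hp : π ≠ 0 := ne_of_gt hπ
      rw [div_eq_iff (neg_ne_zero.mpr hsx)]
      field_simp at heq ⊢
      linear_combination (-(π*(1+Real.cos d))) * heq
        + (Real.sin x*(1+Real.cos d)) * hbd + (π*Real.sin x*(1-b)) * hpyth
    · constructor <;> [linarith; linarith]
  rw [harc, hxx]
  field_simp
  ring

private lemma slope14 :
    Filter.Tendsto (fun y : ℝ => Real.sin y / y) (nhdsWithin 0 {(0:ℝ)}ᶜ) (nhds 1) := by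
  have h := Real.hasDerivAt_sin 0
  rw [Real.cos_zero] at h
  have h2 := hasDerivAt_iff_tendsto_slope.mp h
  refine h2.congr fun y => ?_
  simp [slope_def_field]

/-- Limit of the trunk exponents: if `β(κ) = μ(4/κ − 1)` and `ρ'(κ)` is the unique root in
`(16/κ − 6, 0)` of the trunk equation, then `ρ'(κ) → (2/π) arctan(μ/π) − 1` as `κ ↑ 4`. -/
theorem stmt14 (μ : ℝ) (ρ' : ℝ → ℝ)
    (h : ∀ κ : ℝ, κ ∈ Set.Ioo (8/3 : ℝ) 4 → |μ| * (4 / κ - 1) < 1 →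
      ρ' κ ∈ Set.Ioo (16 / κ - 6) 0 ∧
      Real.sin (π * ρ' κ / 2)
          * (1 + Real.cos (8 * π / κ) - 2 / (1 - μ * (4 / κ - 1)))
        = Real.cos (π * ρ' κ / 2) * Real.sin (8 * π / κ)) :
    Filter.Tendsto ρ' (nhdsWithin 4 (Set.Iio 4))
      (nhds (2 / π * Real.arctan (μ / π) - 1)) := by
  have hπ : (0:ℝ) < π := Real.pi_pos
  set l := nhdsWithin (4:ℝ) (Set.Iio 4) with hl
  set d : ℝ → ℝ := fun κ => 8 * π / κ - 2 * π with hdf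
  have hmemIoo : ∀ᶠ κ in l, κ ∈ Set.Ioo (8/3 : ℝ) 4 :=
    Filter.eventually_of_mem (Ioo_mem_nhdsLT_of_mem (by norm_num)) fun _ hx => hx
  -- d tends to 0 within the punctured neighborhood
  have hd0 : Filter.Tendsto d l (nhds 0) := by
    have hc : ContinuousAt d 4 := by
      apply ContinuousAt.sub _ continuousAt_const
      exact continuousAt_const.div continuousAt_id (by norm_num)
    have : d 4 = 0 := by simp [hdf]; ring
    have := hc.tendsto
    rw [‹d 4 = 0›] at this
    exact this.mono_left nhdsWithin_le_nhds
  have hdpos : ∀ᶠ κ in l, 0 < d κ := by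
    filter_upwards [hmemIoo] with κ hκ
    have hκ0 : (0:ℝ) < κ := by linarith [hκ.1]
    have : 2 * π < 8 * π / κ := by rw [lt_div_iff₀ hκ0]; nlinarith [hκ.2]
    simp only [hdf]; linarith
  have hdne : Filter.Tendsto d l (nhdsWithin 0 {(0:ℝ)}ᶜ) := by
    rw [tendsto_nhdsWithin_iff]
    exact ⟨hd0, hdpos.mono fun κ hκ => ne_of_gt hκ⟩
  -- d/sin d → 1
  have ht1 : Filter.Tendsto (fun κ => d κ / Real.sin (d κ)) l (nhds 1) := by
    have := (slope14.comp hdne).inv₀ one_ne_zero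
    rw [inv_one] at this
    refine this.congr fun κ => ?_
    simp [Function.comp, inv_div]
  -- 1 - β → 1
  have hb1 : Filter.Tendsto (fun κ => 1 - μ * (4 / κ - 1)) l (nhds 1) := by
    have hc : ContinuousAt (fun κ : ℝ => 1 - μ * (4 / κ - 1)) 4 := by
      apply ContinuousAt.sub continuousAt_const
      apply ContinuousAt.mul continuousAt_const
      apply ContinuousAt.sub _ continuousAt_const
      exact continuousAt_const.div continuousAt_id (by norm_num)
    have h0 := hc.tendsto.mono_left (nhdsWithin_le_nhds (s := Set.Iio (4:ℝ)))
    have hv : 1 - μ * (4 / 4 - 1) = 1 := by norm_num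
    rwa [hv] at h0
  -- second term → 0
  have ht2 : Filter.Tendsto (fun κ => Real.sin (d κ) / (1 + Real.cos (d κ))) l (nhds 0) := by
    have hc : ContinuousAt (fun y : ℝ => Real.sin y / (1 + Real.cos y)) 0 := by
      apply ContinuousAt.div (Real.continuous_sin.continuousAt)
        (continuousAt_const.add Real.continuous_cos.continuousAt)
      show (1:ℝ) + Real.cos 0 ≠ 0
      rw [Real.cos_zero]; norm_num
    have h0 := hc.tendsto
    have hv : Real.sin 0 / (1 + Real.cos 0) = 0 := by simp
    rw [hv] at h0
    exact h0.comp hd0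
  -- full argument → μ/π
  have hA : Filter.Tendsto (fun κ => μ / π * (d κ / Real.sin (d κ)) / (1 - μ * (4 / κ - 1))
      + Real.sin (d κ) / (1 + Real.cos (d κ))) l (nhds (μ / π)) := by
    have h1 : Filter.Tendsto (fun κ => μ / π * (d κ / Real.sin (d κ)) / (1 - μ * (4 / κ - 1))
        + Real.sin (d κ) / (1 + Real.cos (d κ))) l (nhds (μ / π * 1 / 1 + 0)) :=
      ((tendsto_const_nhds.mul ht1).div hb1 one_ne_zero).add ht2
    have h2 : μ / π * 1 / 1 + 0 = μ / π := by ring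
    rwa [h2] at h1
  have hG : Filter.Tendsto (fun κ => 2 / π * Real.arctan
      (μ / π * (d κ / Real.sin (d κ)) / (1 - μ * (4 / κ - 1))
        + Real.sin (d κ) / (1 + Real.cos (d κ))) - 1) l
      (nhds (2 / π * Real.arctan (μ / π) - 1)) := by
    exact (tendsto_const_nhds.mul ((Real.continuous_arctan.tendsto _).comp hA)).sub
      tendsto_const_nhds
  -- eventually |μ|(4/κ-1) < 1
  have hβsmall : ∀ᶠ κ in l, |μ| * (4 / κ - 1) < 1 := by
    have hc : ContinuousAt (fun κ : ℝ => |μ| * (4 / κ - 1)) 4 := by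
      apply ContinuousAt.mul continuousAt_const
      apply ContinuousAt.sub _ continuousAt_const
      exact continuousAt_const.div continuousAt_id (by norm_num)
    have htd := hc.tendsto.mono_left (nhdsWithin_le_nhds (s := Set.Iio (4:ℝ)))
    have hv : |μ| * (4 / 4 - 1) = 0 := by norm_num
    rw [hv] at htd
    exact htd.eventually_lt_const one_pos
  refine hG.congr' ?_
  filter_upwards [hmemIoo, hβsmall] with κ hκ hsm
  obtain ⟨hmem, heq⟩ := h κ hκ hsm
  exact (key14 μ κ (ρ' κ) hκ hsm hmem heq).symm
end

section
/- Fix ρ ∈ (−2, 0) and set μ̃ = −π·cot(πρ/2). For each κ ∈ (8/3, 4) with |μ̃|·(4/κ − 1) < 1, let β(κ) = μ̃(4/κ − 1) and let ρ'(κ) be the unique ρ' ∈ (16/κ − 6, 0) satisfying sin(πρ'/2) · ( 1 + cos(8π/κ) − 2/(1−β(κ)) ) = cos(πρ'/2) · sin(8π/κ). Then ρ'(κ) → ρ as κ ↑ 4. -/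
open Real Filter

lemma cot_anti' {a b : ℝ} (ha : -π < a) (hab : a < b) (hb : b < 0) :
    Real.cot b < Real.cot a := by
  have hsa : Real.sin a < 0 := Real.sin_neg_of_neg_of_neg_pi_lt (by linarith) ha
  have hsb : Real.sin b < 0 := Real.sin_neg_of_neg_of_neg_pi_lt hb (by linarith)
  have hd : 0 < Real.sin (b - a) :=
    Real.sin_pos_of_pos_of_lt_pi (by linarith) (by linarith)
  have h1 : Real.cos a / Real.sin a - Real.cos b / Real.sin b
      = Real.sin (b - a) / (Real.sin a * Real.sin b) := by
    have h3 : Real.sin a ≠ 0 := ne_of_lt hsa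
    have h4 : Real.sin b ≠ 0 := ne_of_lt hsb
    rw [Real.sin_sub]
    field_simp
  have h2 : 0 < Real.sin (b - a) / (Real.sin a * Real.sin b) :=
    div_pos hd (mul_pos_of_neg_of_neg hsa hsb)
  rw [Real.cot_eq_cos_div_sin, Real.cot_eq_cos_div_sin]
  linarith

lemma sin_mul_div_lim (c : ℝ) :
    Tendsto (fun s : ℝ => Real.sin (c * s) / s) (nhdsWithin 0 (Set.Ioi 0)) (nhds c) := by
  have hd : HasDerivAt (fun s : ℝ => Real.sin (c * s)) c 0 := by
    have := (Real.hasDerivAt_sin (c * 0)).comp 0 ((hasDerivAt_id (0:ℝ)).const_mul c)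
    simpa [Function.comp_def] using this
  have h := hasDerivAt_iff_tendsto_slope.mp hd
  have h2 := h.mono_left (nhdsWithin_mono 0 (fun x hx => ne_of_gt hx : Set.Ioi (0:ℝ) ⊆ {(0:ℝ)}ᶜ))
  refine h2.congr' ?_ |>.mono_left le_rfl
  filter_upwards [self_mem_nhdsWithin] with s hs
  simp [slope]
  rw [inv_mul_eq_div]

lemma limF (m : ℝ) :
    Tendsto (fun s : ℝ => (1 + Real.cos (2*π*s) - 2/(1 - m*s)) / Real.sin (2*π*s))
      (nhdsWithin 0 (Set.Ioi 0)) (nhds (-m/π)) := by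
  have hπ := Real.pi_pos
  have h1 : Tendsto (fun s : ℝ => Real.sin (π*s)/s) (nhdsWithin 0 (Set.Ioi 0)) (nhds π) :=
    sin_mul_div_lim π
  have h2 : Tendsto (fun s : ℝ => Real.sin (2*π*s)/s) (nhdsWithin 0 (Set.Ioi 0)) (nhds (2*π)) :=
    sin_mul_div_lim (2*π)
  have hs0 : Tendsto (fun s : ℝ => Real.sin (π*s)) (nhdsWithin 0 (Set.Ioi 0)) (nhds 0) := by
    have : Continuous (fun s : ℝ => Real.sin (π*s)) := by continuity
    simpa using (this.tendsto 0).mono_left nhdsWithin_le_nhds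
  have hms : Tendsto (fun s : ℝ => 1 - m*s) (nhdsWithin 0 (Set.Ioi 0)) (nhds 1) := by
    have : Continuous (fun s : ℝ => 1 - m*s) := by continuity
    simpa using (this.tendsto 0).mono_left nhdsWithin_le_nhds
  have hG : Tendsto (fun s : ℝ =>
      (-2*m - 2*(Real.sin (π*s)/s)*Real.sin (π*s)*(1 - m*s))
        / ((1 - m*s)*(Real.sin (2*π*s)/s)))
      (nhdsWithin 0 (Set.Ioi 0)) (nhds (-m/π)) := by
    have hnum : Tendsto (fun s : ℝ =>
        -2*m - 2*(Real.sin (π*s)/s)*Real.sin (π*s)*(1 - m*s))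
        (nhdsWithin 0 (Set.Ioi 0)) (nhds (-2*m)) := by
      have := (((h1.const_mul 2).mul hs0).mul hms).const_sub (-2*m)
      simpa using this.congr (fun s => by ring)
    have hden : Tendsto (fun s : ℝ => (1 - m*s)*(Real.sin (2*π*s)/s))
        (nhdsWithin 0 (Set.Ioi 0)) (nhds (1*(2*π))) := hms.mul h2
    have := hnum.div hden (by positivity)
    have heq : (-2*m)/(1*(2*π)) = -m/π := by field_simp
    rwa [heq] at this
  refine hG.congr' ?_
  have hδ : (0:ℝ) < min (1/2) (1/(2*(|m|+1))) := by positivity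
  filter_upwards [Ioo_mem_nhdsGT_of_mem (Set.mem_Ico.mpr ⟨le_refl (0:ℝ), hδ⟩)] with s hs
  obtain ⟨hs0', hsδ⟩ := hs
  have hshalf : s < 1/2 := lt_of_lt_of_le hsδ (min_le_left _ _)
  have h5 : s < 1/(2*(|m|+1)) := lt_of_lt_of_le hsδ (min_le_right _ _)
  have h1ms : 0 < 1 - m*s := by
    nlinarith [mul_le_mul_of_nonneg_right (le_abs_self m) hs0'.le,
      (lt_div_iff₀ (by positivity : (0:ℝ) < 2*(|m|+1))).mp h5, abs_nonneg m]
  have hsin2 : 0 < Real.sin (2*π*s) :=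
    Real.sin_pos_of_pos_of_lt_pi (by positivity) (by nlinarith)
  have hcos : Real.cos (2*π*s) = 1 - 2*Real.sin (π*s)^2 := by
    rw [show 2*π*s = 2*(π*s) by ring, Real.cos_two_mul]
    nlinarith [Real.sin_sq_add_cos_sq (π*s)]
  rw [hcos]
  field_simp
  ring

/-- For `ρ ∈ (−2,0)` and `μ̃ = −π cot(πρ/2)`, the trunk exponents `ρ'(κ)` for the asymmetry
parameters `β(κ) = μ̃(4/κ − 1)` converge to `ρ` as `κ ↑ 4`. -/
theorem stmt15 (ρ : ℝ) (hρ : ρ ∈ Set.Ioo (-2 : ℝ) 0)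
    (μt : ℝ) (hμ : μt = -π * Real.cot (π * ρ / 2))
    (ρ' : ℝ → ℝ)
    (h : ∀ κ : ℝ, κ ∈ Set.Ioo (8/3 : ℝ) 4 → |μt| * (4 / κ - 1) < 1 →
      ρ' κ ∈ Set.Ioo (16 / κ - 6) 0 ∧
      Real.sin (π * ρ' κ / 2)
          * (1 + Real.cos (8 * π / κ) - 2 / (1 - μt * (4 / κ - 1)))
        = Real.cos (π * ρ' κ / 2) * Real.sin (8 * π / κ)) :
    Filter.Tendsto ρ' (nhdsWithin 4 (Set.Iio 4)) (nhds ρ) := by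
  obtain ⟨hρ1, hρ2⟩ := hρ
  have hπ := Real.pi_pos
  set C : ℝ → ℝ := fun κ =>
    (1 + Real.cos (8*π/κ) - 2/(1 - μt*(4/κ-1))) / Real.sin (8*π/κ) with hCdef
  have hcotval : -μt/π = Real.cot (π*ρ/2) := by
    rw [hμ]; field_simp
  have hs4 : Tendsto (fun κ : ℝ => 4/κ - 1) (nhdsWithin 4 (Set.Iio 4))
      (nhdsWithin 0 (Set.Ioi 0)) := by
    rw [tendsto_nhdsWithin_iff]
    constructor
    · have hc : ContinuousAt (fun κ : ℝ => 4/κ - 1) 4 :=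
        (continuousAt_const.div continuousAt_id (by norm_num)).sub continuousAt_const
      have h2 := hc.tendsto.mono_left (nhdsWithin_le_nhds (s := Set.Iio 4))
      norm_num at h2
      exact h2
    · filter_upwards [Ioo_mem_nhdsLT_of_mem (show (4:ℝ) ∈ Set.Ioc 3 4 by norm_num)] with κ hκ
      have : (1:ℝ) < 4/κ := (one_lt_div (by linarith [hκ.1])).mpr hκ.2
      simp only [Set.mem_Ioi]
      linarith
  have hC : Tendsto C (nhdsWithin 4 (Set.Iio 4)) (nhds (Real.cot (π*ρ/2))) := by
    rw [← hcotval]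
    refine ((limF μt).comp hs4).congr' ?_
    filter_upwards [Ioo_mem_nhdsLT_of_mem (show (4:ℝ) ∈ Set.Ioc 3 4 by norm_num)] with κ hκ
    have hκ0 : κ ≠ 0 := by linarith [hκ.1]
    have harg : 2*π*(4/κ - 1) = 8*π/κ - 2*π := by field_simp; ring
    show (1 + Real.cos (2*π*(4/κ-1)) - 2/(1 - μt*(4/κ-1))) / Real.sin (2*π*(4/κ-1)) = C κ
    rw [harg, Real.cos_sub_two_pi, Real.sin_sub_two_pi]
  have hev : ∀ᶠ κ in nhdsWithin 4 (Set.Iio 4),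
      ρ' κ ∈ Set.Ioo (-2:ℝ) 0 ∧ Real.cot (π * ρ' κ / 2) = C κ := by
    have hb : Tendsto (fun κ : ℝ => |μt| * (4/κ - 1)) (nhdsWithin 4 (Set.Iio 4)) (nhds 0) := by
      have := ((hs4.mono_right nhdsWithin_le_nhds).const_mul |μt|)
      simpa using this
    filter_upwards [Ioo_mem_nhdsLT_of_mem (show (4:ℝ) ∈ Set.Ioc (8/3) 4 by norm_num),
      hb.eventually_lt_const (by norm_num : (0:ℝ) < 1)] with κ hκ hβ
    obtain ⟨hmem, heq⟩ := h κ hκ hβ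
    have hκ0 : (0:ℝ) < κ := by linarith [hκ.1]
    have hlow : (-2:ℝ) < 16/κ - 6 := by
      have : (4:ℝ) < 16/κ := (lt_div_iff₀ hκ0).mpr (by linarith [hκ.2])
      linarith
    have hmem2 : ρ' κ ∈ Set.Ioo (-2:ℝ) 0 := ⟨by linarith [hmem.1], hmem.2⟩
    refine ⟨hmem2, ?_⟩
    have hsin : Real.sin (π * ρ' κ / 2) < 0 := by
      apply Real.sin_neg_of_neg_of_neg_pi_lt
      · nlinarith [mul_pos hπ (show (0:ℝ) < -(ρ' κ) by linarith [hmem2.2])]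
      · nlinarith [mul_pos hπ (show (0:ℝ) < ρ' κ + 2 by linarith [hmem2.1])]
    have hB : 0 < Real.sin (8*π/κ) := by
      rw [← Real.sin_sub_two_pi]
      apply Real.sin_pos_of_pos_of_lt_pi
      · have : 2*π < 8*π/κ := by
          rw [lt_div_iff₀ hκ0]; nlinarith [hκ.2]
        linarith
      · have : 8*π/κ < 3*π := by
          rw [div_lt_iff₀ hκ0]; nlinarith [hκ.1]
        linarith
    rw [Real.cot_eq_cos_div_sin, hCdef]
    rw [div_eq_div_iff (ne_of_lt hsin) (ne_of_gt hB)]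
    linear_combination (-1 : ℝ) * heq
  rw [tendsto_order]
  constructor
  · intro b hb
    set c : ℝ := max b ((-2+ρ)/2) with hc
    have hc1 : (-2:ℝ) < c := lt_max_of_lt_right (by linarith)
    have hc2 : c < ρ := max_lt hb (by linarith)
    have hbc : b ≤ c := le_max_left _ _
    have hKgt : Real.cot (π*ρ/2) < Real.cot (π*c/2) := by
      apply cot_anti'
      · nlinarith [mul_pos hπ (show (0:ℝ) < c + 2 by linarith)]
      · nlinarith [mul_pos hπ (show (0:ℝ) < ρ - c by linarith)]
      · nlinarith [mul_pos hπ (show (0:ℝ) < -ρ by linarith)]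
    filter_upwards [hev, hC.eventually_lt_const hKgt] with κ hev1 hlt
    obtain ⟨hmem, hcoteq⟩ := hev1
    by_contra hcon
    push_neg at hcon
    rcases (hcon.trans hbc).lt_or_eq with h2 | h2
    · have : Real.cot (π*c/2) < Real.cot (π * ρ' κ / 2) := by
        apply cot_anti'
        · nlinarith [mul_pos hπ (show (0:ℝ) < ρ' κ + 2 by linarith [hmem.1])]
        · nlinarith [mul_pos hπ (show (0:ℝ) < c - ρ' κ by linarith)]
        · nlinarith [mul_pos hπ (show (0:ℝ) < -c by linarith)]
      rw [hcoteq] at this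
      linarith
    · rw [h2] at hcoteq
      rw [hcoteq] at hKgt
      linarith
  · intro b hb
    set c : ℝ := min b (ρ/2) with hc
    have hc1 : ρ < c := lt_min hb (by linarith)
    have hc2 : c < 0 := min_lt_of_right_lt (by linarith)
    have hbc : c ≤ b := min_le_left _ _
    have hKlt : Real.cot (π*c/2) < Real.cot (π*ρ/2) := by
      apply cot_anti'
      · nlinarith [mul_pos hπ (show (0:ℝ) < ρ + 2 by linarith)]
      · nlinarith [mul_pos hπ (show (0:ℝ) < c - ρ by linarith)]
      · nlinarith [mul_pos hπ (show (0:ℝ) < -c by linarith)]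
    filter_upwards [hev, hC.eventually_const_lt hKlt] with κ hev1 hlt
    obtain ⟨hmem, hcoteq⟩ := hev1
    by_contra hcon
    push_neg at hcon
    rcases (hbc.trans hcon).lt_or_eq with h2 | h2
    · have : Real.cot (π * ρ' κ / 2) < Real.cot (π*c/2) := by
        apply cot_anti'
        · nlinarith [mul_pos hπ (show (0:ℝ) < c + 2 by linarith)]
        · nlinarith [mul_pos hπ (show (0:ℝ) < ρ' κ - c by linarith)]
        · nlinarith [mul_pos hπ (show (0:ℝ) < -(ρ' κ) by linarith [hmem.2])]
      rw [hcoteq] at this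
      linarith
    · rw [← h2] at hcoteq
      rw [hcoteq] at hKlt
      linarith
end
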